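/- arXiv:2207.11506 — 5 statements merged into one kernel-verified Lean document; each statement's English description precedes it below -/
import Mathlib

section
/- Let G be a graph with no matching of size k (i.e., ν(G) ≤ k−1) and maximum degree at most k−1. Then e(G) ≤ k² − k if k is odd, and e(G) ≤ k² − (3/2)k if k is even. -/
def IsMatchingSet {V : Type*} (G : SimpleGraph V) (M : Finset (Sym2 V)) : Prop :=
  (∀ e ∈ M, e ∈ G.edgeSet) ∧ ∀ e ∈ M, ∀ f ∈ M, e ≠ f → ∀ v, v ∈ e → v ∉ f

set_option linter.unusedSectionVars false

namespace AHS

open Finset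

variable {V : Type*} [Fintype V] [DecidableEq V]

/-- `v` is covered by the edge set `M`. -/
def cov (M : Finset (Sym2 V)) (v : V) : Prop := ∃ e ∈ M, v ∈ e

lemma cov_of_mem {M : Finset (Sym2 V)} {e : Sym2 V} (he : e ∈ M) {v : V} (hv : v ∈ e) :
    cov M v := ⟨e, he, hv⟩

variable {G : SimpleGraph V} {M N : Finset (Sym2 V)}

lemma ms_unique (h : IsMatchingSet G M) {e f : Sym2 V} {v : V} (he : e ∈ M) (hf : f ∈ M)
    (hve : v ∈ e) (hvf : v ∈ f) : e = f := by
  by_contra hne; exact h.2 e he f hf hne v hve hvf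

lemma partner (h : IsMatchingSet G M) {v : V} (hv : cov M v) :
    ∃ w, w ≠ v ∧ s(v, w) ∈ M ∧ ∀ e ∈ M, v ∈ e → e = s(v, w) := by
  obtain ⟨e, heM, hve⟩ := hv
  obtain ⟨w, rfl⟩ := Sym2.mem_iff_exists.1 hve
  refine ⟨w, ?_, heM, fun f hf hvf => ms_unique h hf heM hvf hve⟩
  rintro rfl
  exact G.not_isDiag_of_mem_edgeSet (h.1 _ heM) (by simp)

lemma ms_insert (h : IsMatchingSet G M) {x y : V} (hxy : s(x, y) ∈ G.edgeSet)
    (hx : ¬ cov M x) (hy : ¬ cov M y) : IsMatchingSet G (insert s(x, y) M) := by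
  constructor
  · intro e he
    rcases Finset.mem_insert.1 he with rfl | he
    · exact hxy
    · exact h.1 e he
  · intro e he f hf hef v hv hvf
    have hcov : ∀ g ∈ M, v ∈ s(x, y) → v ∉ g := by
      intro g hg hvxy
      rcases Sym2.mem_iff.1 hvxy with rfl | rfl
      · exact fun h' => hx ⟨g, hg, h'⟩
      · exact fun h' => hy ⟨g, hg, h'⟩
    rcases Finset.mem_insert.1 he with rfl | he
    · rcases Finset.mem_insert.1 hf with rfl | hf
      · exact hef rfl
      · exact hcov f hf hv hvf
    · rcases Finset.mem_insert.1 hf with rfl | hf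
      · exact hcov e he hvf hv
      · exact h.2 e he f hf hef v hv hvf

open scoped Classical in
/-- The matching number. -/
noncomputable def mnum (G : SimpleGraph V) : ℕ :=
  ((Finset.univ : Finset (Finset (Sym2 V))).filter (fun M => IsMatchingSet G M)).sup Finset.card

lemma empty_isMatchingSet : IsMatchingSet G (∅ : Finset (Sym2 V)) := by
  constructor <;> simp

lemma card_le_mnum (h : IsMatchingSet G M) : M.card ≤ mnum G := by
  classical
  exact Finset.le_sup (f := Finset.card) (Finset.mem_filter.2 ⟨Finset.mem_univ _, h⟩)

lemma exists_mnum (G : SimpleGraph V) : ∃ M, IsMatchingSet G M ∧ M.card = mnum G := by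
  classical
  have hne : ((Finset.univ : Finset (Finset (Sym2 V))).filter (fun M => IsMatchingSet G M)).Nonempty :=
    ⟨∅, Finset.mem_filter.2 ⟨Finset.mem_univ _, empty_isMatchingSet⟩⟩
  obtain ⟨M, hM, hcard⟩ := Finset.exists_mem_eq_sup _ hne Finset.card
  exact ⟨M, (Finset.mem_filter.1 hM).2, hcard.symm⟩

/-- The key alternating-path exchange tool, proved by induction on `(M \ N).card`. -/
lemma tool (hM : IsMatchingSet G M) :
    ∀ n : ℕ, ∀ N : Finset (Sym2 V), (M \ N).card ≤ n → IsMatchingSet G N →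
    (∀ N'' : Finset (Sym2 V), IsMatchingSet G N'' → N''.card ≤ N.card) →
    ∀ y : V, cov M y → ¬ cov N y →
    ∃ z : V, ∃ N' : Finset (Sym2 V), z ≠ y ∧ ¬ cov M z ∧ IsMatchingSet G N' ∧
      N'.card = N.card ∧ (∀ v, cov N' v ↔ (cov N v ∧ v ≠ z) ∨ v = y) ∧
      (N ∩ M).card < (N' ∩ M).card := by
  intro n
  induction n with
  | zero =>
    intro N hn hN hmax y hMy hNy
    exfalso
    obtain ⟨x₁, hx₁y, hyx₁M, _⟩ := partner hM hMy
    have hyx₁N : s(y, x₁) ∉ N := fun hmem => hNy (cov_of_mem hmem (by simp))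
    have : s(y, x₁) ∈ M \ N := Finset.mem_sdiff.2 ⟨hyx₁M, hyx₁N⟩
    have := Finset.card_pos.2 ⟨_, this⟩
    omega
  | succ n ih =>
    intro N hn hN hmax y hMy hNy
    obtain ⟨x₁, hx₁y, hyx₁M, hyuniq⟩ := partner hM hMy
    have hyx₁N : s(y, x₁) ∉ N := fun hmem => hNy (cov_of_mem hmem (by simp))
    by_cases hNx₁ : cov N x₁
    · obtain ⟨x₂, hx₂x₁, hx₁x₂N, hx₁uniq⟩ := partner hN hNx₁
      have hx₂y : x₂ ≠ y := by
        rintro rfl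
        exact hNy (cov_of_mem hx₁x₂N (by simp))
      have hyx₂ : y ∉ s(x₁, x₂) := by
        simp only [Sym2.mem_iff]
        push_neg
        exact ⟨fun h => hx₁y h.symm, fun h => hx₂y h.symm⟩
      have hedges_ne : s(x₁, x₂) ≠ s(y, x₁) := fun h => hyx₂ (h ▸ (by simp : y ∈ s(y, x₁)))
      have hx₁x₂M : s(x₁, x₂) ∉ M := fun hmem =>
        hedges_ne (ms_unique hM hmem hyx₁M (Sym2.mem_mk_left x₁ x₂) (Sym2.mem_mk_right y x₁))
      set N₁ : Finset (Sym2 V) := insert s(y, x₁) (N.erase s(x₁, x₂)) with hN₁def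
      have hyx₁_not_erase : s(y, x₁) ∉ N.erase s(x₁, x₂) :=
        fun h => hyx₁N (Finset.mem_of_mem_erase h)
      have hN₁ : IsMatchingSet G N₁ := by
        constructor
        · intro e he
          rcases Finset.mem_insert.1 he with rfl | he
          · exact hM.1 _ hyx₁M
          · exact hN.1 _ (Finset.mem_of_mem_erase he)
        · intro e he f hf hef v hv hvf
          have key : ∀ g ∈ N.erase s(x₁, x₂), ∀ u ∈ s(y, x₁), u ∉ g := by
            intro g hg u hu hug
            have hgN := Finset.mem_of_mem_erase hg
            have hgne := Finset.ne_of_mem_erase hg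
            rcases Sym2.mem_iff.1 hu with rfl | rfl
            · exact hNy ⟨g, hgN, hug⟩
            · exact hgne (hx₁uniq g hgN hug)
          rcases Finset.mem_insert.1 he with rfl | he
          · rcases Finset.mem_insert.1 hf with rfl | hf
            · exact hef rfl
            · exact key f hf v hv hvf
          · rcases Finset.mem_insert.1 hf with rfl | hf
            · exact key e he v hvf hv
            · exact hN.2 e (Finset.mem_of_mem_erase he) f (Finset.mem_of_mem_erase hf) hef v hv hvf
      have hNpos : 0 < N.card := Finset.card_pos.2 ⟨_, hx₁x₂N⟩
      have hcards : N₁.card = N.card := by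
        rw [hN₁def, Finset.card_insert_of_notMem hyx₁_not_erase,
          Finset.card_erase_of_mem hx₁x₂N]
        omega
      have hcovN₁ : ∀ v, cov N₁ v ↔ (cov N v ∧ v ≠ x₂) ∨ v = y := by
        intro v
        constructor
        · rintro ⟨e, he, hve⟩
          rcases Finset.mem_insert.1 he with rfl | he
          · rcases Sym2.mem_iff.1 hve with h | h
            · exact Or.inr h
            · exact Or.inl ⟨⟨s(x₁, x₂), hx₁x₂N, Sym2.mem_iff.2 (Or.inl h)⟩,
                fun hc => hx₂x₁ (hc.symm.trans h)⟩
          · refine Or.inl ⟨⟨e, Finset.mem_of_mem_erase he, hve⟩, ?_⟩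
            intro hc
            exact Finset.ne_of_mem_erase he
              (ms_unique hN (Finset.mem_of_mem_erase he) hx₁x₂N hve (Sym2.mem_iff.2 (Or.inr hc)))
        · rintro (⟨⟨e, heN, hve⟩, hvx₂⟩ | hvy)
          · by_cases hee : e = s(x₁, x₂)
            · subst hee
              rcases Sym2.mem_iff.1 hve with h | h
              · exact ⟨s(y, x₁), Finset.mem_insert_self _ _, Sym2.mem_iff.2 (Or.inr h)⟩
              · exact absurd h hvx₂
            · exact ⟨e, Finset.mem_insert_of_mem (Finset.mem_erase.2 ⟨hee, heN⟩), hve⟩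
          · exact ⟨s(y, x₁), Finset.mem_insert_self _ _, Sym2.mem_iff.2 (Or.inl hvy)⟩
      have hNM₁ : (N ∩ M).card < (N₁ ∩ M).card := by
        have hsub : insert s(y, x₁) (N ∩ M) ⊆ N₁ ∩ M := by
          intro e he
          rcases Finset.mem_insert.1 he with rfl | he
          · exact Finset.mem_inter.2 ⟨Finset.mem_insert_self _ _, hyx₁M⟩
          · obtain ⟨heN, heM⟩ := Finset.mem_inter.1 he
            have : e ≠ s(x₁, x₂) := fun h => hx₁x₂M (h ▸ heM)
            exact Finset.mem_inter.2
              ⟨Finset.mem_insert_of_mem (Finset.mem_erase.2 ⟨this, heN⟩), heM⟩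
        have h1 : (N ∩ M).card < (insert s(y, x₁) (N ∩ M)).card := by
          rw [Finset.card_insert_of_notMem (fun h => hyx₁N (Finset.mem_inter.1 h).1)]
          omega
        exact h1.trans_le (Finset.card_le_card hsub)
      have hmax₁ : ∀ N'' : Finset (Sym2 V), IsMatchingSet G N'' → N''.card ≤ N₁.card := by
        intro N'' h''
        rw [hcards]; exact hmax N'' h''
      by_cases hMx₂ : cov M x₂
      · -- recurse
        have hmeasure : (M \ N₁).card ≤ n := by
          have heq : M \ N₁ = (M \ N).erase s(y, x₁) := by
            ext e
            simp only [Finset.mem_sdiff, Finset.mem_erase, hN₁def, Finset.mem_insert,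
              Finset.mem_erase]
            constructor
            · rintro ⟨heM, hnot⟩
              push_neg at hnot
              exact ⟨hnot.1, heM, fun heN => (hnot.2 (fun h => hx₁x₂M (h ▸ heM)) heN)⟩
            · rintro ⟨hne, heM, heN⟩
              refine ⟨heM, ?_⟩
              push_neg
              exact ⟨hne, fun _ => heN⟩
          rw [heq, Finset.card_erase_of_mem (Finset.mem_sdiff.2 ⟨hyx₁M, hyx₁N⟩)]
          omega
        have hN₁x₂ : ¬ cov N₁ x₂ := by
          rw [hcovN₁]
          rintro (⟨_, h⟩ | rfl)
          · exact h rfl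
          · exact hx₂y rfl
        obtain ⟨z, N', hzx₂, hzM, hN', hcard', hcov', hlt'⟩ :=
          ih N₁ hmeasure hN₁ hmax₁ x₂ hMx₂ hN₁x₂
        have hzy : z ≠ y := by
          rintro rfl
          exact hzM hMy
        refine ⟨z, N', hzy, hzM, hN', by rw [hcard', hcards], ?_, hNM₁.trans hlt'⟩
        intro v
        rw [hcov' v]
        have hNx₂' : cov N x₂ := ⟨_, hx₁x₂N, Sym2.mem_mk_right _ _⟩
        constructor
        · rintro (⟨hc, hvz⟩ | hvx₂)
          · rcases (hcovN₁ v).1 hc with ⟨hcN, _⟩ | hvy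
            · exact Or.inl ⟨hcN, hvz⟩
            · exact Or.inr hvy
          · exact Or.inl ⟨⟨s(x₁, x₂), hx₁x₂N, Sym2.mem_iff.2 (Or.inr hvx₂)⟩,
              fun h => hzx₂ (h.symm.trans hvx₂)⟩
        · rintro (⟨hcN, hvz⟩ | hvy)
          · by_cases hvx₂ : v = x₂
            · exact Or.inr hvx₂
            · exact Or.inl ⟨(hcovN₁ v).2 (Or.inl ⟨hcN, hvx₂⟩), hvz⟩
          · exact Or.inl ⟨(hcovN₁ v).2 (Or.inr hvy), fun h => hzy (h.symm.trans hvy)⟩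
      · -- finish
        exact ⟨x₂, N₁, hx₂y, hMx₂, hN₁, hcards, hcovN₁, hNM₁⟩
    · -- x₁ not N-covered: contradicts maximality of N
      exfalso
      have hbig : IsMatchingSet G (insert s(y, x₁) N) := ms_insert hN (hM.1 _ hyx₁M) hNy hNx₁
      have hc := hmax _ hbig
      rw [Finset.card_insert_of_notMem hyx₁N] at hc
      omega

open scoped Classical in
/-- Vertices incident to at least one edge. -/
noncomputable def suppF (G : SimpleGraph V) : Finset V :=
  Finset.univ.filter (fun v => v ∈ G.support)

lemma mem_suppF {v : V} : v ∈ suppF G ↔ ∃ w, G.Adj v w := by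
  classical
  simp [suppF, SimpleGraph.mem_support]

lemma cov_mem_suppF (hM : IsMatchingSet G M) {v : V} (hv : cov M v) : v ∈ suppF G := by
  obtain ⟨e, he, hve⟩ := hv
  obtain ⟨w, rfl⟩ := Sym2.mem_iff_exists.1 hve
  exact mem_suppF.2 ⟨w, (G.mem_edgeSet).1 (hM.1 _ he)⟩

open scoped Classical in
lemma card_cov (hM : IsMatchingSet G M) :
    ((Finset.univ : Finset V).filter (fun v => cov M v)).card = 2 * M.card := by
  have heq : (Finset.univ : Finset V).filter (fun v => cov M v) =
      M.biUnion (fun e => Finset.univ.filter (fun v => v ∈ e)) := by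
    ext v
    simp only [Finset.mem_filter, Finset.mem_univ, true_and, Finset.mem_biUnion]
    exact Iff.rfl
  rw [heq, Finset.card_biUnion]
  · have h2 : ∀ e ∈ M, (Finset.univ.filter (fun v : V => v ∈ e)).card = 2 := by
      intro e he
      induction e with
      | _ a b =>
        have hne : a ≠ b := fun h => G.not_isDiag_of_mem_edgeSet (hM.1 _ he) (by rw [h]; simp)
        have hab : Finset.univ.filter (fun v : V => v ∈ s(a, b)) = {a, b} := by
          ext v
          simp [Sym2.mem_iff]
        rw [hab, Finset.card_insert_of_notMem (by simp [hne]), Finset.card_singleton]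
    rw [Finset.sum_congr rfl h2, Finset.sum_const, smul_eq_mul, mul_comm]
  · intro e he f hf hef
    simp only [Finset.disjoint_left, Finset.mem_filter]
    rintro v ⟨-, hve⟩ ⟨-, hvf⟩
    exact hM.2 e he f hf hef v hve hvf

open scoped Classical in
lemma card_missed (hM : IsMatchingSet G M) :
    ((suppF G).filter (fun v => ¬ cov M v)).card = (suppF G).card - 2 * M.card := by
  have hsub : (Finset.univ : Finset V).filter (fun v => cov M v) =
      (suppF G).filter (fun v => cov M v) := by
    ext v
    simp only [Finset.mem_filter, Finset.mem_univ, true_and, iff_def]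
    exact ⟨fun h => ⟨cov_mem_suppF hM h, h⟩, fun h => h.2⟩
  have h := Finset.card_filter_add_card_filter_not (s := suppF G)
    (p := fun v => cov M v)
  rw [← hsub, card_cov hM] at h
  omega

lemma adj_uncovered_absurd (hN : IsMatchingSet G N)
    (hmaxN : ∀ N'' : Finset (Sym2 V), IsMatchingSet G N'' → N''.card ≤ N.card) {a b : V}
    (hadj : G.Adj a b) (ha : ¬ cov N a) (hb : ¬ cov N b) : False := by
  have h := ms_insert hN ((G.mem_edgeSet).2 hadj) ha hb
  have hc := hmaxN _ h
  rw [Finset.card_insert_of_notMem (fun hm => ha (cov_of_mem hm (Sym2.mem_mk_left a b)))] at hc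
  omega

/-- Gallai's lemma, numerical form: if every vertex is missed by some maximum matching and the
support is all in one component, then the support has at most `2ν + 1` vertices. -/
lemma gallai (G : SimpleGraph V)
    (hcon : ∀ a ∈ suppF G, ∀ b ∈ suppF G, G.Reachable a b)
    (havoid : ∀ v : V, ∃ N, IsMatchingSet G N ∧ N.card = mnum G ∧ ¬ cov N v) :
    (suppF G).card ≤ 2 * mnum G + 1 := by
  classical
  by_contra hbig
  push_neg at hbig
  have hmaxof : ∀ Q : Finset (Sym2 V), Q.card = mnum G →
      ∀ N'' : Finset (Sym2 V), IsMatchingSet G N'' → N''.card ≤ Q.card :=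
    fun Q hQc N'' h'' => hQc ▸ card_le_mnum h''
  have hmiss2 : ∀ Q : Finset (Sym2 V), IsMatchingSet G Q → Q.card = mnum G →
      2 ≤ ((suppF G).filter (fun v => ¬ cov Q v)).card := by
    intro Q hQ hQc
    rw [card_missed hQ, hQc]
    omega
  set P : ℕ → Prop := fun d => ∃ Q : Finset (Sym2 V), ∃ u v : V, IsMatchingSet G Q ∧
    Q.card = mnum G ∧ u ∈ suppF G ∧ v ∈ suppF G ∧ u ≠ v ∧ ¬ cov Q u ∧ ¬ cov Q v ∧
    G.dist u v = d with hPdef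
  have hPex : ∃ d, P d := by
    obtain ⟨M, hM, hMc⟩ := exists_mnum G
    have h2 := hmiss2 M hM hMc
    have h3 : 1 < ((suppF G).filter (fun v => ¬ cov M v)).card := by omega
    obtain ⟨u, hu, v, hv, huv⟩ := Finset.one_lt_card.1 h3
    rw [Finset.mem_filter] at hu hv
    exact ⟨_, M, u, v, hM, hMc, hu.1, hv.1, huv, hu.2, hv.2, rfl⟩
  set d₀ := Nat.find hPex with hd₀def
  obtain ⟨M, u, v, hM, hMc, huS, hvS, huv, hMu, hMv, hdist⟩ := Nat.find_spec hPex
  have hmaxM := hmaxof M hMc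
  have hreach : G.Reachable u v := hcon u huS v hvS
  have hd0 : d₀ ≠ 0 := fun h => huv (hreach.dist_eq_zero_iff.1 (hdist.trans h))
  have hd1 : d₀ ≠ 1 := by
    intro h
    exact adj_uncovered_absurd hM hmaxM
      (SimpleGraph.dist_eq_one_iff_adj.1 (hdist.trans h)) hMu hMv
  have hd2 : 2 ≤ d₀ := by omega
  obtain ⟨p, hp⟩ := hreach.exists_walk_length_eq_dist
  rw [hdist] at hp
  cases p with
  | nil =>
    rw [SimpleGraph.Walk.length_nil] at hp
    omega
  | @cons _ w _ hadj q =>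
    rw [SimpleGraph.Walk.length_cons] at hp
    have hwS : w ∈ suppF G := mem_suppF.2 ⟨u, hadj.symm⟩
    have hwv : w ≠ v := by
      intro h
      subst h
      have := SimpleGraph.dist_le (SimpleGraph.Walk.cons hadj SimpleGraph.Walk.nil)
      rw [hdist, SimpleGraph.Walk.length_cons, SimpleGraph.Walk.length_nil] at this
      omega
    have hdistwv : G.dist w v ≤ d₀ - 1 := by
      have := SimpleGraph.dist_le q
      omega
    have hMw : cov M w := by
      by_contra hc
      exact adj_uncovered_absurd hM hmaxM hadj hMu hc
    have hTne : ((Finset.univ : Finset (Finset (Sym2 V))).filter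
        (fun N => IsMatchingSet G N ∧ N.card = mnum G ∧ ¬ cov N w)).Nonempty := by
      obtain ⟨N, h1, h2, h3⟩ := havoid w
      exact ⟨N, Finset.mem_filter.2 ⟨Finset.mem_univ _, h1, h2, h3⟩⟩
    obtain ⟨N, hNmem, hNbest⟩ := Finset.exists_max_image _ (fun N => (N ∩ M).card) hTne
    obtain ⟨hN, hNc, hNw⟩ := (Finset.mem_filter.1 hNmem).2
    have hmaxN := hmaxof N hNc
    have hclaim : ∀ y, y ∈ suppF G → ¬ cov N y → y ≠ w → ¬ cov M y := by
      intro y _ hyN hyw hyM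
      obtain ⟨z, N', hzy, hzM, hN', hcard', hcov', hlt'⟩ :=
        tool hM (M \ N).card N le_rfl hN hmaxN y hyM hyN
      have hN'w : ¬ cov N' w := by
        rw [hcov']
        rintro (⟨h, -⟩ | h)
        · exact hNw h
        · exact hyw h.symm
      have hmem' : N' ∈ (Finset.univ : Finset (Finset (Sym2 V))).filter
          (fun N => IsMatchingSet G N ∧ N.card = mnum G ∧ ¬ cov N w) :=
        Finset.mem_filter.2 ⟨Finset.mem_univ _, hN', hcard'.trans hNc, hN'w⟩
      exact absurd (hNbest N' hmem') (not_le.2 hlt')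
    have hNu : cov N u := by
      by_contra hc
      exact adj_uncovered_absurd hN hmaxN hadj hc hNw
    have hsub : ((suppF G).filter (fun x => ¬ cov N x)).erase w ⊆
        ((suppF G).filter (fun x => ¬ cov M x)).erase u := by
      intro y hy
      obtain ⟨hyw, hymem⟩ := Finset.mem_erase.1 hy
      obtain ⟨hyS, hyN⟩ := Finset.mem_filter.1 hymem
      exact Finset.mem_erase.2 ⟨fun h => hyN (h.symm ▸ hNu),
        Finset.mem_filter.2 ⟨hyS, hclaim y hyS hyN hyw⟩⟩
    have hwmem : w ∈ (suppF G).filter (fun x => ¬ cov N x) := Finset.mem_filter.2 ⟨hwS, hNw⟩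
    have humem : u ∈ (suppF G).filter (fun x => ¬ cov M x) := Finset.mem_filter.2 ⟨huS, hMu⟩
    have hcards : (((suppF G).filter (fun x => ¬ cov M x)).erase u).card ≤
        (((suppF G).filter (fun x => ¬ cov N x)).erase w).card := by
      rw [Finset.card_erase_of_mem hwmem, Finset.card_erase_of_mem humem,
        card_missed hM, card_missed hN, hMc, hNc]
    have hEq := Finset.eq_of_subset_of_card_le hsub hcards
    have hvmem : v ∈ ((suppF G).filter (fun x => ¬ cov M x)).erase u :=
      Finset.mem_erase.2 ⟨fun h => huv h.symm, Finset.mem_filter.2 ⟨hvS, hMv⟩⟩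
    rw [← hEq] at hvmem
    obtain ⟨hvw, hvmem'⟩ := Finset.mem_erase.1 hvmem
    obtain ⟨-, hNv⟩ := Finset.mem_filter.1 hvmem'
    have hPd : P (G.dist w v) := ⟨N, w, v, hN, hNc, hwS, hvS, hwv, hNw, hNv, rfl⟩
    have hfind : d₀ ≤ G.dist w v := Nat.find_le hPd
    omega

open scoped Classical in
/-- The edge set of `G` as a `Finset`. -/
noncomputable def ES (G : SimpleGraph V) : Finset (Sym2 V) :=
  Finset.univ.filter (fun e => e ∈ G.edgeSet)

open scoped Classical in
/-- Degree. -/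
noncomputable def dg (G : SimpleGraph V) (v : V) : ℕ :=
  (Finset.univ.filter (fun w => G.Adj v w)).card

lemma mem_ES {e : Sym2 V} : e ∈ ES G ↔ e ∈ G.edgeSet := by
  classical
  simp [ES]

lemma handshake (G : SimpleGraph V) : ∑ v, dg G v = 2 * (ES G).card := by
  classical
  have h1 : ∀ v, dg G v = G.degree v := by
    intro v
    unfold dg
    congr 1
    ext w
    simp [SimpleGraph.mem_neighborFinset]
  have h2 : ES G = G.edgeFinset := by
    ext e
    simp [mem_ES, SimpleGraph.mem_edgeFinset]
  calc ∑ v, dg G v = ∑ v, G.degree v := Finset.sum_congr rfl (fun v _ => h1 v)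
    _ = 2 * G.edgeFinset.card := G.sum_degrees_eq_twice_card_edges
    _ = 2 * (ES G).card := by rw [h2]

lemma dg_eq_zero_of_not_supp {v : V} (hv : v ∉ suppF G) : dg G v = 0 := by
  classical
  unfold dg
  rw [Finset.card_eq_zero]
  ext w
  simp only [Finset.mem_filter, Finset.mem_univ, true_and, Finset.notMem_empty, iff_false]
  exact fun hadj => hv (mem_suppF.2 ⟨w, hadj⟩)

lemma dg_le_supp_pred {v : V} (hv : v ∈ suppF G) : dg G v ≤ (suppF G).card - 1 := by
  classical
  unfold dg
  have hsub : Finset.univ.filter (fun w => G.Adj v w) ⊆ (suppF G).erase v := by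
    intro w hw
    have hadj : G.Adj v w := (Finset.mem_filter.1 hw).2
    exact Finset.mem_erase.2 ⟨fun h => G.loopless.irrefl v (h ▸ hadj), mem_suppF.2 ⟨v, hadj.symm⟩⟩
  calc (Finset.univ.filter (fun w => G.Adj v w)).card ≤ ((suppF G).erase v).card :=
        Finset.card_le_card hsub
    _ = (suppF G).card - 1 := Finset.card_erase_of_mem hv

/-- Delete all edges at `v`. -/
def Gdel (G : SimpleGraph V) (v : V) : SimpleGraph V where
  Adj x y := G.Adj x y ∧ x ≠ v ∧ y ≠ v
  symm := ⟨fun _ _ ⟨h1, h2, h3⟩ => ⟨h1.symm, h3, h2⟩⟩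
  loopless := ⟨fun a ⟨h, _, _⟩ => G.loopless.irrefl a h⟩

lemma Gdel_edge {v : V} {e : Sym2 V} : e ∈ (Gdel G v).edgeSet ↔ e ∈ G.edgeSet ∧ v ∉ e := by
  induction e with
  | _ a b =>
    simp only [SimpleGraph.mem_edgeSet, Sym2.mem_iff]
    show (G.Adj a b ∧ a ≠ v ∧ b ≠ v) ↔ _
    constructor
    · rintro ⟨h1, h2, h3⟩
      exact ⟨h1, by rintro (rfl | rfl) <;> simp_all⟩
    · rintro ⟨h1, h2⟩
      push_neg at h2
      exact ⟨h1, fun h => h2.1 h.symm, fun h => h2.2 h.symm⟩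

lemma card_ES_Gdel (G : SimpleGraph V) (v : V) :
    (ES (Gdel G v)).card + dg G v = (ES G).card := by
  classical
  have h1 : ES (Gdel G v) = (ES G).filter (fun e => ¬ v ∈ e) := by
    ext e
    simp [mem_ES, Gdel_edge]
  have h2 : (ES G).filter (fun e => v ∈ e) =
      (Finset.univ.filter (fun w => G.Adj v w)).image (fun w => s(v, w)) := by
    ext e
    simp only [Finset.mem_filter, Finset.mem_image, mem_ES, Finset.mem_univ, true_and]
    constructor
    · rintro ⟨he, hv⟩
      obtain ⟨w, rfl⟩ := Sym2.mem_iff_exists.1 hv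
      exact ⟨w, (G.mem_edgeSet).1 he, rfl⟩
    · rintro ⟨w, hadj, rfl⟩
      exact ⟨(G.mem_edgeSet).2 hadj, Sym2.mem_mk_left _ _⟩
  have h3 : ((ES G).filter (fun e => v ∈ e)).card = dg G v := by
    rw [h2]
    unfold dg
    exact Finset.card_image_of_injective _ (fun w w' h => Sym2.congr_right.1 h)
  have h4 := Finset.card_filter_add_card_filter_not (s := ES G) (p := fun e => v ∈ e)
  rw [h1]
  omega

lemma ms_Gdel_iff {v : V} {N : Finset (Sym2 V)} :
    IsMatchingSet (Gdel G v) N ↔ IsMatchingSet G N ∧ ¬ cov N v := by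
  constructor
  · intro h
    refine ⟨⟨fun e he => (Gdel_edge.1 (h.1 e he)).1, h.2⟩, ?_⟩
    rintro ⟨e, he, hv⟩
    exact (Gdel_edge.1 (h.1 e he)).2 hv
  · rintro ⟨h, hcov⟩
    exact ⟨fun e he => Gdel_edge.2 ⟨h.1 e he, fun hv => hcov ⟨e, he, hv⟩⟩, h.2⟩

lemma mnum_Gdel_le (G : SimpleGraph V) (v : V) : mnum (Gdel G v) ≤ mnum G := by
  obtain ⟨M, hM, hMc⟩ := exists_mnum (Gdel G v)
  exact hMc ▸ card_le_mnum (ms_Gdel_iff.1 hM).1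

/-- The part of `G` in the component of `a`. -/
def Gre (G : SimpleGraph V) (a : V) : SimpleGraph V where
  Adj x y := G.Adj x y ∧ G.Reachable a x
  symm := ⟨fun _ _ ⟨h1, h2⟩ => ⟨h1.symm, h2.trans h1.reachable⟩⟩
  loopless := ⟨fun a ⟨h, _⟩ => G.loopless.irrefl a h⟩

/-- The part of `G` outside the component of `a`. -/
def Gnre (G : SimpleGraph V) (a : V) : SimpleGraph V where
  Adj x y := G.Adj x y ∧ ¬ G.Reachable a x
  symm := ⟨fun _ _ ⟨h1, h2⟩ => ⟨h1.symm, fun hr => h2 (hr.trans h1.symm.reachable)⟩⟩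
  loopless := ⟨fun a ⟨h, _⟩ => G.loopless.irrefl a h⟩

lemma Gre_edge {a : V} {e : Sym2 V} :
    e ∈ (Gre G a).edgeSet ↔ e ∈ G.edgeSet ∧ ∀ x ∈ e, G.Reachable a x := by
  induction e with
  | _ x y =>
    simp only [SimpleGraph.mem_edgeSet]
    show (G.Adj x y ∧ G.Reachable a x) ↔ _
    constructor
    · rintro ⟨h1, h2⟩
      refine ⟨h1, fun z hz => ?_⟩
      rcases Sym2.mem_iff.1 hz with h | h
      · rw [h]; exact h2
      · rw [h]; exact h2.trans h1.reachable
    · rintro ⟨h1, h2⟩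
      exact ⟨h1, h2 x (Sym2.mem_mk_left _ _)⟩

lemma Gnre_edge {a : V} {e : Sym2 V} :
    e ∈ (Gnre G a).edgeSet ↔ e ∈ G.edgeSet ∧ ∀ x ∈ e, ¬ G.Reachable a x := by
  induction e with
  | _ x y =>
    simp only [SimpleGraph.mem_edgeSet]
    show (G.Adj x y ∧ ¬ G.Reachable a x) ↔ _
    constructor
    · rintro ⟨h1, h2⟩
      refine ⟨h1, fun z hz => ?_⟩
      rcases Sym2.mem_iff.1 hz with h | h
      · rw [h]; exact h2
      · rw [h]; exact fun hr => h2 (hr.trans h1.symm.reachable)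
    · rintro ⟨h1, h2⟩
      exact ⟨h1, h2 x (Sym2.mem_mk_left _ _)⟩

lemma ES_split (G : SimpleGraph V) (a : V) :
    (ES G).card = (ES (Gre G a)).card + (ES (Gnre G a)).card := by
  classical
  have h1 : ES (Gre G a) = (ES G).filter (fun e => ∀ x ∈ e, G.Reachable a x) := by
    ext e
    simp only [mem_ES, Finset.mem_filter, Gre_edge]
  have h2 : ES (Gnre G a) = (ES G).filter (fun e => ¬ ∀ x ∈ e, G.Reachable a x) := by
    ext e
    induction e with
    | _ x y =>
      simp only [mem_ES, Gnre_edge, Finset.mem_filter]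
      constructor
      · rintro ⟨he, hall⟩
        exact ⟨he, fun hc => hall x (Sym2.mem_mk_left _ _) (hc x (Sym2.mem_mk_left _ _))⟩
      · rintro ⟨he, hnall⟩
        refine ⟨he, fun z hz hr => hnall ?_⟩
        have hadj : G.Adj x y := (G.mem_edgeSet).1 he
        have hx : G.Reachable a x := by
          rcases Sym2.mem_iff.1 hz with h | h
          · exact h ▸ hr
          · exact (h ▸ hr).trans hadj.symm.reachable
        intro z' hz'
        rcases Sym2.mem_iff.1 hz' with h | h
        · rw [h]; exact hx
        · rw [h]; exact hx.trans hadj.reachable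
  rw [h1, h2]
  exact (Finset.card_filter_add_card_filter_not
    (p := fun e => ∀ x ∈ e, G.Reachable a x)).symm

lemma mnum_split_ge (G : SimpleGraph V) (a : V) :
    mnum (Gre G a) + mnum (Gnre G a) ≤ mnum G := by
  obtain ⟨M₁, hM₁, hc₁⟩ := exists_mnum (Gre G a)
  obtain ⟨M₂, hM₂, hc₂⟩ := exists_mnum (Gnre G a)
  have hdisj_v : ∀ e ∈ M₁, ∀ f ∈ M₂, ∀ x ∈ e, x ∉ f := by
    intro e he f hf x hx hxf
    exact (Gnre_edge.1 (hM₂.1 f hf)).2 x hxf ((Gre_edge.1 (hM₁.1 e he)).2 x hx)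
  have hdisj : Disjoint M₁ M₂ := by
    rw [Finset.disjoint_left]
    intro e he1 he2
    induction e with
    | _ x y => exact hdisj_v _ he1 _ he2 x (Sym2.mem_mk_left _ _) (Sym2.mem_mk_left _ _)
  have hunion : IsMatchingSet G (M₁ ∪ M₂) := by
    constructor
    · intro e he
      rcases Finset.mem_union.1 he with he | he
      · exact (Gre_edge.1 (hM₁.1 e he)).1
      · exact (Gnre_edge.1 (hM₂.1 e he)).1
    · intro e he f hf hef x hx hxf
      rcases Finset.mem_union.1 he with he | he <;> rcases Finset.mem_union.1 hf with hf | hf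
      · exact hM₁.2 e he f hf hef x hx hxf
      · exact hdisj_v e he f hf x hx hxf
      · exact hdisj_v f hf e he x hxf hx
      · exact hM₂.2 e he f hf hef x hx hxf
  have h := card_le_mnum hunion
  rwa [Finset.card_union_of_disjoint hdisj, hc₁, hc₂] at h

lemma dg_mono {G' : SimpleGraph V} (h : ∀ x y, G'.Adj x y → G.Adj x y) (v : V) :
    dg G' v ≤ dg G v := by
  classical
  unfold dg
  apply Finset.card_le_card
  intro w hw
  exact Finset.mem_filter.2 ⟨Finset.mem_univ _, h _ _ (Finset.mem_filter.1 hw).2⟩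

lemma div_add_div_le (a b c : ℕ) : a / c + b / c ≤ (a + b) / c := by
  rcases Nat.eq_zero_or_pos c with rfl | hc
  · simp
  · rw [Nat.le_div_iff_mul_le hc, Nat.add_mul]
    exact Nat.add_le_add (Nat.div_mul_le_self a c) (Nat.div_mul_le_self b c)

/-- The main theorem: `e(G) ≤ ν·r + ⌊r/2⌋·⌊ν/⌈r/2⌉⌋` when all degrees are at most `r`. -/
theorem main (r : ℕ) : ∀ n : ℕ, ∀ G : SimpleGraph V, (ES G).card ≤ n → (∀ v, dg G v ≤ r) →
    (ES G).card ≤ mnum G * r + (r / 2) * (mnum G / ((r + 1) / 2)) := by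
  intro n
  induction n with
  | zero =>
    intro G h _
    exact le_trans h (Nat.zero_le _)
  | succ n ih =>
    intro G hGn hGdeg
    by_cases he0 : (ES G).card = 0
    · calc (ES G).card = 0 := he0
        _ ≤ _ := Nat.zero_le _
    by_cases hA : ∃ v : V, mnum (Gdel G v) < mnum G
    · -- some vertex is covered by every maximum matching
      obtain ⟨v, hv⟩ := hA
      have hdgpos : 1 ≤ dg G v := by
        by_contra h0
        push_neg at h0
        have hdg0 : dg G v = 0 := by omega
        obtain ⟨M, hM, hMc⟩ := exists_mnum G
        have hnocov : ¬ cov M v := by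
          rintro ⟨e, he, hve⟩
          obtain ⟨w, rfl⟩ := Sym2.mem_iff_exists.1 hve
          have hadj := (G.mem_edgeSet).1 (hM.1 _ he)
          have hpos : 0 < dg G v := by
            classical
            unfold dg
            exact Finset.card_pos.2 ⟨w, Finset.mem_filter.2 ⟨Finset.mem_univ _, hadj⟩⟩
          omega
        have := card_le_mnum (ms_Gdel_iff.2 ⟨hM, hnocov⟩)
        omega
      have hEdel := card_ES_Gdel G v
      have hih := ih (Gdel G v) (by omega)
        (fun w => le_trans (dg_mono (G' := Gdel G v) (fun x y h => h.1) w) (hGdeg w))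
      have hν' : mnum (Gdel G v) + 1 ≤ mnum G := hv
      calc (ES G).card = (ES (Gdel G v)).card + dg G v := hEdel.symm
        _ ≤ (mnum (Gdel G v) * r + (r / 2) * (mnum (Gdel G v) / ((r + 1) / 2))) + r :=
            Nat.add_le_add hih (hGdeg v)
        _ = (mnum (Gdel G v) + 1) * r + (r / 2) * (mnum (Gdel G v) / ((r + 1) / 2)) := by ring
        _ ≤ mnum G * r + (r / 2) * (mnum G / ((r + 1) / 2)) :=
            Nat.add_le_add (Nat.mul_le_mul_right _ hν')
              (Nat.mul_le_mul_left _ (Nat.div_le_div_right (by omega)))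
    · -- every vertex is avoidable
      push_neg at hA
      have havoid : ∀ v, ∃ N, IsMatchingSet G N ∧ N.card = mnum G ∧ ¬ cov N v := by
        intro v
        obtain ⟨N, hN, hNc⟩ := exists_mnum (Gdel G v)
        obtain ⟨hNG, hNcov⟩ := ms_Gdel_iff.1 hN
        refine ⟨N, hNG, ?_, hNcov⟩
        have h1 := card_le_mnum hNG
        have h2 := hA v
        omega
      by_cases hcon : ∀ a ∈ suppF G, ∀ b ∈ suppF G, G.Reachable a b
      · -- all edges in one component: use Gallai's lemma
        have hS := gallai G hcon havoid
        have hhs : ∑ v ∈ suppF G, dg G v = ∑ v, dg G v :=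
          Finset.sum_subset (Finset.subset_univ _)
            (fun x _ hx => dg_eq_zero_of_not_supp hx)
        have h2e_r : 2 * (ES G).card ≤ (suppF G).card * r := by
          rw [← handshake G, ← hhs]
          calc ∑ v ∈ suppF G, dg G v ≤ ∑ _v ∈ suppF G, r :=
                Finset.sum_le_sum (fun v _ => hGdeg v)
            _ = (suppF G).card * r := by rw [Finset.sum_const, smul_eq_mul]
        have h2e_s : 2 * (ES G).card ≤ (suppF G).card * ((suppF G).card - 1) := by
          rw [← handshake G, ← hhs]
          calc ∑ v ∈ suppF G, dg G v ≤ ∑ v ∈ suppF G, ((suppF G).card - 1) :=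
                Finset.sum_le_sum (fun v hvS => dg_le_supp_pred hvS)
            _ = (suppF G).card * ((suppF G).card - 1) := by rw [Finset.sum_const, smul_eq_mul]
        by_cases hsmall : 2 * mnum G + 1 ≤ r
        · have h1 : (suppF G).card * ((suppF G).card - 1) ≤ (2 * mnum G + 1) * (2 * mnum G) :=
            Nat.mul_le_mul hS (by omega)
          have h2 : (2 * mnum G + 1) * (2 * mnum G) ≤ 2 * (mnum G * r) := by
            have h3 : (2 * mnum G + 1) * (2 * mnum G) = 2 * (mnum G * (2 * mnum G + 1)) := by
              ring
            have h4 : mnum G * (2 * mnum G + 1) ≤ mnum G * r :=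
              Nat.mul_le_mul_left _ hsmall
            omega
          have h5 : (ES G).card ≤ mnum G * r := by omega
          exact le_trans h5 (Nat.le_add_right _ _)
        · have hrpos : 1 ≤ r := by
            by_contra h0
            push_neg at h0
            have hr0 : r = 0 := by omega
            rw [hr0, Nat.mul_zero] at h2e_r
            omega
          have hνc : (r + 1) / 2 ≤ mnum G := by omega
          have h2e : 2 * (ES G).card ≤ (2 * mnum G + 1) * r :=
            le_trans h2e_r (Nat.mul_le_mul_right r hS)
          have he : (ES G).card ≤ mnum G * r + r / 2 := by
            have hx : (2 * mnum G + 1) * r = 2 * (mnum G * r) + r := by ring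
            omega
          have hone : 1 ≤ mnum G / ((r + 1) / 2) := by
            have hcpos : 0 < (r + 1) / 2 := by omega
            exact (Nat.one_le_div_iff hcpos).2 hνc
          calc (ES G).card ≤ mnum G * r + r / 2 := he
            _ = mnum G * r + (r / 2) * 1 := by ring
            _ ≤ mnum G * r + (r / 2) * (mnum G / ((r + 1) / 2)) :=
                Nat.add_le_add_left (Nat.mul_le_mul_left _ hone) _
      · -- split into two parts
        push_neg at hcon
        obtain ⟨a, haS, b, hbS, hnr⟩ := hcon
        obtain ⟨a', haa'⟩ := mem_suppF.1 haS
        obtain ⟨b', hbb'⟩ := mem_suppF.1 hbS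
        have he₁ : 0 < (ES (Gre G a)).card := by
          apply Finset.card_pos.2
          refine ⟨s(a, a'), mem_ES.2 (Gre_edge.2 ⟨(G.mem_edgeSet).2 haa', ?_⟩)⟩
          intro z hz
          rcases Sym2.mem_iff.1 hz with h | h
          · rw [h]
          · rw [h]; exact haa'.reachable
        have he₂ : 0 < (ES (Gnre G a)).card := by
          apply Finset.card_pos.2
          refine ⟨s(b, b'), mem_ES.2 (Gnre_edge.2 ⟨(G.mem_edgeSet).2 hbb', ?_⟩)⟩
          intro z hz
          rcases Sym2.mem_iff.1 hz with h | h
          · rw [h]; exact hnr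
          · rw [h]; exact fun hr => hnr (hr.trans hbb'.symm.reachable)
        have hsplit := ES_split G a
        have hih₁ := ih (Gre G a) (by omega)
          (fun w => le_trans (dg_mono (G' := Gre G a) (fun x y h => h.1) w) (hGdeg w))
        have hih₂ := ih (Gnre G a) (by omega)
          (fun w => le_trans (dg_mono (G' := Gnre G a) (fun x y h => h.1) w) (hGdeg w))
        have hνadd := mnum_split_ge G a
        set ν₁ := mnum (Gre G a)
        set ν₂ := mnum (Gnre G a)
        calc (ES G).card = (ES (Gre G a)).card + (ES (Gnre G a)).card := hsplit
          _ ≤ (ν₁ * r + (r / 2) * (ν₁ / ((r + 1) / 2))) +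
              (ν₂ * r + (r / 2) * (ν₂ / ((r + 1) / 2))) := Nat.add_le_add hih₁ hih₂
          _ = (ν₁ + ν₂) * r + (r / 2) * (ν₁ / ((r + 1) / 2) + ν₂ / ((r + 1) / 2)) := by ring
          _ ≤ (ν₁ + ν₂) * r + (r / 2) * ((ν₁ + ν₂) / ((r + 1) / 2)) :=
              Nat.add_le_add_left (Nat.mul_le_mul_left _ (div_add_div_le _ _ _)) _
          _ ≤ mnum G * r + (r / 2) * (mnum G / ((r + 1) / 2)) :=
              Nat.add_le_add (Nat.mul_le_mul_right _ hνadd)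
                (Nat.mul_le_mul_left _ (Nat.div_le_div_right hνadd))

end AHS

theorem abbott_hanson_sauer {V : Type*} [Fintype V] [DecidableEq V] (G : SimpleGraph V)
    [DecidableRel G.Adj] (k : ℕ)
    (hν : ∀ M : Finset (Sym2 V), IsMatchingSet G M → M.card ≤ k - 1)
    (hΔ : ∀ v : V, G.degree v ≤ k - 1) :
    (Odd k → G.edgeFinset.card ≤ k ^ 2 - k) ∧
    (Even k → G.edgeFinset.card ≤ k ^ 2 - 3 * k / 2) := by
  classical
  have hdg : ∀ v, AHS.dg G v ≤ k - 1 := by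
    intro v
    have h : AHS.dg G v = G.degree v := by
      unfold AHS.dg
      congr 1
      ext w
      simp [SimpleGraph.mem_neighborFinset]
    rw [h]
    exact hΔ v
  have hE : G.edgeFinset.card = (AHS.ES G).card := by
    congr 1
    ext e
    simp [AHS.mem_ES, SimpleGraph.mem_edgeFinset]
  have hνn : AHS.mnum G ≤ k - 1 := by
    obtain ⟨M, hM, hMc⟩ := AHS.exists_mnum G
    exact hMc ▸ hν M hM
  have hmain := AHS.main (k - 1) ((AHS.ES G).card) G le_rfl hdg
  have hbound : (AHS.ES G).card ≤
      (k - 1) * (k - 1) + ((k - 1) / 2) * ((k - 1) / ((k - 1 + 1) / 2)) :=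
    le_trans hmain (Nat.add_le_add (Nat.mul_le_mul_right _ hνn)
      (Nat.mul_le_mul_left _ (Nat.div_le_div_right hνn)))
  constructor
  · rintro ⟨t, ht⟩
    rcases Nat.eq_zero_or_pos t with rfl | htpos
    · have hk1 : k = 1 := by omega
      subst hk1
      rw [hE]
      have h0 : (AHS.ES G).card ≤ 0 := by simpa using hbound
      omega
    · have h1 : k - 1 = 2 * t := by omega
      have h2 : (k - 1 + 1) / 2 = t := by omega
      have h3 : (k - 1) / ((k - 1 + 1) / 2) = 2 := by
        have h2' : (2 * t + 1) / 2 = t := by omega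
        rw [h1, h2']
        have hge : 2 ≤ 2 * t / t := (Nat.le_div_iff_mul_le htpos).2 (by omega)
        have hlt : 2 * t / t < 3 := by
          rw [Nat.div_lt_iff_lt_mul htpos]
          omega
        omega
      have h4 : (k - 1) / 2 = t := by omega
      rw [hE]
      have h5 : k ^ 2 - k = 4 * t * t + 2 * t := by
        have hx : k ^ 2 = 4 * t * t + 4 * t + 1 := by rw [ht]; ring
        omega
      rw [h5]
      calc (AHS.ES G).card ≤
          (k - 1) * (k - 1) + ((k - 1) / 2) * ((k - 1) / ((k - 1 + 1) / 2)) := hbound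
        _ = 2 * t * (2 * t) + t * 2 := by rw [h3, h4, h1]
        _ ≤ 4 * t * t + 2 * t := le_of_eq (by ring)
  · rintro ⟨t, ht⟩
    rcases Nat.eq_zero_or_pos t with rfl | htpos
    · have hk0 : k = 0 := by omega
      subst hk0
      rw [hE]
      have h0 : (AHS.ES G).card ≤ 0 := by simpa using hbound
      omega
    · obtain ⟨s, rfl⟩ : ∃ s, t = s + 1 := ⟨t - 1, by omega⟩
      have h1 : k - 1 = 2 * s + 1 := by omega
      have h2 : (k - 1 + 1) / 2 = s + 1 := by omega
      have h3 : (k - 1) / ((k - 1 + 1) / 2) = 1 := by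
        have h2' : (2 * s + 1 + 1) / 2 = s + 1 := by omega
        rw [h1, h2']
        have hge : 1 ≤ (2 * s + 1) / (s + 1) := (Nat.one_le_div_iff (by omega)).2 (by omega)
        have hlt : (2 * s + 1) / (s + 1) < 2 := by
          rw [Nat.div_lt_iff_lt_mul (by omega : 0 < s + 1)]
          omega
        omega
      have h4 : (k - 1) / 2 = s := by omega
      rw [hE]
      have h5 : k ^ 2 - 3 * k / 2 = 4 * s * s + 5 * s + 1 := by
        have hk : k = 2 * s + 2 := by omega
        have hx : k ^ 2 = 4 * s * s + 8 * s + 4 := by rw [hk]; ring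
        omega
      rw [h5]
      calc (AHS.ES G).card ≤
          (k - 1) * (k - 1) + ((k - 1) / 2) * ((k - 1) / ((k - 1 + 1) / 2)) := hbound
        _ = (2 * s + 1) * (2 * s + 1) + s * 1 := by rw [h3, h4, h1]
        _ ≤ 4 * s * s + 5 * s + 1 := le_of_eq (by ring)
end

section
/- For nonnegative integers ν and Δ, every graph G with ν(G) ≤ ν and Δ(G) ≤ Δ satisfies e(G) ≤ νΔ + ⌊Δ/2⌋·⌊ν/⌈Δ/2⌉⌋ (with Δ ≥ 1). -/
set_option linter.unusedSectionVars false
set_option maxHeartbeats 1000000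


namespace CH

variable {V : Type*} [Fintype V] [DecidableEq V]

/-- `v` is covered by the edge set `K`. -/
def cov (K : Finset (Sym2 V)) (v : V) : Prop := ∃ e ∈ K, v ∈ e

/-- `K` is a matching of `G` all of whose edges lie inside `s`. -/
def MOn (G : SimpleGraph V) (s : Finset V) (K : Finset (Sym2 V)) : Prop :=
  IsMatchingSet G K ∧ ∀ e ∈ K, ∀ v ∈ e, v ∈ s

/-- The edges of `G` inside `s`. -/
def Efin (G : SimpleGraph V) [DecidableRel G.Adj] (s : Finset V) :
    Finset (Sym2 V) :=
  G.edgeFinset.filter (fun e => ∀ v ∈ e, v ∈ s)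

variable {G : SimpleGraph V}

lemma mem_Efin [DecidableRel G.Adj] {s : Finset V} {e : Sym2 V} :
    e ∈ Efin G s ↔ e ∈ G.edgeSet ∧ ∀ v ∈ e, v ∈ s := by
  unfold Efin
  simp [SimpleGraph.mem_edgeFinset]

lemma exists_other {e : Sym2 V} (he : e ∈ G.edgeSet) {a : V} (ha : a ∈ e) :
    ∃ b, a ≠ b ∧ e = s(a, b) := by
  induction e with
  | _ x y =>
    rw [SimpleGraph.mem_edgeSet G] at he
    rcases Sym2.mem_iff.mp ha with rfl | rfl
    · exact ⟨y, he.ne, rfl⟩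
    · exact ⟨x, he.ne', Sym2.eq_swap⟩

lemma matching_unique {M : Finset (Sym2 V)} (hM : IsMatchingSet G M)
    {e f : Sym2 V} (he : e ∈ M) (hf : f ∈ M) {v : V} (hve : v ∈ e) (hvf : v ∈ f) : e = f := by
  by_contra h
  exact hM.2 e he f hf h v hve hvf

lemma matching_subset {M K : Finset (Sym2 V)} (hM : IsMatchingSet G M) (h : K ⊆ M) :
    IsMatchingSet G K :=
  ⟨fun e he => hM.1 e (h he), fun e he f hf hef v hv => hM.2 e (h he) f (h hf) hef v hv⟩

lemma edge_decomp {e : Sym2 V} (he : e ∈ G.edgeSet) : ∃ a b, a ≠ b ∧ e = s(a, b) := by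
  induction e with
  | _ x y => exact ⟨x, y, ((SimpleGraph.mem_edgeSet G).mp he).ne, rfl⟩

lemma matching_insert {M : Finset (Sym2 V)} (hM : IsMatchingSet G M) {a b : V}
    (hab : G.Adj a b) (ha : ¬ cov M a) (hb : ¬ cov M b) :
    IsMatchingSet G (insert s(a, b) M) := by
  constructor
  · intro e he
    rcases Finset.mem_insert.mp he with rfl | he
    · exact (SimpleGraph.mem_edgeSet G).mpr hab
    · exact hM.1 e he
  · intro e he f hf hef v hve hvf
    rcases Finset.mem_insert.mp he with rfl | heM <;>
      rcases Finset.mem_insert.mp hf with rfl | hfM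
    · exact hef rfl
    · rcases Sym2.mem_iff.mp hve with rfl | rfl
      · exact ha ⟨f, hfM, hvf⟩
      · exact hb ⟨f, hfM, hvf⟩
    · rcases Sym2.mem_iff.mp hvf with rfl | rfl
      · exact ha ⟨e, heM, hve⟩
      · exact hb ⟨e, heM, hve⟩
    · exact hM.2 e heM f hfM hef v hve hvf

lemma card_cov_filter {M : Finset (Sym2 V)} (hM : IsMatchingSet G M)
    [DecidablePred (cov M)] :
    (Finset.univ.filter (cov M)).card = 2 * M.card := by
  classical
  have hset : Finset.univ.filter (cov M)
      = M.biUnion (fun e => Finset.univ.filter (fun v => v ∈ e)) := by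
    ext v
    simp [cov, Finset.mem_biUnion]
  rw [hset, Finset.card_biUnion]
  · have hcard : ∀ e ∈ M, (Finset.univ.filter (fun v => v ∈ e)).card = 2 := by
      intro e he
      obtain ⟨a, b, hab, rfl⟩ := edge_decomp (hM.1 e he)
      have : Finset.univ.filter (fun v => v ∈ s(a, b)) = {a, b} := by
        ext v; simp [Sym2.mem_iff]
      rw [this, Finset.card_pair hab]
    rw [Finset.sum_congr rfl hcard, Finset.sum_const, smul_eq_mul, mul_comm]
  · intro e he f hf hef
    simp only [Finset.disjoint_left, Finset.mem_filter]
    rintro v ⟨-, hve⟩ ⟨-, hvf⟩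
    exact hM.2 e he f hf hef v hve hvf

lemma card_even_odd_range (k : ℕ) :
    ((Finset.range k).filter (fun j => Even j)).card = (k+1)/2 ∧
    ((Finset.range k).filter (fun j => ¬ Even j)).card = k/2 := by
  induction k with
  | zero => simp
  | succ n ih =>
    rw [Finset.range_add_one, Finset.filter_insert, Finset.filter_insert]
    by_cases h : Even n
    · rw [if_pos h, if_neg (by exact fun hc => hc h),
        Finset.card_insert_of_notMem (by simp)]
      rw [Nat.even_iff] at h
      omega
    · rw [if_neg h, if_pos h, Finset.card_insert_of_notMem (by simp)]
      rw [Nat.even_iff] at h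
      omega

/-- Core alternating-path exchange lemma. -/
lemma alt_exchange {M N : Finset (Sym2 V)} (hM : IsMatchingSet G M) (hN : IsMatchingSet G N)
    {y : V} (hyM : cov M y) (hyN : ¬ cov N y)
    (hmax : ∀ K : Finset (Sym2 V), K ⊆ M ∪ N → IsMatchingSet G K → K.card ≤ N.card) :
    ∃ N' : Finset (Sym2 V), IsMatchingSet G N' ∧ N' ⊆ M ∪ N ∧ N'.card = N.card ∧
      (∀ v, cov N' v → cov N v ∨ v = y) ∧ (M ∩ N).card < (M ∩ N').card := by
  classical
  set Q : ℕ → Prop := fun k => ∃ p : ℕ → V, p 0 = y ∧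
      (∀ i ≤ k, ∀ j ≤ k, p i = p j → i = j) ∧
      (∀ j < k, s(p j, p (j+1)) ∈ (if Even j then M \ N else N \ M)) with hQdef
  have hQ0 : Q 0 := ⟨fun _ => y, rfl, fun i hi j hj _ => by omega, fun j hj => by omega⟩
  have hQbound : ∀ m, Q m → m + 1 ≤ Fintype.card V := by
    rintro m ⟨p, -, hinj, -⟩
    have : Function.Injective (fun i : Fin (m+1) => p i.1) := by
      intro i j hij
      exact Fin.ext (hinj i.1 (by omega) j.1 (by omega) hij)
    simpa using Fintype.card_le_of_injective _ this
  set k := Nat.findGreatest Q (Fintype.card V) with hkdef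
  have hQk : Q k := Nat.findGreatest_spec (Nat.zero_le _) hQ0
  have hknot : ¬ Q (k + 1) := by
    apply Nat.findGreatest_is_greatest (by rw [← hkdef]; omega)
    exact hQbound k hQk
  obtain ⟨p, hp0, hinj, hedge⟩ := hQk
  have hedgeM : ∀ j, j < k → Even j → s(p j, p (j+1)) ∈ M ∧ s(p j, p (j+1)) ∉ N := by
    intro j hj hev
    have := hedge j hj
    rw [if_pos hev, Finset.mem_sdiff] at this
    exact this
  have hedgeN : ∀ j, j < k → ¬ Even j → s(p j, p (j+1)) ∈ N ∧ s(p j, p (j+1)) ∉ M := by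
    intro j hj hev
    have := hedge j hj
    rw [if_neg hev, Finset.mem_sdiff] at this
    exact this
  -- extension is impossible
  have hext : ∀ t : V, (∀ j, j ≤ k → p j ≠ t) →
      s(p k, t) ∈ (if Even k then M \ N else N \ M) → False := by
    intro t hfresh hedge'
    apply hknot
    refine ⟨fun i => if i ≤ k then p i else t, ?_, ?_, ?_⟩
    · dsimp only
      rw [if_pos (Nat.zero_le k)]; exact hp0
    · intro i hi j hj hij
      dsimp only at hij
      by_cases h1 : i ≤ k <;> by_cases h2 : j ≤ k
      · rw [if_pos h1, if_pos h2] at hij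
        exact hinj i h1 j h2 hij
      · rw [if_pos h1, if_neg h2] at hij
        exact absurd hij (hfresh i h1)
      · rw [if_neg h1, if_pos h2] at hij
        exact absurd hij.symm (hfresh j h2)
      · omega
    · intro j hj
      dsimp only
      rcases Nat.lt_succ_iff_lt_or_eq.mp hj with hj' | rfl
      · have h1 : j ≤ k := Nat.le_of_lt hj'
        have h2 : j + 1 ≤ k := hj'
        rw [if_pos h1, if_pos h2]
        exact hedge j hj'
      · have h2 : ¬ (k + 1 ≤ k) := by omega
        rw [if_pos (le_refl k), if_neg h2]
        exact hedge'
  -- k is at least 1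
  have hk1 : 1 ≤ k := by
    by_contra h
    push_neg at h
    have hk0 : k = 0 := by omega
    obtain ⟨e, heM, hye⟩ := hyM
    have heN : e ∉ N := fun hc => hyN ⟨e, hc, hye⟩
    obtain ⟨t, hyt, rfl⟩ := exists_other (hM.1 e heM) hye
    apply hext t
    · intro j hj
      have : j = 0 := by omega
      rw [this, hp0]
      exact hyt
    · rw [hk0, if_pos (by exact Even.zero), hp0, Finset.mem_sdiff]
      exact ⟨heM, heN⟩
  -- if k is odd, the endpoint is not covered by N
  have hnoN : ¬ Even k → ∀ f ∈ N, p k ∉ f := by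
    intro hkodd f hfN hzf
    have hkk : k - 1 + 1 = k := by omega
    have hek : s(p (k-1), p k) ∈ M ∧ s(p (k-1), p k) ∉ N := by
      have := hedgeM (k-1) (by omega) (by rw [Nat.even_iff] at hkodd ⊢; omega)
      rwa [hkk] at this
    by_cases hfM : f ∈ M
    · have hfe : f = s(p (k-1), p k) :=
        matching_unique hM hfM hek.1 hzf (Sym2.mem_mk_right _ _)
      exact hek.2 (hfe ▸ hfN)
    · obtain ⟨t, hzt, hft⟩ := exists_other (hN.1 f hfN) hzf
      by_cases hfresh : ∀ j, j ≤ k → p j ≠ t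
      · apply hext t hfresh
        rw [if_neg hkodd, Finset.mem_sdiff, ← hft]
        exact ⟨hfN, hfM⟩
      · push_neg at hfresh
        obtain ⟨j, hjk, hjt⟩ := hfresh
        have hjne : j ≠ k := fun hc => hzt (hc ▸ hjt)
        by_cases hj0 : j = 0
        · apply hyN
          refine ⟨f, hfN, ?_⟩
          have hty : t = y := by rw [← hp0, ← hj0]; exact hjt.symm
          rw [hft, hty]
          exact Sym2.mem_mk_right _ _
        · by_cases hjev : Even j
          · -- j even, j ≥ 2; f is the N-edge e_j at p j
            have hjj : j - 1 + 1 = j := by omega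
            have hej : s(p (j-1), p j) ∈ N ∧ s(p (j-1), p j) ∉ M := by
              have := hedgeN (j-1) (by omega) (by rw [Nat.even_iff] at hjev ⊢; omega)
              rwa [hjj] at this
            have hfe : f = s(p (j-1), p j) := by
              apply matching_unique hN hfN hej.1 (v := t)
              · rw [hft]; exact Sym2.mem_mk_right _ _
              · rw [← hjt]; exact Sym2.mem_mk_right _ _
            have : p k ∈ s(p (j-1), p j) := hfe ▸ hzf
            rcases Sym2.mem_iff.mp this with hc | hc
            · have := hinj k (le_refl k) (j-1) (by omega) hc
              omega
            · have := hinj k (le_refl k) j (by omega) hc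
              omega
          · -- j odd, so j < k and j+1 ≤ k; f is the N-edge e_{j+1} at p j
            have hjlt : j < k := lt_of_le_of_ne hjk hjne
            have hej : s(p j, p (j+1)) ∈ N ∧ s(p j, p (j+1)) ∉ M := hedgeN j hjlt hjev
            have hfe : f = s(p j, p (j+1)) := by
              apply matching_unique hN hfN hej.1 (v := t)
              · rw [hft]; exact Sym2.mem_mk_right _ _
              · rw [← hjt]; exact Sym2.mem_mk_left _ _
            have : p k ∈ s(p j, p (j+1)) := hfe ▸ hzf
            rcases Sym2.mem_iff.mp this with hc | hc
            · have := hinj k (le_refl k) j (by omega) hc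
              omega
            · have := hinj k (le_refl k) (j+1) (by omega) hc
              rw [Nat.even_iff] at hjev hkodd
              omega
  -- the alternating edge sets
  set edgef : ℕ → Sym2 V := fun j => s(p j, p (j+1)) with hedgef
  set A : Finset (Sym2 V) :=
    ((Finset.range k).filter (fun j => Even j)).image edgef with hA
  set B : Finset (Sym2 V) :=
    ((Finset.range k).filter (fun j => ¬ Even j)).image edgef with hB
  have hinjE : ∀ i < k, ∀ j < k, edgef i = edgef j → i = j := by
    intro i hi j hj hij
    rcases Sym2.eq_iff.mp hij with ⟨h1, h2⟩ | ⟨h1, h2⟩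
    · exact hinj i (by omega) j (by omega) h1
    · have := hinj i (by omega) (j+1) (by omega) h1
      have := hinj (i+1) (by omega) j (by omega) h2
      omega
  have hAmem : ∀ e ∈ A, ∃ j, j < k ∧ Even j ∧ e = edgef j := by
    intro e he
    rw [hA, Finset.mem_image] at he
    obtain ⟨j, hj, rfl⟩ := he
    rw [Finset.mem_filter, Finset.mem_range] at hj
    exact ⟨j, hj.1, hj.2, rfl⟩
  have hBmem : ∀ e ∈ B, ∃ j, j < k ∧ ¬ Even j ∧ e = edgef j := by
    intro e he
    rw [hB, Finset.mem_image] at he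
    obtain ⟨j, hj, rfl⟩ := he
    rw [Finset.mem_filter, Finset.mem_range] at hj
    exact ⟨j, hj.1, hj.2, rfl⟩
  have hAM : ∀ e ∈ A, e ∈ M ∧ e ∉ N := by
    intro e he
    obtain ⟨j, hj, hev, rfl⟩ := hAmem e he
    exact hedgeM j hj hev
  have hBN : ∀ e ∈ B, e ∈ N ∧ e ∉ M := by
    intro e he
    obtain ⟨j, hj, hev, rfl⟩ := hBmem e he
    exact hedgeN j hj hev
  have hBsub : B ⊆ N := fun e he => (hBN e he).1
  have hAcard : A.card = (k+1)/2 := by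
    rw [hA, Finset.card_image_of_injOn, (card_even_odd_range k).1]
    intro i hi j hj
    rw [Finset.mem_coe, Finset.mem_filter, Finset.mem_range] at hi hj
    exact hinjE i hi.1 j hj.1
  have hBcard : B.card = k/2 := by
    rw [hB, Finset.card_image_of_injOn, (card_even_odd_range k).2]
    intro i hi j hj
    rw [Finset.mem_coe, Finset.mem_filter, Finset.mem_range] at hi hj
    exact hinjE i hi.1 j hj.1
  set K : Finset (Sym2 V) := (N \ B) ∪ A with hK
  have hKsub : K ⊆ M ∪ N := by
    intro e he
    rw [hK, Finset.mem_union] at he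
    rcases he with he | he
    · exact Finset.mem_union_right _ (Finset.mem_sdiff.mp he).1
    · exact Finset.mem_union_left _ (hAM e he).1
  have hKcard : K.card = N.card - k/2 + (k+1)/2 := by
    rw [hK, Finset.card_union_of_disjoint, Finset.card_sdiff_of_subset hBsub, hAcard, hBcard]
    rw [Finset.disjoint_right]
    intro e he
    rw [Finset.mem_sdiff]
    exact fun hc => (hAM e he).2 hc.1
  -- membership of a path vertex in N (for interior odd-indexed checks)
  have hNedge_at : ∀ m, 1 ≤ m → m ≤ k → (¬ Even k → m ≠ k) → ∃ g ∈ N, p m ∈ g ∧ g ∈ B := by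
    intro m h1 h2 h3
    by_cases hmev : Even m
    · have hmm : m - 1 + 1 = m := by omega
      refine ⟨edgef (m-1), ?_, ?_, ?_⟩
      · show s(p (m-1), p (m-1+1)) ∈ N
        exact (hedgeN (m-1) (by omega) (by rw [Nat.even_iff] at hmev ⊢; omega)).1
      · show p m ∈ s(p (m-1), p (m-1+1))
        rw [hmm]
        exact Sym2.mem_mk_right _ _
      · rw [hB, Finset.mem_image]
        exact ⟨m-1, by
          rw [Finset.mem_filter, Finset.mem_range]
          constructor
          · omega
          · rw [Nat.even_iff] at hmev ⊢; omega, rfl⟩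
    · -- m odd; need m < k
      have hmlt : m < k := by
        rcases Nat.lt_or_ge m k with h | h
        · exact h
        · have : m = k := by omega
          subst this
          exact absurd (h3 hmev rfl) (fun _ => (hmev (False.elim (h3 hmev rfl))))
      refine ⟨edgef m, (hedgeN m hmlt hmev).1, Sym2.mem_mk_left _ _, ?_⟩
      rw [hB, Finset.mem_image]
      exact ⟨m, by rw [Finset.mem_filter, Finset.mem_range]; exact ⟨hmlt, hmev⟩, rfl⟩
  -- K is a matching
  have hKmatch : IsMatchingSet G K := by
    constructor
    · intro e he
      rcases Finset.mem_union.mp (hKsub he) with he | he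
      · exact hM.1 e he
      · exact hN.1 e he
    · have hcaseNA : ∀ f, f ∈ N → f ∉ B → ∀ g ∈ A, ∀ v, v ∈ f → v ∈ g → False := by
        intro f hfN hfB g hg v hvf hvg
        obtain ⟨j, hj, hev, rfl⟩ := hAmem g hg
        rcases Sym2.mem_iff.mp hvg with rfl | rfl
        · -- v = p j
          by_cases hj0 : j = 0
          · subst hj0
            rw [hp0] at hvf
            exact hyN ⟨f, hfN, hvf⟩
          · obtain ⟨g', hg'N, hg'mem, hg'B⟩ := hNedge_at j (by omega) (by omega)
              (fun _ hc => by rw [hc] at hj; omega)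
            have : f = g' := matching_unique hN hfN hg'N hvf hg'mem
            exact hfB (this ▸ hg'B)
        · -- v = p (j+1)
          by_cases hjk : j + 1 = k
          · rcases Nat.even_or_odd k with hkev | hkodd
            · rw [Nat.even_iff] at hkev hev; omega
            · exact hnoN (Nat.not_even_iff_odd.mpr hkodd) f hfN (hjk ▸ hvf)
          · obtain ⟨g', hg'N, hg'mem, hg'B⟩ := hNedge_at (j+1) (by omega) (by omega)
              (fun _ => hjk)
            have : f = g' := matching_unique hN hfN hg'N hvf hg'mem
            exact hfB (this ▸ hg'B)
      intro e he f hf hef v hve hvf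
      rcases Finset.mem_union.mp he with he' | he' <;>
        rcases Finset.mem_union.mp hf with hf' | hf'
      · rw [Finset.mem_sdiff] at he' hf'
        exact hN.2 e he'.1 f hf'.1 hef v hve hvf
      · rw [Finset.mem_sdiff] at he'
        exact hcaseNA e he'.1 he'.2 f hf' v hve hvf
      · rw [Finset.mem_sdiff] at hf'
        exact hcaseNA f hf'.1 hf'.2 e he' v hvf hve
      · have h1 := (hAM e he').1
        have h2 := (hAM f hf').1
        exact hef (matching_unique hM h1 h2 hve hvf)
  rcases Nat.even_or_odd k with hkev | hkodd
  · -- k even : K is the desired matching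
    refine ⟨K, hKmatch, hKsub, ?_, ?_, ?_⟩
    · rw [hKcard]
      have := Finset.card_le_card hBsub
      rw [hBcard] at this
      rw [Nat.even_iff] at hkev
      omega
    · intro v hv
      obtain ⟨e, heK, hve⟩ := hv
      rcases Finset.mem_union.mp heK with he' | he'
      · exact Or.inl ⟨e, (Finset.mem_sdiff.mp he').1, hve⟩
      · obtain ⟨j, hj, hev, rfl⟩ := hAmem e he'
        rcases Sym2.mem_iff.mp hve with rfl | rfl
        · by_cases hj0 : j = 0
          · subst hj0; exact Or.inr hp0
          · obtain ⟨g', hg'N, hg'mem, -⟩ := hNedge_at j (by omega) (by omega)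
              (fun hc _ => absurd hkev hc)
            exact Or.inl ⟨g', hg'N, hg'mem⟩
        · have hjk : j + 1 ≠ k := by
            rw [Nat.even_iff] at hkev hev
            omega
          obtain ⟨g', hg'N, hg'mem, -⟩ := hNedge_at (j+1) (by omega) (by omega)
            (fun _ => hjk)
          exact Or.inl ⟨g', hg'N, hg'mem⟩
    · -- strict growth of M ∩ ·
      have hsub : M ∩ N ⊆ M ∩ K := by
        intro e he
        rw [Finset.mem_inter] at he ⊢
        refine ⟨he.1, ?_⟩
        rw [hK, Finset.mem_union, Finset.mem_sdiff]
        left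
        exact ⟨he.2, fun hc => (hBN e hc).2 he.1⟩
      have hk2 : 0 < k := by omega
      have he1 := hedgeM 0 hk2 Even.zero
      have he1A : edgef 0 ∈ A := by
        rw [hA, Finset.mem_image]
        exact ⟨0, by rw [Finset.mem_filter, Finset.mem_range]; exact ⟨hk2, Even.zero⟩, rfl⟩
      apply Finset.card_lt_card
      rw [Finset.ssubset_iff_of_subset hsub]
      refine ⟨edgef 0, ?_, ?_⟩
      · rw [Finset.mem_inter]
        exact ⟨he1.1, Finset.mem_union.mpr (Or.inr he1A)⟩
      · rw [Finset.mem_inter]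
        exact fun hc => he1.2 hc.2
  · -- k odd : contradiction with maximality
    exfalso
    have hcon := hmax K hKsub hKmatch
    rw [hKcard] at hcon
    have := Finset.card_le_card hBsub
    rw [hBcard] at this
    rw [Nat.odd_iff] at hkodd
    omega


/-- Gallai's lemma, upper-bound form: a "connected" set in which every vertex is missed
by some maximum matching has at most `2μ+1` vertices. -/
lemma gallai (Gs : SimpleGraph V) (C : Finset V) (μ : ℕ)
    (hGsG : ∀ a b, Gs.Adj a b → G.Adj a b)
    (hGGs : ∀ a ∈ C, ∀ b ∈ C, G.Adj a b → Gs.Adj a b)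
    (hclose : ∀ a ∈ C, ∀ b, Gs.Adj a b → b ∈ C)
    (hconn : ∀ a ∈ C, ∀ b ∈ C, Gs.Reachable a b)
    (hmax : ∀ K, MOn G C K → K.card ≤ μ)
    (hmiss : ∀ u ∈ C, ∃ N, MOn G C N ∧ N.card = μ ∧ ¬ cov N u) :
    C.card ≤ 2 * μ + 1 := by
  classical
  by_contra hcon
  push_neg at hcon
  -- every maximum matching misses at least two vertices of C
  have hmissed : ∀ K, MOn G C K → K.card = μ →
      ∃ u v, u ∈ C ∧ v ∈ C ∧ u ≠ v ∧ ¬ cov K u ∧ ¬ cov K v := by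
    intro K hK hKc
    have hcov : (C.filter (cov K)).card ≤ 2 * μ := by
      calc (C.filter (cov K)).card ≤ (Finset.univ.filter (cov K)).card :=
            Finset.card_le_card (Finset.filter_subset_filter _ (Finset.subset_univ C))
        _ = 2 * K.card := card_cov_filter hK.1
        _ = 2 * μ := by rw [hKc]
    have hsplit := Finset.card_filter_add_card_filter_not (s := C) (p := cov K)
    have h2 : 1 < (C.filter (fun v => ¬ cov K v)).card := by omega
    obtain ⟨u, hu, v, hv, huv⟩ := Finset.one_lt_card.mp h2
    rw [Finset.mem_filter] at hu hv
    exact ⟨u, v, hu.1, hv.1, huv, hu.2, hv.2⟩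
  -- no maximum matching misses two adjacent vertices
  have hnadj : ∀ K' u' v', MOn G C K' → K'.card = μ → u' ∈ C → v' ∈ C →
      ¬ cov K' u' → ¬ cov K' v' → ¬ Gs.Adj u' v' := by
    intro K' u' v' hK' hK'c hu' hv' hcu' hcv' hadj
    have hins := matching_insert hK'.1 (hGsG _ _ hadj) hcu' hcv'
    have hOn : MOn G C (insert s(u', v') K') := by
      refine ⟨hins, ?_⟩
      intro e he x hx
      rcases Finset.mem_insert.mp he with rfl | he
      · rcases Sym2.mem_iff.mp hx with rfl | rfl
        · exact hu'
        · exact hv'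
      · exact hK'.2 e he x hx
    have hle := hmax _ hOn
    have hnotmem : s(u', v') ∉ K' := fun hc => hcu' ⟨_, hc, Sym2.mem_mk_left _ _⟩
    rw [Finset.card_insert_of_notMem hnotmem, hK'c] at hle
    omega
  -- minimal-distance pair of missed vertices
  set P : ℕ → Prop := fun n => ∃ K u v, MOn G C K ∧ K.card = μ ∧ u ∈ C ∧ v ∈ C ∧
      u ≠ v ∧ ¬ cov K u ∧ ¬ cov K v ∧ Gs.dist u v = n with hPdef
  have hPex : ∃ n, P n := by
    have hCne : C.Nonempty := Finset.card_pos.mp (by omega)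
    obtain ⟨u0, hu0⟩ := hCne
    obtain ⟨K0, hK0, hK0c, -⟩ := hmiss u0 hu0
    obtain ⟨u, v, huC, hvC, huv, hcu, hcv⟩ := hmissed K0 hK0 hK0c
    exact ⟨Gs.dist u v, K0, u, v, hK0, hK0c, huC, hvC, huv, hcu, hcv, rfl⟩
  set n0 := Nat.find hPex with hn0def
  obtain ⟨K, u, v, hK, hKc, huC, hvC, huv, hcu, hcv, hdist⟩ := Nat.find_spec hPex
  have hmin : ∀ m, m < n0 → ¬ P m := fun m hm => Nat.find_min hPex hm
  have hreach : Gs.Reachable u v := hconn u huC v hvC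
  have hd0 : Gs.dist u v ≠ 0 := SimpleGraph.dist_ne_zero_iff_ne_and_reachable.mpr ⟨huv, hreach⟩
  have hd1 : Gs.dist u v ≠ 1 := fun h =>
    hnadj K u v hK hKc huC hvC hcu hcv (SimpleGraph.dist_eq_one_iff_adj.mp h)
  have hn02 : 2 ≤ n0 := by omega
  -- second vertex on a geodesic
  obtain ⟨w0, hw0adj, hw0dist⟩ : ∃ w, Gs.Adj u w ∧ Gs.dist w v ≤ Gs.dist u v - 1 := by
    obtain ⟨pwalk, hplen⟩ := hreach.exists_walk_length_eq_dist
    cases pwalk with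
    | nil => rw [SimpleGraph.Walk.length_nil] at hplen; omega
    | cons hadj q =>
      refine ⟨_, hadj, ?_⟩
      have hle := SimpleGraph.dist_le q
      rw [SimpleGraph.Walk.length_cons] at hplen
      omega
  have hwC : w0 ∈ C := hclose u huC w0 hw0adj
  have hwu : u ≠ w0 := Gs.ne_of_adj hw0adj
  have hduw : Gs.dist u w0 = 1 := SimpleGraph.dist_eq_one_iff_adj.mpr hw0adj
  have hwv : w0 ≠ v := by
    rintro rfl
    exact hnadj K u w0 hK hKc huC hwC hcu hcv hw0adj
  have hwcov : cov K w0 := by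
    by_contra hc
    exact hmin 1 (by omega) ⟨K, u, w0, hK, hKc, huC, hwC, hwu, hcu, hc, hduw⟩
  -- pick a maximum matching N missing w0 with (K ∩ N).card maximal
  obtain ⟨N1, hN1a, hN1b, hN1c⟩ := hmiss w0 hwC
  set NS : Finset (Finset (Sym2 V)) := Finset.univ.filter
      (fun K' : Finset (Sym2 V) => MOn G C K' ∧ K'.card = μ ∧ ¬ cov K' w0) with hNSdef
  have hNSne : NS.Nonempty := ⟨N1, by
    rw [hNSdef, Finset.mem_filter]
    exact ⟨Finset.mem_univ _, hN1a, hN1b, hN1c⟩⟩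
  obtain ⟨N, hNmem, hNopt⟩ := Finset.exists_max_image NS (fun K' => (K ∩ K').card) hNSne
  rw [hNSdef, Finset.mem_filter] at hNmem
  obtain ⟨-, hN, hNc, hNw⟩ := hNmem
  -- u and v are covered by N
  have hucov : cov N u := by
    by_contra hc
    exact hmin 1 (by omega) ⟨N, u, w0, hN, hNc, huC, hwC, hwu, hc, hNw, hduw⟩
  have hvcov : cov N v := by
    by_contra hc
    refine hmin (Gs.dist w0 v) (by omega) ⟨N, w0, v, hN, hNc, hwC, hvC, hwv, hNw, hc, rfl⟩
  -- find y covered by K but not by N, different from w0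
  set Acov : Finset V := Finset.univ.filter (cov K) with hAdef
  set Bcov : Finset V := Finset.univ.filter (cov N) with hBdef
  have hAc : Acov.card = 2 * μ := by rw [hAdef, card_cov_filter hK.1, hKc]
  have hBc : Bcov.card = 2 * μ := by rw [hBdef, card_cov_filter hN.1, hNc]
  have hBA2 : 2 ≤ (Bcov \ Acov).card := by
    have hsub2 : ({u, v} : Finset V) ⊆ Bcov \ Acov := by
      intro x hx
      rw [Finset.mem_sdiff, hAdef, hBdef, Finset.mem_filter, Finset.mem_filter]
      rcases Finset.mem_insert.mp hx with rfl | hx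
      · exact ⟨⟨Finset.mem_univ _, hucov⟩, fun hc => hcu hc.2⟩
      · rw [Finset.mem_singleton] at hx
        subst hx
        exact ⟨⟨Finset.mem_univ _, hvcov⟩, fun hc => hcv hc.2⟩
    calc 2 = ({u, v} : Finset V).card := (Finset.card_pair huv).symm
      _ ≤ _ := Finset.card_le_card hsub2
  have hAB2 : 2 ≤ (Acov \ Bcov).card := by
    have h1 := Finset.card_inter_add_card_sdiff Acov Bcov
    have h2 := Finset.card_inter_add_card_sdiff Bcov Acov
    rw [Finset.inter_comm] at h2
    omega
  have hyex : ((Acov \ Bcov).erase w0).Nonempty := by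
    apply Finset.card_pos.mp
    have := Finset.pred_card_le_card_erase (s := Acov \ Bcov) (a := w0)
    omega
  obtain ⟨y, hy⟩ := hyex
  rw [Finset.mem_erase, Finset.mem_sdiff, hAdef, hBdef, Finset.mem_filter,
    Finset.mem_filter] at hy
  have hyw : y ≠ w0 := hy.1
  have hyK : cov K y := hy.2.1.2
  have hyN : ¬ cov N y := fun hc => hy.2.2 ⟨Finset.mem_univ _, hc⟩
  -- apply the exchange lemma
  have hmax' : ∀ K', K' ⊆ K ∪ N → IsMatchingSet G K' → K'.card ≤ N.card := by
    intro K' hsub hK'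
    rw [hNc]
    apply hmax
    refine ⟨hK', ?_⟩
    intro e he x hx
    rcases Finset.mem_union.mp (hsub he) with h | h
    · exact hK.2 e h x hx
    · exact hN.2 e h x hx
  obtain ⟨N', hN'match, hN'sub, hN'card, hN'cov, hN'lt⟩ :=
    alt_exchange hK.1 hN.1 hyK hyN hmax'
  have hN'On : MOn G C N' := by
    refine ⟨hN'match, ?_⟩
    intro e he x hx
    rcases Finset.mem_union.mp (hN'sub he) with h | h
    · exact hK.2 e h x hx
    · exact hN.2 e h x hx
  have hN'w : ¬ cov N' w0 := by
    intro hc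
    rcases hN'cov w0 hc with h | h
    · exact hNw h
    · exact hyw h.symm
  have hle := hNopt N' (by
    rw [hNSdef, Finset.mem_filter]
    exact ⟨Finset.mem_univ _, hN'On, by rw [hN'card, hNc], hN'w⟩)
  omega

section Counting

variable [DecidableRel G.Adj]

lemma handshake (s : Finset V) [∀ v : V, DecidablePred (fun e : Sym2 V => v ∈ e)] :
    2 * (Efin G s).card
      = ∑ v ∈ s, ((Efin G s).filter (fun e => v ∈ e)).card := by
  classical
  have key : ∀ e ∈ Efin G s, (s.filter (fun v => v ∈ e)).card = 2 := by
    intro e he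
    rw [mem_Efin] at he
    obtain ⟨a, b, hab, rfl⟩ := edge_decomp he.1
    have : s.filter (fun v => v ∈ s(a, b)) = {a, b} := by
      ext v
      simp only [Finset.mem_filter, Sym2.mem_iff, Finset.mem_insert, Finset.mem_singleton]
      constructor
      · rintro ⟨-, h⟩; exact h
      · rintro (rfl | rfl)
        · exact ⟨he.2 v (Sym2.mem_mk_left _ _), Or.inl rfl⟩
        · exact ⟨he.2 v (Sym2.mem_mk_right _ _), Or.inr rfl⟩
    rw [this, Finset.card_pair hab]
  calc 2 * (Efin G s).card = ∑ e ∈ Efin G s, 2 := by rw [Finset.sum_const]; ring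
    _ = ∑ e ∈ Efin G s, (s.filter (fun v => v ∈ e)).card := (Finset.sum_congr rfl key).symm
    _ = ∑ e ∈ Efin G s, ∑ v ∈ s, if v ∈ e then 1 else 0 := by
        simp only [Finset.card_filter]
    _ = ∑ v ∈ s, ∑ e ∈ Efin G s, if v ∈ e then 1 else 0 := Finset.sum_comm
    _ = ∑ v ∈ s, ((Efin G s).filter (fun e => v ∈ e)).card := by
        simp only [Finset.card_filter]

lemma Efin_card_le_of_degree_le (s : Finset V) (Δ : ℕ) (hd : ∀ v : V, G.degree v ≤ Δ) :
    2 * (Efin G s).card ≤ s.card * Δ := by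
  classical
  rw [handshake]
  have : ∀ v ∈ s, ((Efin G s).filter (fun e => v ∈ e)).card ≤ Δ := by
    intro v _
    have hsub : (Efin G s).filter (fun e => v ∈ e) ⊆ G.incidenceFinset v := by
      intro e he
      rw [Finset.mem_filter, mem_Efin] at he
      rw [SimpleGraph.mem_incidenceFinset]
      exact ⟨he.1.1, he.2⟩
    calc ((Efin G s).filter (fun e => v ∈ e)).card ≤ (G.incidenceFinset v).card :=
          Finset.card_le_card hsub
      _ = G.degree v := SimpleGraph.card_incidenceFinset_eq_degree G v
      _ ≤ Δ := hd v
  calc ∑ v ∈ s, ((Efin G s).filter (fun e => v ∈ e)).card ≤ ∑ v ∈ s, Δ :=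
        Finset.sum_le_sum this
    _ = s.card * Δ := by rw [Finset.sum_const]; ring

lemma Efin_card_le_choose (s : Finset V) :
    2 * (Efin G s).card ≤ s.card * (s.card - 1) := by
  classical
  rw [handshake]
  have : ∀ v ∈ s, ((Efin G s).filter (fun e => v ∈ e)).card ≤ s.card - 1 := by
    intro v hv
    have h1 : ((Efin G s).filter (fun e => v ∈ e)).card ≤ (s.erase v).card := by
      apply Finset.card_le_card_of_injOn (fun e => if h : v ∈ e then Sym2.Mem.other' h else v)
      · intro e he
        rw [Finset.mem_coe, Finset.mem_filter] at he
        obtain ⟨heE, hve⟩ := he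
        rw [mem_Efin] at heE
        simp only [dif_pos hve]
        have hsp := Sym2.other_spec' hve
        rw [Finset.mem_coe, Finset.mem_erase]
        constructor
        · intro hco
          have : e.IsDiag := by
            rw [← hsp, hco]
            exact Sym2.mk_isDiag_iff.mpr rfl
          exact (SimpleGraph.not_isDiag_of_mem_edgeSet G heE.1) this
        · exact heE.2 _ (Sym2.other_mem' hve)
      · intro e he f hf hef
        rw [Finset.mem_coe, Finset.mem_filter] at he hf
        simp only [dif_pos he.2, dif_pos hf.2] at hef
        rw [← Sym2.other_spec' he.2, ← Sym2.other_spec' hf.2, hef]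
    calc ((Efin G s).filter (fun e => v ∈ e)).card ≤ (s.erase v).card := h1
      _ = s.card - 1 := Finset.card_erase_of_mem hv
  calc ∑ v ∈ s, ((Efin G s).filter (fun e => v ∈ e)).card ≤ ∑ v ∈ s, (s.card - 1) :=
        Finset.sum_le_sum this
    _ = s.card * (s.card - 1) := by rw [Finset.sum_const]; ring

end Counting

/-- The graph induced on a finset (as a graph on `V`). -/
def indOn (G : SimpleGraph V) (s : Finset V) : SimpleGraph V where
  Adj a b := a ∈ s ∧ b ∈ s ∧ G.Adj a b
  symm := ⟨fun a b h => ⟨h.2.1, h.1, h.2.2.symm⟩⟩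
  loopless := ⟨fun a h => G.loopless.irrefl a h.2.2⟩

lemma main {G : SimpleGraph V} [DecidableRel G.Adj] (Δ : ℕ) (hΔ1 : 1 ≤ Δ)
    (hd : ∀ v : V, G.degree v ≤ Δ) :
    ∀ n (s : Finset V), s.card ≤ n → ∀ ν, (∀ M, MOn G s M → M.card ≤ ν) →
      (Efin G s).card ≤ ν * Δ + (Δ / 2) * (ν / ((Δ + 1) / 2)) := by
  classical
  intro n
  induction n with
  | zero =>
    intro s hs ν hν
    have hsempty : s = ∅ := Finset.card_eq_zero.mp (by omega)
    subst hsempty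
    have : Efin G ∅ = ∅ := by
      rw [Finset.eq_empty_iff_forall_notMem]
      intro e he
      rw [mem_Efin] at he
      obtain ⟨a, b, -, rfl⟩ := edge_decomp he.1
      exact absurd (he.2 a (Sym2.mem_mk_left _ _)) (Finset.notMem_empty a)
    rw [this]
    simp
  | succ n ih =>
    intro s hs ν hν
    by_cases hE : Efin G s = ∅
    · rw [hE]; simp
    · obtain ⟨e0, he0mem⟩ := Finset.nonempty_iff_ne_empty.mpr hE
      have he0 := mem_Efin.mp he0mem
      obtain ⟨a0, b0, hab0, rfl⟩ := edge_decomp he0.1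
      have ha0s : a0 ∈ s := he0.2 a0 (Sym2.mem_mk_left _ _)
      have hb0s : b0 ∈ s := he0.2 b0 (Sym2.mem_mk_right _ _)
      -- ν ≥ 1
      have hν1 : 1 ≤ ν := by
        have hsingle : MOn G s {s(a0, b0)} := by
          refine ⟨⟨?_, ?_⟩, ?_⟩
          · intro e he
            rw [Finset.mem_singleton] at he
            subst he; exact he0.1
          · intro e he f hf hef
            rw [Finset.mem_singleton] at he hf
            exact absurd (he.trans hf.symm) hef
          · intro e he x hx
            rw [Finset.mem_singleton] at he
            subst he
            exact he0.2 x hx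
        have := hν _ hsingle
        rwa [Finset.card_singleton] at this
      obtain ⟨m, rfl⟩ : ∃ m, ν = m + 1 := ⟨ν - 1, by omega⟩
      by_cases hcaseA : ∃ v ∈ s, ∀ K, MOn G (s.erase v) K → K.card ≤ m
      · -- delete an essential vertex
        obtain ⟨v, hvs, hKb⟩ := hcaseA
        have hsub : Efin G s ⊆ Efin G (s.erase v) ∪ G.incidenceFinset v := by
          intro e he
          rw [mem_Efin] at he
          rw [Finset.mem_union]
          by_cases hve : v ∈ e
          · right
            rw [SimpleGraph.mem_incidenceFinset]
            exact ⟨he.1, hve⟩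
          · left
            rw [mem_Efin]
            exact ⟨he.1, fun x hx =>
              Finset.mem_erase.mpr ⟨fun hxv => hve (hxv ▸ hx), he.2 x hx⟩⟩
        have hBnd := ih (s.erase v) (by
            rw [Finset.card_erase_of_mem hvs]; omega) m hKb
        have hdeg : (G.incidenceFinset v).card ≤ Δ := by
          rw [SimpleGraph.card_incidenceFinset_eq_degree G v]; exact hd v
        have hcard : (Efin G s).card ≤ (Efin G (s.erase v)).card + Δ :=
          le_trans (le_trans (Finset.card_le_card hsub) (Finset.card_union_le _ _))
            (by omega)
        have hmono : m / ((Δ + 1) / 2) ≤ (m + 1) / ((Δ + 1) / 2) :=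
          Nat.div_le_div_right (by omega)
        have h1 : (m + 1) * Δ = m * Δ + Δ := by ring
        have h2 : Δ / 2 * (m / ((Δ + 1) / 2)) ≤ Δ / 2 * ((m + 1) / ((Δ + 1) / 2)) :=
          Nat.mul_le_mul_left _ hmono
        omega
      · -- every vertex is inessential
        push_neg at hcaseA
        set Gs : SimpleGraph V := indOn G s with hGsdef
        have hGsAdj : ∀ a b, Gs.Adj a b ↔ (a ∈ s ∧ b ∈ s ∧ G.Adj a b) := fun a b => Iff.rfl
        set C : Finset V := s.filter (fun x => Gs.Reachable a0 x) with hCdef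
        have hCs : C ⊆ s := Finset.filter_subset _ _
        have ha0C : a0 ∈ C := by
          rw [hCdef, Finset.mem_filter]
          exact ⟨ha0s, SimpleGraph.Reachable.refl a0⟩
        have hclose : ∀ x ∈ C, ∀ b, Gs.Adj x b → b ∈ C := by
          intro x hx b hadj
          rw [hCdef, Finset.mem_filter] at hx ⊢
          exact ⟨hadj.2.1, hx.2.trans hadj.reachable⟩
        have hconn : ∀ x ∈ C, ∀ y ∈ C, Gs.Reachable x y := by
          intro x hx y hy
          rw [hCdef, Finset.mem_filter] at hx hy
          exact hx.2.symm.trans hy.2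
        have hGsG : ∀ a b, Gs.Adj a b → G.Adj a b := fun a b h => h.2.2
        have hGGs : ∀ a ∈ C, ∀ b ∈ C, G.Adj a b → Gs.Adj a b := fun a ha b hb h =>
          ⟨hCs ha, hCs hb, h⟩
        -- edge dichotomy
        have hdich : ∀ e ∈ Efin G s, (∀ x ∈ e, x ∈ C) ∨ (∀ x ∈ e, x ∈ s \ C) := by
          intro e he
          rw [mem_Efin] at he
          obtain ⟨a, b, hab, rfl⟩ := edge_decomp he.1
          have has : a ∈ s := he.2 a (Sym2.mem_mk_left _ _)
          have hbs : b ∈ s := he.2 b (Sym2.mem_mk_right _ _)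
          have hGab : G.Adj a b := (SimpleGraph.mem_edgeSet G).mp he.1
          by_cases haC : a ∈ C
          · left
            have hbC : b ∈ C := hclose a haC b ⟨has, hbs, hGab⟩
            intro x hx
            rcases Sym2.mem_iff.mp hx with rfl | rfl
            · exact haC
            · exact hbC
          · right
            have hbC : b ∉ C := fun hbC => haC (hclose b hbC a ⟨hbs, has, hGab.symm⟩)
            intro x hx
            rw [Finset.mem_sdiff]
            rcases Sym2.mem_iff.mp hx with rfl | rfl
            · exact ⟨has, haC⟩
            · exact ⟨hbs, hbC⟩
        -- splitting matchings on s
        have hsplitK : ∀ K s', MOn G s' K → s' ⊆ s →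
            MOn G C (K.filter (fun e => ∀ x ∈ e, x ∈ C)) ∧
            MOn G (s \ C) (K.filter (fun e => ¬ ∀ x ∈ e, x ∈ C)) ∧
            (K.filter (fun e => ∀ x ∈ e, x ∈ C)).card +
              (K.filter (fun e => ¬ ∀ x ∈ e, x ∈ C)).card = K.card := by
          intro K s' hK hs'
          refine ⟨⟨matching_subset hK.1 (Finset.filter_subset _ _), ?_⟩,
            ⟨matching_subset hK.1 (Finset.filter_subset _ _), ?_⟩, ?_⟩
          · intro e he x hx
            rw [Finset.mem_filter] at he
            exact he.2 x hx
          · intro e he x hx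
            rw [Finset.mem_filter] at he
            have heE : e ∈ Efin G s := mem_Efin.mpr
              ⟨hK.1.1 e he.1, fun z hz => hs' (hK.2 e he.1 z hz)⟩
            rcases hdich e heE with h | h
            · exact absurd h he.2
            · exact h x hx
          · exact Finset.card_filter_add_card_filter_not (fun e => ∀ x ∈ e, x ∈ C)
        -- maximum matching size within C
        set MS : Finset (Finset (Sym2 V)) := Finset.univ.filter (fun K => MOn G C K)
          with hMSdef
        have hMSne : MS.Nonempty := by
          refine ⟨∅, ?_⟩
          rw [hMSdef, Finset.mem_filter]
          refine ⟨Finset.mem_univ _, ⟨⟨?_, ?_⟩, ?_⟩⟩ <;>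
            · intro e he
              exact absurd he (Finset.notMem_empty e)
        obtain ⟨N0, hN0mem, hN0max⟩ := Finset.exists_max_image MS Finset.card hMSne
        rw [hMSdef, Finset.mem_filter] at hN0mem
        have hN0 : MOn G C N0 := hN0mem.2
        set μ := N0.card with hμdef
        have hmaxμ : ∀ K, MOn G C K → K.card ≤ μ := by
          intro K hKOn
          exact hN0max K (by rw [hMSdef, Finset.mem_filter]; exact ⟨Finset.mem_univ _, hKOn⟩)
        have hCsub : ∀ K, MOn G C K → MOn G s K := fun K hKOn =>
          ⟨hKOn.1, fun e he x hx => hCs (hKOn.2 e he x hx)⟩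
        have hμν : μ ≤ m + 1 := hν N0 (hCsub N0 hN0)
        -- matchings avoiding C have size at most ν - μ
        have hrest : ∀ K, MOn G (s \ C) K → K.card ≤ (m + 1) - μ := by
          intro K hKOn
          have hdisj : Disjoint K N0 := by
            rw [Finset.disjoint_left]
            intro e heK heN
            obtain ⟨a, b, hab, rfl⟩ := edge_decomp (hKOn.1.1 e heK)
            have h1 := hKOn.2 _ heK a (Sym2.mem_mk_left _ _)
            have h2 := hN0.2 _ heN a (Sym2.mem_mk_left _ _)
            rw [Finset.mem_sdiff] at h1
            exact h1.2 h2
          have hnovertex : ∀ e ∈ K, ∀ f ∈ N0, ∀ x, x ∈ e → x ∈ f → False := by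
            intro e heK f hfN x hxe hxf
            have h1 := hKOn.2 _ heK x hxe
            have h2 := hN0.2 _ hfN x hxf
            rw [Finset.mem_sdiff] at h1
            exact h1.2 h2
          have hUOn : MOn G s (K ∪ N0) := by
            refine ⟨⟨?_, ?_⟩, ?_⟩
            · intro e he
              rcases Finset.mem_union.mp he with h | h
              · exact hKOn.1.1 e h
              · exact hN0.1.1 e h
            · intro e he f hf hef x hxe hxf
              rcases Finset.mem_union.mp he with he' | he' <;>
                rcases Finset.mem_union.mp hf with hf' | hf'
              · exact hKOn.1.2 e he' f hf' hef x hxe hxf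
              · exact hnovertex e he' f hf' x hxe hxf
              · exact hnovertex f hf' e he' x hxf hxe
              · exact hN0.1.2 e he' f hf' hef x hxe hxf
            · intro e he x hx
              rcases Finset.mem_union.mp he with h | h
              · exact (Finset.mem_sdiff.mp (hKOn.2 e h x hx)).1
              · exact hCs (hN0.2 e h x hx)
          have := hν _ hUOn
          rw [Finset.card_union_of_disjoint hdisj] at this
          omega
        -- each vertex of C is missed by some maximum matching of C
        have hmissC : ∀ u ∈ C, ∃ N, MOn G C N ∧ N.card = μ ∧ ¬ cov N u := by
          intro u huC
          obtain ⟨K, hKOn, hKcard⟩ := hcaseA u (hCs huC)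
          have hKs : MOn G s K :=
            ⟨hKOn.1, fun e he x hx => Finset.mem_of_mem_erase (hKOn.2 e he x hx)⟩
          have hKν : K.card = m + 1 := le_antisymm (hν K hKs) (by omega)
          obtain ⟨hKC, hKR, hKsum⟩ := hsplitK K (s.erase u) hKOn (Finset.erase_subset _ _)
          have h1 := hmaxμ _ hKC
          have h2 := hrest _ hKR
          refine ⟨_, hKC, by omega, ?_⟩
          intro hcov
          obtain ⟨e, he, hue⟩ := hcov
          rw [Finset.mem_filter] at he
          exact absurd (hKOn.2 e he.1 u hue) (by simp)
        -- Gallai's lemma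
        have hgal : C.card ≤ 2 * μ + 1 :=
          gallai Gs C μ hGsG hGGs hclose hconn hmaxμ hmissC
        -- bound on the edges inside C
        set d := (Δ + 1) / 2 with hddef
        have hECbound : (Efin G C).card ≤ μ * Δ + (Δ / 2) * (μ / d) := by
          by_cases hμd : d ≤ μ
          · have hC1 := Efin_card_le_of_degree_le (G := G) C Δ hd
            have hmul : C.card * Δ ≤ (2 * μ + 1) * Δ := Nat.mul_le_mul_right _ hgal
            have hexp : (2 * μ + 1) * Δ = 2 * (μ * Δ) + Δ := by ring
            have hone : 1 ≤ μ / d := (Nat.one_le_div_iff (by omega)).mpr hμd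
            have h3 : Δ / 2 * 1 ≤ Δ / 2 * (μ / d) := Nat.mul_le_mul_left _ hone
            rw [mul_one] at h3
            omega
          · have hC2 := Efin_card_le_choose (G := G) C
            have hCΔ : 2 * μ + 1 ≤ Δ := by omega
            have hmul : C.card * (C.card - 1) ≤ (2 * μ + 1) * (2 * μ) :=
              Nat.mul_le_mul hgal (by omega)
            have hmul2 : (2 * μ + 1) * (2 * μ) ≤ Δ * (2 * μ) :=
              Nat.mul_le_mul_right _ hCΔ
            have hexp : Δ * (2 * μ) = 2 * (μ * Δ) := by ring
            omega
        -- split the edge set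
        have hEeq : Efin G s = Efin G C ∪ Efin G (s \ C) := by
          ext e
          rw [Finset.mem_union, mem_Efin, mem_Efin, mem_Efin]
          constructor
          · intro he
            rcases hdich e (mem_Efin.mpr he) with h | h
            · exact Or.inl ⟨he.1, h⟩
            · exact Or.inr ⟨he.1, h⟩
          · rintro (he | he)
            · exact ⟨he.1, fun x hx => hCs (he.2 x hx)⟩
            · exact ⟨he.1, fun x hx => (Finset.mem_sdiff.mp (he.2 x hx)).1⟩
        have hEdisj : Disjoint (Efin G C) (Efin G (s \ C)) := by
          rw [Finset.disjoint_left]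
          intro e h1 h2
          rw [mem_Efin] at h1 h2
          obtain ⟨a, b, hab, rfl⟩ := edge_decomp h1.1
          have := h2.2 a (Sym2.mem_mk_left _ _)
          rw [Finset.mem_sdiff] at this
          exact this.2 (h1.2 a (Sym2.mem_mk_left _ _))
        have hEcard : (Efin G s).card = (Efin G C).card + (Efin G (s \ C)).card := by
          rw [hEeq, Finset.card_union_of_disjoint hEdisj]
        -- induction on the rest
        have hCpos : 1 ≤ C.card := Finset.card_pos.mpr ⟨a0, ha0C⟩
        have hrestcard : (s \ C).card ≤ n := by
          rw [Finset.card_sdiff_of_subset hCs]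
          omega
        have hIH := ih (s \ C) hrestcard ((m + 1) - μ) hrest
        -- assemble
        have hdivsum : μ / d + ((m + 1) - μ) / d ≤ (m + 1) / d := by
          have := Nat.add_div_le_add_div μ ((m + 1) - μ) d
          rwa [Nat.add_sub_cancel' hμν] at this
        have hmulsum : μ * Δ + ((m + 1) - μ) * Δ = (m + 1) * Δ := by
          rw [← Nat.add_mul, Nat.add_sub_cancel' hμν]
        have hfin : Δ / 2 * (μ / d) + Δ / 2 * (((m + 1) - μ) / d)
            ≤ Δ / 2 * ((m + 1) / d) := by
          rw [← Nat.mul_add]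
          exact Nat.mul_le_mul_left _ hdivsum
        omega

end CH

theorem chvatal_hanson_upper {V : Type*} [Fintype V] [DecidableEq V] (G : SimpleGraph V)
    [DecidableRel G.Adj] (ν Δ : ℕ) (hΔ1 : 1 ≤ Δ)
    (hν : ∀ M : Finset (Sym2 V), IsMatchingSet G M → M.card ≤ ν)
    (hd : ∀ v : V, G.degree v ≤ Δ) :
    G.edgeFinset.card ≤ ν * Δ + (Δ / 2) * (ν / ((Δ + 1) / 2)) := by
  classical
  have hmain := CH.main Δ hΔ1 hd (Fintype.card V) Finset.univ (by simp) ν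
    (fun M hM => hν M hM.1)
  have hE : CH.Efin G Finset.univ = G.edgeFinset := by
    rw [CH.Efin]
    apply Finset.filter_true_of_mem
    intro e he x hx
    exact Finset.mem_univ x
  rwa [hE] at hmain
end

section
/- Let k ≥ 2 and let G be a finite simple graph with no isolated vertices that contains no star S_k (a star with k edges), no matching of size k, and no disjoint union S_{k−1} ∪ K₂ (a star with k−1 edges together with a disjoint edge) as a subgraph. Then e(G) ≤ (k−1)². -/
def ContainsCopy {α β : Type*} (H : SimpleGraph α) (G : SimpleGraph β) : Prop :=
  ∃ f : α → β, Function.Injective f ∧ ∀ a b, H.Adj a b → G.Adj (f a) (f b)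

def kMatching (k : ℕ) : SimpleGraph (Fin (2 * k)) :=
  SimpleGraph.fromRel (fun a b => (a : ℕ) / 2 = (b : ℕ) / 2)

def starGraph (m : ℕ) : SimpleGraph (Fin 1 ⊕ Fin m) := completeBipartiteGraph (Fin 1) (Fin m)

def disjUnionGraph {α β : Type*} (G : SimpleGraph α) (H : SimpleGraph β) : SimpleGraph (α ⊕ β) :=
  SimpleGraph.fromRel (fun x y => match x, y with
    | Sum.inl a, Sum.inl b => G.Adj a b
    | Sum.inr a, Sum.inr b => H.Adj a b
    | _, _ => False)

namespace StarMatchAux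

variable {V : Type*} [Fintype V] [DecidableEq V]

/-- v is covered by the edge set M -/
def Cov (M : Finset (Sym2 V)) (v : V) : Prop := ∃ e ∈ M, v ∈ e

lemma edge_other {G : SimpleGraph V} {e : Sym2 V} (he : e ∈ G.edgeSet) {v : V} (hv : v ∈ e) :
    ∃ u, G.Adj v u ∧ e = s(v, u) := by
  induction e with
  | _ a b =>
    rw [Sym2.mem_iff] at hv
    rw [SimpleGraph.mem_edgeSet] at he
    rcases hv with rfl | rfl
    · exact ⟨b, he, rfl⟩
    · exact ⟨a, he.symm, Sym2.eq_swap⟩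

lemma matching_unique {G : SimpleGraph V} {M : Finset (Sym2 V)} (hM : IsMatchingSet G M)
    {e f : Sym2 V} (he : e ∈ M) (hf : f ∈ M) {v : V} (hve : v ∈ e) (hvf : v ∈ f) : e = f := by
  by_contra hne
  exact hM.2 e he f hf hne v hve hvf

lemma matching_subset {G : SimpleGraph V} {M N : Finset (Sym2 V)} (hM : IsMatchingSet G M)
    (hNM : N ⊆ M) : IsMatchingSet G N :=
  ⟨fun e he => hM.1 e (hNM he), fun e he f hf hne v hv => hM.2 e (hNM he) f (hNM hf) hne v hv⟩

lemma matching_mono {G G' : SimpleGraph V} (h : G ≤ G') {M : Finset (Sym2 V)}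
    (hM : IsMatchingSet G M) : IsMatchingSet G' M :=
  ⟨fun e he => SimpleGraph.edgeSet_mono h (hM.1 e he), hM.2⟩

lemma matching_insert {G : SimpleGraph V} {M : Finset (Sym2 V)} (hM : IsMatchingSet G M)
    {e : Sym2 V} (he : e ∈ G.edgeSet) (hdisj : ∀ v ∈ e, ¬ Cov M v) :
    IsMatchingSet G (insert e M) := by
  constructor
  · intro f hf
    rcases Finset.mem_insert.mp hf with rfl | hf
    · exact he
    · exact hM.1 f hf
  · intro f hf g hg hne v hvf hvg
    rcases Finset.mem_insert.mp hf with rfl | hf2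
    · rcases Finset.mem_insert.mp hg with rfl | hg2
      · exact hne rfl
      · exact hdisj v hvf ⟨g, hg2, hvg⟩
    · rcases Finset.mem_insert.mp hg with rfl | hg2
      · exact hdisj v hvg ⟨f, hf2, hvf⟩
      · exact hM.2 f hf2 g hg2 hne v hvf hvg

lemma not_cov_erase {G : SimpleGraph V} {M : Finset (Sym2 V)} (hM : IsMatchingSet G M)
    {e : Sym2 V} (he : e ∈ M) {v : V} (hv : v ∈ e) : ¬ Cov (M.erase e) v := by
  rintro ⟨f, hf, hvf⟩
  have hfM := Finset.mem_of_mem_erase hf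
  have := matching_unique hM he hfM hv hvf
  exact (Finset.ne_of_mem_erase hf) this.symm

/-- The key exchange lemma, proved by strong induction on `M.card`. -/
lemma exchange {G : SimpleGraph V} : ∀ n (M M' : Finset (Sym2 V)), M.card ≤ n →
    IsMatchingSet G M → IsMatchingSet G M' → ∀ w : V, Cov M w → ¬ Cov M' w →
    (∃ N, IsMatchingSet G N ∧ N.card = M'.card + 1 ∧
      ∀ v, Cov N v → Cov M v ∨ Cov M' v) ∨
    (∃ N x, IsMatchingSet G N ∧ N.card = M.card ∧ ¬ Cov N w ∧
      (∀ v, Cov N v → (Cov M v ∧ v ≠ w) ∨ v = x) ∧ ¬ Cov M x ∧ Cov M' x) := by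
  intro n
  induction n with
  | zero =>
    intro M M' hle _ _ w hw _
    obtain ⟨e, he, _⟩ := hw
    simp [Finset.card_eq_zero.mp (Nat.le_zero.mp hle)] at he
  | succ n ih =>
    intro M M' hle hM hM' w hw hw'
    obtain ⟨e₀, he₀M, hwe₀⟩ := hw
    obtain ⟨x₁, hadj₀, he₀⟩ := edge_other (hM.1 e₀ he₀M) hwe₀
    have hx₁w : x₁ ≠ w := fun h => G.irrefl (h ▸ hadj₀)
    have hx₁e₀ : x₁ ∈ e₀ := by rw [he₀]; exact Sym2.mem_mk_right w x₁
    by_cases hx₁ : Cov M' x₁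
    · -- x₁ is covered by M' via edge f
      obtain ⟨f, hfM', hx₁f⟩ := hx₁
      obtain ⟨x₂, hadj₁, hf⟩ := edge_other (hM'.1 f hfM') hx₁f
      have hx₂f : x₂ ∈ f := by rw [hf]; exact Sym2.mem_mk_right x₁ x₂
      have hx₂w : x₂ ≠ w := by rintro rfl; exact hw' ⟨f, hfM', hx₂f⟩
      have hx₂x₁ : x₂ ≠ x₁ := fun h => G.irrefl (h ▸ hadj₁)
      have hwf : w ∉ f := by
        intro hwf; exact hw' ⟨f, hfM', hwf⟩
      by_cases hx₂ : Cov M x₂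
      · -- recurse on M.erase e₀, M'.erase f, x₂
        obtain ⟨g, hgM, hx₂g⟩ := hx₂
        have hge₀ : g ≠ e₀ := by
          rintro rfl
          rw [he₀, Sym2.mem_iff] at hx₂g
          rcases hx₂g with rfl | rfl
          · exact hx₂w rfl
          · exact hx₂x₁ rfl
        have hcov2 : Cov (M.erase e₀) x₂ := ⟨g, Finset.mem_erase.mpr ⟨hge₀, hgM⟩, hx₂g⟩
        have hcov2' : ¬ Cov (M'.erase f) x₂ := not_cov_erase hM' hfM' hx₂f
        have hcard : (M.erase e₀).card ≤ n := by
          have := Finset.card_erase_of_mem he₀M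
          omega
        have hMe : IsMatchingSet G (M.erase e₀) := matching_subset hM (fun _ hx => Finset.mem_of_mem_erase hx)
        have hM'f : IsMatchingSet G (M'.erase f) := matching_subset hM' (fun _ hx => Finset.mem_of_mem_erase hx)
        -- some useful non-coverage facts
        have hwMe : ¬ Cov (M.erase e₀) w := not_cov_erase hM he₀M hwe₀
        have hwM'f : ¬ Cov (M'.erase f) w := fun ⟨g', hg', hwg'⟩ =>
          hw' ⟨g', Finset.mem_of_mem_erase hg', hwg'⟩
        have hx₁Me : ¬ Cov (M.erase e₀) x₁ := not_cov_erase hM he₀M hx₁e₀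
        have hx₁M'f : ¬ Cov (M'.erase f) x₁ := not_cov_erase hM' hfM' hx₁f
        rcases ih (M.erase e₀) (M'.erase f) hcard hMe hM'f x₂ hcov2 hcov2' with
          ⟨N₂, hN₂, hcardN₂, hcovN₂⟩ | ⟨N₂, x', hN₂, hcardN₂, hx₂N₂, hcovN₂, hx'M₂, hx'M₂'⟩
        · -- case (i): augmenting; add e₀ back
          left
          have hwN₂ : ¬ Cov N₂ w := fun h => (hcovN₂ w h).elim hwMe hwM'f
          have hx₁N₂ : ¬ Cov N₂ x₁ := fun h => (hcovN₂ x₁ h).elim hx₁Me hx₁M'f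
          have he₀N₂ : e₀ ∉ N₂ := fun h => hwN₂ ⟨e₀, h, hwe₀⟩
          refine ⟨insert e₀ N₂, matching_insert hN₂ (hM.1 e₀ he₀M) ?_, ?_, ?_⟩
          · intro v hv
            rw [he₀, Sym2.mem_iff] at hv
            rcases hv with rfl | rfl
            · exact hwN₂
            · exact hx₁N₂
          · rw [Finset.card_insert_of_notMem he₀N₂, hcardN₂,
              Finset.card_erase_of_mem hfM']
            have : M'.card ≠ 0 := fun h => by simp [Finset.card_eq_zero.mp h] at hfM'
            omega
          · intro v ⟨g', hg', hvg'⟩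
            rcases Finset.mem_insert.mp hg' with rfl | hg'
            · exact Or.inl ⟨_, he₀M, hvg'⟩
            · rcases hcovN₂ v ⟨g', hg', hvg'⟩ with ⟨g'', hg'', h⟩ | ⟨g'', hg'', h⟩
              · exact Or.inl ⟨g'', Finset.mem_of_mem_erase hg'', h⟩
              · exact Or.inr ⟨g'', Finset.mem_of_mem_erase hg'', h⟩
        · -- case (ii): add f back
          right
          have hx'x₁ : x' ≠ x₁ := fun h => hx₁M'f (h ▸ hx'M₂')
          have hx'w : x' ≠ w := by
            rintro rfl
            obtain ⟨g', hg', h⟩ := hx'M₂'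
            exact hw' ⟨g', Finset.mem_of_mem_erase hg', h⟩
          have hx₁N₂ : ¬ Cov N₂ x₁ := by
            intro h
            rcases hcovN₂ x₁ h with ⟨h1, _⟩ | h1
            · exact hx₁Me h1
            · exact hx'x₁ h1.symm
          have hfN₂ : f ∉ N₂ := fun h => hx₂N₂ ⟨f, h, hx₂f⟩
          refine ⟨insert f N₂, x', matching_insert hN₂ (hM'.1 f hfM') ?_, ?_, ?_, ?_, ?_, ?_⟩
          · intro v hv
            rw [hf, Sym2.mem_iff] at hv
            rcases hv with rfl | rfl
            · exact hx₁N₂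
            · exact hx₂N₂
          · rw [Finset.card_insert_of_notMem hfN₂, hcardN₂, Finset.card_erase_of_mem he₀M]
            have : M.card ≠ 0 := fun h => by simp [Finset.card_eq_zero.mp h] at he₀M
            omega
          · rintro ⟨g', hg', hwg'⟩
            rcases Finset.mem_insert.mp hg' with rfl | hg'
            · exact hwf hwg'
            · rcases hcovN₂ w ⟨g', hg', hwg'⟩ with ⟨h1, _⟩ | h1
              · exact hwMe h1
              · exact hx'w h1.symm
          · intro v ⟨g', hg', hvg'⟩
            rcases Finset.mem_insert.mp hg' with rfl | hg'
            · rw [hf, Sym2.mem_iff] at hvg'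
              rcases hvg' with rfl | rfl
              · exact Or.inl ⟨⟨e₀, he₀M, hx₁e₀⟩, hx₁w⟩
              · exact Or.inl ⟨⟨g, hgM, hx₂g⟩, hx₂w⟩
            · rcases hcovN₂ v ⟨g', hg', hvg'⟩ with ⟨⟨g'', hg'', h⟩, _⟩ | h1
              · refine Or.inl ⟨⟨g'', Finset.mem_of_mem_erase hg'', h⟩, ?_⟩
                rintro rfl
                exact hwMe ⟨g'', hg'', h⟩
              · exact Or.inr h1
          · -- x' not covered by M
            rintro ⟨g', hg', hx'g'⟩
            have hge₀' : g' = e₀ := by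
              by_contra hne
              exact hx'M₂ ⟨g', Finset.mem_erase.mpr ⟨hne, hg'⟩, hx'g'⟩
            subst hge₀'
            rw [he₀, Sym2.mem_iff] at hx'g'
            rcases hx'g' with rfl | rfl
            · exact hx'w rfl
            · exact hx'x₁ rfl
          · obtain ⟨g', hg', h⟩ := hx'M₂'
            exact ⟨g', Finset.mem_of_mem_erase hg', h⟩
      · -- base case (ii): N := insert f (M.erase e₀)
        right
        have hx₁Me : ¬ Cov (M.erase e₀) x₁ := not_cov_erase hM he₀M hx₁e₀
        have hx₂Me : ¬ Cov (M.erase e₀) x₂ := fun ⟨g', hg', h⟩ =>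
          hx₂ ⟨g', Finset.mem_of_mem_erase hg', h⟩
        have hwMe : ¬ Cov (M.erase e₀) w := not_cov_erase hM he₀M hwe₀
        have hfMe : f ∉ M.erase e₀ := fun h => hx₂Me ⟨f, h, hx₂f⟩
        refine ⟨insert f (M.erase e₀), x₂,
          matching_insert (matching_subset hM (fun _ hx => Finset.mem_of_mem_erase hx) :
            IsMatchingSet G (M.erase e₀)) (hM'.1 f hfM') ?_,
          ?_, ?_, ?_, hx₂, ⟨f, hfM', hx₂f⟩⟩
        · intro v hv
          rw [hf, Sym2.mem_iff] at hv
          rcases hv with rfl | rfl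
          · exact hx₁Me
          · exact hx₂Me
        · rw [Finset.card_insert_of_notMem hfMe, Finset.card_erase_of_mem he₀M]
          have : M.card ≠ 0 := fun h => by simp [Finset.card_eq_zero.mp h] at he₀M
          omega
        · rintro ⟨g', hg', hwg'⟩
          rcases Finset.mem_insert.mp hg' with rfl | hg'
          · exact hwf hwg'
          · exact hwMe ⟨g', hg', hwg'⟩
        · intro v ⟨g', hg', hvg'⟩
          rcases Finset.mem_insert.mp hg' with rfl | hg'
          · rw [hf, Sym2.mem_iff] at hvg'
            rcases hvg' with rfl | rfl
            · exact Or.inl ⟨⟨e₀, he₀M, hx₁e₀⟩, hx₁w⟩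
            · exact Or.inr rfl
          · have hvM : Cov M v := ⟨g', Finset.mem_of_mem_erase hg', hvg'⟩
            have hvw : v ≠ w := by
              rintro rfl
              exact (not_cov_erase hM he₀M hwe₀) ⟨g', hg', hvg'⟩
            exact Or.inl ⟨hvM, hvw⟩
    · -- base case (i): N := insert e₀ M'
      left
      have he₀M' : e₀ ∉ M' := fun h => hw' ⟨e₀, h, hwe₀⟩
      refine ⟨insert e₀ M', matching_insert hM' (hM.1 e₀ he₀M) ?_, ?_, ?_⟩
      · intro v hv
        rw [he₀, Sym2.mem_iff] at hv
        rcases hv with rfl | rfl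
        · exact hw'
        · exact hx₁
      · rw [Finset.card_insert_of_notMem he₀M']
      · intro v ⟨g', hg', hvg'⟩
        rcases Finset.mem_insert.mp hg' with rfl | hg'
        · exact Or.inl ⟨_, he₀M, hvg'⟩
        · exact Or.inr ⟨g', hg', hvg'⟩

end StarMatchAux

namespace StarMatchAux

open Finset

variable {V : Type*} [Fintype V] [DecidableEq V]

/-- matching number -/
noncomputable def nu (G : SimpleGraph V) : ℕ :=
  letI := Classical.dec
  ((Finset.univ : Finset (Finset (Sym2 V))).filter fun M => IsMatchingSet G M).sup Finset.card

lemma empty_matching (G : SimpleGraph V) : IsMatchingSet G (∅ : Finset (Sym2 V)) :=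
  ⟨fun e he => absurd he (Finset.notMem_empty e), fun e he => absurd he (Finset.notMem_empty e)⟩

lemma card_le_nu {G : SimpleGraph V} {M : Finset (Sym2 V)} (hM : IsMatchingSet G M) :
    M.card ≤ nu G := by
  classical
  exact Finset.le_sup (f := Finset.card)
    (Finset.mem_filter.mpr ⟨Finset.mem_univ M, hM⟩)

lemma exists_nu (G : SimpleGraph V) : ∃ M, IsMatchingSet G M ∧ M.card = nu G := by
  classical
  obtain ⟨M, hMmem, hMc⟩ := Finset.exists_mem_eq_sup
    ((Finset.univ : Finset (Finset (Sym2 V))).filter fun M => IsMatchingSet G M)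
    ⟨∅, Finset.mem_filter.mpr ⟨Finset.mem_univ _, empty_matching G⟩⟩ Finset.card
  exact ⟨M, (Finset.mem_filter.mp hMmem).2, by rw [nu]; convert hMc.symm⟩

lemma nu_mono {G G' : SimpleGraph V} (h : G ≤ G') : nu G ≤ nu G' := by
  obtain ⟨M, hM, hMc⟩ := exists_nu G
  rw [← hMc]
  exact card_le_nu (matching_mono h hM)

/-- Delete all edges at a vertex. -/
def Gdel (G : SimpleGraph V) (v : V) : SimpleGraph V where
  Adj x y := G.Adj x y ∧ x ≠ v ∧ y ≠ v
  symm := ⟨fun x y ⟨h, hx, hy⟩ => ⟨h.symm, hy, hx⟩⟩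
  loopless := ⟨fun x ⟨h, _, _⟩ => G.irrefl h⟩

instance GdelDec (G : SimpleGraph V) [DecidableRel G.Adj] (v : V) :
    DecidableRel (Gdel G v).Adj :=
  fun x y => inferInstanceAs (Decidable (G.Adj x y ∧ x ≠ v ∧ y ≠ v))

lemma Gdel_le (G : SimpleGraph V) (v : V) : Gdel G v ≤ G := fun _ _ h => h.1

lemma Gdel_not_cov {G : SimpleGraph V} {v : V} {M : Finset (Sym2 V)}
    (hM : IsMatchingSet (Gdel G v) M) : ¬ Cov M v := by
  rintro ⟨e, heM, hve⟩
  obtain ⟨u, hadj, -⟩ := edge_other (hM.1 e heM) hve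
  exact hadj.2.1 rfl

lemma Gdel_edgeFinset (G : SimpleGraph V) [DecidableRel G.Adj] (v : V) :
    (Gdel G v).edgeFinset = G.edgeFinset \ G.incidenceFinset v := by
  ext e
  induction e with
  | _ a b =>
    simp only [SimpleGraph.mem_edgeFinset, Finset.mem_sdiff, SimpleGraph.mem_edgeSet,
      SimpleGraph.mem_incidenceFinset, SimpleGraph.mk'_mem_incidenceSet_iff, Sym2.mem_iff]
    constructor
    · rintro ⟨hadj, ha, hb⟩
      exact ⟨hadj, fun ⟨_, h⟩ => by rcases h with rfl | rfl <;> simp_all⟩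
    · rintro ⟨hadj, h⟩
      refine ⟨hadj, ?_, ?_⟩ <;> rintro rfl
      · exact h ⟨hadj, Or.inl rfl⟩
      · exact h ⟨hadj, Or.inr rfl⟩

lemma Gdel_card (G : SimpleGraph V) [DecidableRel G.Adj] (v : V) :
    (Gdel G v).edgeFinset.card + G.degree v = G.edgeFinset.card := by
  rw [Gdel_edgeFinset, ← SimpleGraph.card_incidenceFinset_eq_degree]
  rw [Finset.card_sdiff_add_card_eq_card]
  intro e he
  rw [SimpleGraph.mem_incidenceFinset] at he
  exact SimpleGraph.mem_edgeFinset.mpr he.1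

/-- Restriction of a graph to a finset of vertices. -/
def Gres (G : SimpleGraph V) (A : Finset V) : SimpleGraph V where
  Adj x y := G.Adj x y ∧ x ∈ A ∧ y ∈ A
  symm := ⟨fun x y ⟨h, hx, hy⟩ => ⟨h.symm, hy, hx⟩⟩
  loopless := ⟨fun x ⟨h, _, _⟩ => G.irrefl h⟩

instance GresDec (G : SimpleGraph V) [DecidableRel G.Adj] (A : Finset V) :
    DecidableRel (Gres G A).Adj :=
  fun x y => inferInstanceAs (Decidable (G.Adj x y ∧ x ∈ A ∧ y ∈ A))

lemma Gres_le (G : SimpleGraph V) (A : Finset V) : Gres G A ≤ G := fun _ _ h => h.1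

lemma Gres_mem {G : SimpleGraph V} {A : Finset V} {e : Sym2 V}
    (he : e ∈ (Gres G A).edgeSet) {v : V} (hv : v ∈ e) : v ∈ A := by
  obtain ⟨u, hadj, -⟩ := edge_other he hv
  exact hadj.2.1

lemma degree_mono {G H : SimpleGraph V} [DecidableRel G.Adj] [DecidableRel H.Adj]
    (h : G ≤ H) (v : V) : G.degree v ≤ H.degree v := by
  rw [← SimpleGraph.card_neighborFinset_eq_degree, ← SimpleGraph.card_neighborFinset_eq_degree]
  apply Finset.card_le_card
  intro u hu
  rw [SimpleGraph.mem_neighborFinset] at hu ⊢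
  exact h hu

/-- support of G -/
def supp (G : SimpleGraph V) [DecidableRel G.Adj] : Finset V :=
  Finset.univ.filter fun v => 0 < G.degree v

lemma mem_supp_of_adj {G : SimpleGraph V} [DecidableRel G.Adj] {u v : V} (h : G.Adj u v) :
    u ∈ supp G := by
  rw [supp, Finset.mem_filter]
  refine ⟨Finset.mem_univ _, Finset.card_pos.mpr ⟨v, ?_⟩⟩
  rwa [SimpleGraph.mem_neighborFinset]

end StarMatchAux

namespace StarMatchAux

open Finset

variable {V : Type*} [Fintype V] [DecidableEq V]

lemma exists_mem_sym2 (e : Sym2 V) : ∃ a, a ∈ e := by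
  induction e with
  | _ a b => exact ⟨a, Sym2.mem_mk_left a b⟩

lemma card_mem_sym2 (e : Sym2 V) : (Finset.univ.filter (· ∈ e)).card ≤ 2 := by
  induction e with
  | _ a b =>
    have hsub : Finset.univ.filter (· ∈ s(a, b)) ⊆ {a, b} := by
      intro x hx
      have := (Finset.mem_filter.mp hx).2
      rw [Sym2.mem_iff] at this
      simpa using this
    refine le_trans (Finset.card_le_card hsub) ?_
    exact le_trans (Finset.card_insert_le _ _) (by simp)

lemma lemB (d : ℕ) : ∀ (n : ℕ) (G : SimpleGraph V) (_ : DecidableRel G.Adj),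
    G.edgeFinset.card ≤ n → (∀ v, G.degree v ≤ d) →
    G.edgeFinset.card ≤ nu G * (d + 1) := by
  intro n
  induction n with
  | zero => intro G inst hle _; omega
  | succ n ih =>
    intro G inst hle hd
    by_cases hcrit : ∃ v, nu (Gdel G v) < nu G
    · -- an essential vertex
      obtain ⟨v, hv⟩ := hcrit
      have hdegv : 0 < G.degree v := by
        by_contra h0
        have h0 : G.degree v = 0 := by omega
        have hGeq : Gdel G v = G := by
          have hne : G.neighborFinset v = ∅ := Finset.card_eq_zero.mp
            (by rw [SimpleGraph.card_neighborFinset_eq_degree]; omega)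
          ext x y
          constructor
          · exact fun h => h.1
          · intro h
            refine ⟨h, fun heq => ?_, fun heq => ?_⟩
            · rw [heq] at h
              have : y ∈ G.neighborFinset v := (SimpleGraph.mem_neighborFinset _ _ _).mpr h
              rw [hne] at this
              simp at this
            · rw [heq] at h
              have : x ∈ G.neighborFinset v :=
                (SimpleGraph.mem_neighborFinset _ _ _).mpr h.symm
              rw [hne] at this
              simp at this
        rw [hGeq] at hv
        omega
      have hcard := Gdel_card G v
      have hihle : (Gdel G v).edgeFinset.card ≤ n := by omega
      have hdd : ∀ u, (Gdel G v).degree u ≤ d :=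
        fun u => le_trans (degree_mono (Gdel_le G v) u) (hd u)
      have hrec := ih (Gdel G v) (GdelDec G v) hihle hdd
      obtain ⟨b, hb⟩ : ∃ b, nu G = b + 1 := ⟨nu G - 1, by omega⟩
      have hnub : nu (Gdel G v) ≤ b := by omega
      have h1 : (Gdel G v).edgeFinset.card ≤ b * (d + 1) :=
        le_trans hrec (Nat.mul_le_mul_right _ hnub)
      have h2 : (b + 1) * (d + 1) = b * (d + 1) + d + 1 := by ring
      have hdv : G.degree v ≤ d := hd v
      rw [hb, h2]
      omega
    · push_neg at hcrit
      by_cases hconn : ∀ u w, u ∈ supp G → w ∈ supp G → G.Reachable u w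
      · -- "connected", all vertices inessential: Gallai-type bound
        obtain ⟨M, hM, hMcard⟩ := exists_nu G
        have claim : ∀ (M₀ : Finset (Sym2 V)) (u₀ v₀ : V), IsMatchingSet G M₀ →
            M₀.card = nu G → u₀ ∈ supp G → v₀ ∈ supp G →
            ¬ Cov M₀ u₀ → ¬ Cov M₀ v₀ → u₀ = v₀ := by
          by_contra hbad
          push_neg at hbad
          obtain ⟨M₁, u₁, v₁, hM₁, hc₁, hu₁, hv₁, hcu₁, hcv₁, hne₁⟩ := hbad
          classical
          have hex : ∃ m, ∃ (M₀ : Finset (Sym2 V)) (u₀ v₀ : V),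
              IsMatchingSet G M₀ ∧ M₀.card = nu G ∧ u₀ ∈ supp G ∧ v₀ ∈ supp G ∧
              ¬ Cov M₀ u₀ ∧ ¬ Cov M₀ v₀ ∧ u₀ ≠ v₀ ∧ G.dist u₀ v₀ = m :=
            ⟨_, M₁, u₁, v₁, hM₁, hc₁, hu₁, hv₁, hcu₁, hcv₁, hne₁, rfl⟩
          obtain ⟨M₀, u₀, v₀, hM₀, hc₀, hu₀, hv₀, hcu₀, hcv₀, hne₀, hdist⟩ := Nat.find_spec hex
          set ℓ := Nat.find hex with hℓdef
          have hmin := fun m (hm : m < ℓ) => Nat.find_min hex hm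
          have hreach : G.Reachable u₀ v₀ := hconn _ _ hu₀ hv₀
          have hℓpos : 0 < ℓ := hdist ▸ hreach.pos_dist_of_ne hne₀
          obtain ⟨pw, hpw⟩ := hreach.exists_walk_length_eq_dist
          rw [hdist] at hpw
          rcases Nat.lt_or_ge ℓ 2 with hℓ1 | hℓ2
          · -- distance 1 : u₀v₀ is an edge, augment M₀
            have hadj : G.Adj u₀ v₀ := by
              have hℓ1' : ℓ = 1 := by omega
              rw [hℓ1'] at hpw
              cases pw with
              | nil => simp at hpw
              | cons h q =>
                cases q with
                | nil => exact h
                | cons h' q' => simp [SimpleGraph.Walk.length_cons] at hpw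
            have hins : IsMatchingSet G (insert s(u₀, v₀) M₀) := by
              refine matching_insert hM₀ (by rwa [SimpleGraph.mem_edgeSet]) ?_
              intro z hz
              rw [Sym2.mem_iff] at hz
              rcases hz with rfl | rfl
              · exact hcu₀
              · exact hcv₀
            have hnotmem : s(u₀, v₀) ∉ M₀ := fun h =>
              hcu₀ ⟨_, h, Sym2.mem_mk_left _ _⟩
            have := card_le_nu hins
            rw [Finset.card_insert_of_notMem hnotmem, hc₀] at this
            omega
          · -- distance ≥ 2
            obtain ⟨w₀, hadjw, q, hq⟩ : ∃ w₀, G.Adj u₀ w₀ ∧ ∃ q : G.Walk w₀ v₀,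
                q.length + 1 = ℓ := by
              cases pw with
              | nil => simp at hpw; omega
              | cons h q =>
                exact ⟨_, h, q, by simpa [SimpleGraph.Walk.length_cons] using hpw⟩
            have hw₀supp : w₀ ∈ supp G := mem_supp_of_adj hadjw.symm
            have hu₀w₀ : u₀ ≠ w₀ := hadjw.ne
            have hdistuw : G.dist u₀ w₀ ≤ 1 := by
              have := SimpleGraph.dist_le hadjw.toWalk
              simpa using this
            have hcovw : Cov M₀ w₀ := by
              by_contra hnc
              exact hmin (G.dist u₀ w₀) (by omega)
                ⟨M₀, u₀, w₀, hM₀, hc₀, hu₀, hw₀supp, hcu₀, hnc, hu₀w₀, rfl⟩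
            obtain ⟨M₂, hM₂, hM₂card⟩ := exists_nu (Gdel G w₀)
            have hM₂G : IsMatchingSet G M₂ := matching_mono (Gdel_le G w₀) hM₂
            have hM₂cov : ¬ Cov M₂ w₀ := Gdel_not_cov hM₂
            have hM₂c : M₂.card = nu G := by
              have h1 : nu (Gdel G w₀) ≤ nu G := nu_mono (Gdel_le G w₀)
              have h2 := hcrit w₀
              omega
            rcases exchange M₀.card M₀ M₂ le_rfl hM₀ hM₂G w₀ hcovw hM₂cov with
              ⟨N, hN, hNc, _⟩ | ⟨N, x, hN, hNc, hNw, hNcov, hxM, hxM'⟩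
            · have := card_le_nu hN
              rw [hNc, hM₂c] at this
              omega
            · by_cases hux : u₀ = x
              · have hvx : v₀ ≠ x := fun h => hne₀ (hux.trans h.symm)
                have hNv₀ : ¬ Cov N v₀ := by
                  intro hc
                  rcases hNcov v₀ hc with ⟨h1, _⟩ | h1
                  · exact hcv₀ h1
                  · exact hvx h1
                have hw₀v₀ : w₀ ≠ v₀ := by
                  rintro rfl
                  omega
                refine hmin (G.dist w₀ v₀) ?_
                  ⟨N, w₀, v₀, hN, hNc.trans hc₀, hw₀supp, hv₀, hNw, hNv₀, hw₀v₀, rfl⟩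
                have := SimpleGraph.dist_le q
                omega
              · have hNu₀ : ¬ Cov N u₀ := by
                  intro hc
                  rcases hNcov u₀ hc with ⟨h1, _⟩ | h1
                  · exact hcu₀ h1
                  · exact hux h1
                exact hmin (G.dist u₀ w₀) (by omega)
                  ⟨N, u₀, w₀, hN, hNc.trans hc₀, hu₀, hw₀supp, hNu₀, hNw, hu₀w₀, rfl⟩
        -- now bound the support
        classical
        set W : Finset V := M.biUnion (fun e => Finset.univ.filter (· ∈ e)) with hWdef
        have hWcard : W.card ≤ 2 * M.card := by
          refine le_trans Finset.card_biUnion_le (le_trans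
            (Finset.sum_le_card_nsmul _ _ 2 (fun e _ => card_mem_sym2 e)) ?_)
          simp [mul_comm]
        have hcovW : ∀ z, Cov M z → z ∈ W := by
          rintro z ⟨e, heM, hze⟩
          exact Finset.mem_biUnion.mpr ⟨e, heM, Finset.mem_filter.mpr ⟨Finset.mem_univ _, hze⟩⟩
        have hsupp : (supp G).card ≤ 2 * nu G + 1 := by
          by_cases hex : ∃ z ∈ supp G, ¬ Cov M z
          · obtain ⟨z, hz, hcz⟩ := hex
            have hsub : supp G ⊆ insert z W := by
              intro y hy
              by_cases hcy : Cov M y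
              · exact Finset.mem_insert_of_mem (hcovW y hcy)
              · rw [claim M y z hM hMcard hy hz hcy hcz]
                exact Finset.mem_insert_self _ _
            calc (supp G).card ≤ (insert z W).card := Finset.card_le_card hsub
              _ ≤ W.card + 1 := Finset.card_insert_le _ _
              _ ≤ 2 * M.card + 1 := by omega
              _ = 2 * nu G + 1 := by rw [hMcard]
          · push_neg at hex
            have hsub : supp G ⊆ W := fun y hy => hcovW y (hex y hy)
            calc (supp G).card ≤ W.card := Finset.card_le_card hsub
              _ ≤ 2 * M.card := hWcard
              _ ≤ 2 * nu G + 1 := by rw [hMcard]; omega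
        -- counting
        have hsum : ∑ v, G.degree v = 2 * G.edgeFinset.card :=
          G.sum_degrees_eq_twice_card_edges
        have hsum2 : ∑ v ∈ supp G, G.degree v = ∑ v, G.degree v := by
          apply Finset.sum_subset (Finset.subset_univ _)
          intro x _ hx
          rw [supp, Finset.mem_filter] at hx
          push_neg at hx
          have := hx (Finset.mem_univ x)
          omega
        have hdegb : ∀ v ∈ supp G, G.degree v ≤ min d (2 * nu G) := by
          intro v hv
          refine le_min (hd v) ?_
          have h1 : G.neighborFinset v ⊆ (supp G).erase v := by
            intro u hu
            rw [SimpleGraph.mem_neighborFinset] at hu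
            exact Finset.mem_erase.mpr ⟨hu.ne', mem_supp_of_adj hu.symm⟩
          have h2 := Finset.card_le_card h1
          rw [Finset.card_erase_of_mem hv, SimpleGraph.card_neighborFinset_eq_degree] at h2
          omega
        have hsum3 : ∑ v ∈ supp G, G.degree v ≤ (supp G).card * min d (2 * nu G) := by
          have := Finset.sum_le_card_nsmul (supp G) (fun v => G.degree v) _ hdegb
          simpa [smul_eq_mul] using this
        have hfinal : 2 * G.edgeFinset.card ≤ 2 * (nu G * (d + 1)) := by
          have hA : (supp G).card * min d (2 * nu G) ≤
              (2 * nu G + 1) * min d (2 * nu G) :=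
            Nat.mul_le_mul_right _ hsupp
          have hB : (2 * nu G + 1) * min d (2 * nu G) =
              2 * nu G * min d (2 * nu G) + min d (2 * nu G) := by ring
          have hC : 2 * nu G * min d (2 * nu G) ≤ 2 * nu G * d :=
            Nat.mul_le_mul_left _ (min_le_left _ _)
          have hD : min d (2 * nu G) ≤ 2 * nu G := min_le_right _ _
          have hE : 2 * nu G * d + 2 * nu G = 2 * (nu G * (d + 1)) := by ring
          omega
        omega
      · -- disconnected support: split
        push_neg at hconn
        obtain ⟨u, w, hu, hw, hnr⟩ := hconn
        classical
        set A : Finset V := Finset.univ.filter (fun x => G.Reachable u x) with hAdef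
        have huA : u ∈ A := Finset.mem_filter.mpr ⟨Finset.mem_univ _, SimpleGraph.Reachable.refl u⟩
        have hwA : w ∉ A := fun h => hnr (Finset.mem_filter.mp h).2
        have hAadj : ∀ {x y}, G.Adj x y → x ∈ A → y ∈ A := by
          intro x y hxy hx
          rw [hAdef, Finset.mem_filter] at hx ⊢
          exact ⟨Finset.mem_univ _, hx.2.trans hxy.reachable⟩
        have hpart : G.edgeFinset = (Gres G A).edgeFinset ∪ (Gres G Aᶜ).edgeFinset := by
          ext e
          induction e with
          | _ a b =>
            simp only [SimpleGraph.mem_edgeFinset, Finset.mem_union, SimpleGraph.mem_edgeSet]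
            constructor
            · intro hadj
              by_cases ha : a ∈ A
              · exact Or.inl ⟨hadj, ha, hAadj hadj ha⟩
              · refine Or.inr ⟨hadj, Finset.mem_compl.mpr ha, Finset.mem_compl.mpr fun hb => ?_⟩
                exact ha (hAadj hadj.symm hb)
            · rintro (h | h) <;> exact h.1
        have hdisjE : Disjoint (Gres G A).edgeFinset (Gres G Aᶜ).edgeFinset := by
          rw [Finset.disjoint_left]
          intro e heA heB
          obtain ⟨a, ha⟩ := exists_mem_sym2 e
          have h1 := Gres_mem (SimpleGraph.mem_edgeFinset.mp heA) ha
          have h2 := Gres_mem (SimpleGraph.mem_edgeFinset.mp heB) ha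
          exact (Finset.mem_compl.mp h2) h1
        have hcardsum : G.edgeFinset.card =
            (Gres G A).edgeFinset.card + (Gres G Aᶜ).edgeFinset.card := by
          rw [hpart, Finset.card_union_of_disjoint hdisjE]
        -- both sides nonempty
        obtain ⟨zu, hzu⟩ : ∃ z, G.Adj u z := by
          rw [supp, Finset.mem_filter] at hu
          obtain ⟨z, hz⟩ := Finset.card_pos.mp hu.2
          exact ⟨z, (SimpleGraph.mem_neighborFinset _ _ _).mp hz⟩
        obtain ⟨zw, hzw⟩ : ∃ z, G.Adj w z := by
          rw [supp, Finset.mem_filter] at hw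
          obtain ⟨z, hz⟩ := Finset.card_pos.mp hw.2
          exact ⟨z, (SimpleGraph.mem_neighborFinset _ _ _).mp hz⟩
        have heA : 0 < (Gres G A).edgeFinset.card := by
          refine Finset.card_pos.mpr ⟨s(u, zu), SimpleGraph.mem_edgeFinset.mpr ?_⟩
          exact ⟨hzu, huA, hAadj hzu huA⟩
        have heB : 0 < (Gres G Aᶜ).edgeFinset.card := by
          refine Finset.card_pos.mpr ⟨s(w, zw), SimpleGraph.mem_edgeFinset.mpr ?_⟩
          refine ⟨hzw, Finset.mem_compl.mpr hwA, Finset.mem_compl.mpr fun hz => ?_⟩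
          exact hwA (hAadj hzw.symm hz)
        have hrecA := ih (Gres G A) (GresDec G A) (by omega)
          (fun v => le_trans (degree_mono (Gres_le G A) v) (hd v))
        have hrecB := ih (Gres G Aᶜ) (GresDec G Aᶜ) (by omega)
          (fun v => le_trans (degree_mono (Gres_le G Aᶜ) v) (hd v))
        -- nu adds up
        obtain ⟨MA, hMA, hMAc⟩ := exists_nu (Gres G A)
        obtain ⟨MB, hMB, hMBc⟩ := exists_nu (Gres G Aᶜ)
        have hMdisj : Disjoint MA MB := by
          rw [Finset.disjoint_left]
          intro e heA' heB'
          obtain ⟨a, ha⟩ := exists_mem_sym2 e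
          exact Finset.mem_compl.mp (Gres_mem (hMB.1 e heB') ha) (Gres_mem (hMA.1 e heA') ha)
        have hunion : IsMatchingSet G (MA ∪ MB) := by
          constructor
          · intro e he
            rcases Finset.mem_union.mp he with h | h
            · exact SimpleGraph.edgeSet_mono (Gres_le G A) (hMA.1 e h)
            · exact SimpleGraph.edgeSet_mono (Gres_le G Aᶜ) (hMB.1 e h)
          · intro e he f hf hne z hze hzf
            rcases Finset.mem_union.mp he with h1 | h1 <;>
              rcases Finset.mem_union.mp hf with h2 | h2
            · exact hMA.2 e h1 f h2 hne z hze hzf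
            · exact Finset.mem_compl.mp (Gres_mem (hMB.1 f h2) hzf)
                (Gres_mem (hMA.1 e h1) hze)
            · exact Finset.mem_compl.mp (Gres_mem (hMB.1 e h1) hze)
                (Gres_mem (hMA.1 f h2) hzf)
            · exact hMB.2 e h1 f h2 hne z hze hzf
        have hnusum : nu (Gres G A) + nu (Gres G Aᶜ) ≤ nu G := by
          have := card_le_nu hunion
          rw [Finset.card_union_of_disjoint hMdisj, hMAc, hMBc] at this
          exact this
        calc G.edgeFinset.card
            = (Gres G A).edgeFinset.card + (Gres G Aᶜ).edgeFinset.card := hcardsum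
          _ ≤ nu (Gres G A) * (d + 1) + nu (Gres G Aᶜ) * (d + 1) := by
              exact Nat.add_le_add hrecA hrecB
          _ = (nu (Gres G A) + nu (Gres G Aᶜ)) * (d + 1) := by ring
          _ ≤ nu G * (d + 1) := Nat.mul_le_mul_right _ hnusum

end StarMatchAux

namespace StarMatchAux

open Finset

variable {V : Type*} [Fintype V] [DecidableEq V]

lemma edge_endpoints {G : SimpleGraph V} {e : Sym2 V} (he : e ∈ G.edgeSet) :
    ∃ p : V × V, s(p.1, p.2) = e ∧ G.Adj p.1 p.2 := by
  induction e with
  | _ a b => exact ⟨(a, b), rfl, by rwa [SimpleGraph.mem_edgeSet] at he⟩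

/-- A vertex of degree at least k gives a copy of the k-star. -/
lemma star_copy_of_degree {G : SimpleGraph V} [DecidableRel G.Adj] {v : V} {k : ℕ}
    (hv : k ≤ G.degree v) : ContainsCopy (starGraph k) G := by
  rw [← SimpleGraph.card_neighborFinset_eq_degree] at hv
  obtain ⟨s, hs, hcard⟩ := Finset.exists_subset_card_eq hv
  set g : Fin k → {x // x ∈ s} := fun i => (s.equivFinOfCardEq hcard).symm i with hg
  have hmem : ∀ i, (g i : V) ∈ G.neighborFinset v := fun i => hs (g i).2
  have hadj : ∀ i, G.Adj v (g i : V) := fun i => (SimpleGraph.mem_neighborFinset _ _ _).mp (hmem i)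
  refine ⟨Sum.elim (fun _ => v) (fun i => (g i : V)), ?_, ?_⟩
  · rintro (a | i) (b | j) hab
    · simp [Subsingleton.elim a b]
    · simp only [Sum.elim_inl, Sum.elim_inr] at hab
      have := hadj j
      rw [← hab] at this
      exact absurd this G.irrefl
    · simp only [Sum.elim_inl, Sum.elim_inr] at hab
      have := hadj i
      rw [hab] at this
      exact absurd this G.irrefl
    · simp only [Sum.elim_inr] at hab
      have : g i = g j := Subtype.ext hab
      rw [(s.equivFinOfCardEq hcard).symm.injective this]
  · rintro (a | i) (b | j) hab <;>
      simp only [starGraph, completeBipartiteGraph_adj, Sum.isLeft_inl, Sum.isRight_inr,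
        Sum.isRight_inl, Sum.isLeft_inr] at hab
    · simp at hab
    · exact hadj j
    · exact (hadj i).symm
    · simp at hab

/-- A matching of size at least k gives a copy of the k-matching. -/
lemma matching_copy {G : SimpleGraph V} {M : Finset (Sym2 V)} (hM : IsMatchingSet G M)
    {k : ℕ} (hk : k ≤ M.card) : ContainsCopy (kMatching k) G := by
  classical
  obtain ⟨T, hT, hTcard⟩ := Finset.exists_subset_card_eq hk
  have hTM : IsMatchingSet G T := matching_subset hM hT
  set g : Fin k → {x // x ∈ T} := fun i => (T.equivFinOfCardEq hTcard).symm i with hg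
  have hend : ∀ i : Fin k, ∃ p : V × V, s(p.1, p.2) = (g i : Sym2 V) ∧ G.Adj p.1 p.2 :=
    fun i => edge_endpoints (hTM.1 _ (g i).2)
  choose pf hp1 hp2 using hend
  have hidx : ∀ i : Fin (2 * k), (i : ℕ) / 2 < k := fun i => by
    have := i.2; omega
  set f : Fin (2 * k) → V := fun i =>
    if (i : ℕ) % 2 = 0 then (pf ⟨(i : ℕ) / 2, hidx i⟩).1 else (pf ⟨(i : ℕ) / 2, hidx i⟩).2
    with hf
  have hfmem : ∀ i : Fin (2 * k), f i ∈ (g ⟨(i : ℕ) / 2, hidx i⟩ : Sym2 V) := by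
    intro i
    rw [hf]
    dsimp only
    split
    · rw [← hp1 ⟨(i : ℕ) / 2, hidx i⟩]
      exact Sym2.mem_mk_left _ _
    · rw [← hp1 ⟨(i : ℕ) / 2, hidx i⟩]
      exact Sym2.mem_mk_right _ _
  refine ⟨f, ?_, ?_⟩
  · intro a b hab
    by_contra hne
    have hvne : (a : ℕ) ≠ (b : ℕ) := fun h => hne (Fin.ext h)
    by_cases hdiv : (a : ℕ) / 2 = (b : ℕ) / 2
    · -- same edge, opposite parity
      have hja : (⟨(a : ℕ) / 2, hidx a⟩ : Fin k) = ⟨(b : ℕ) / 2, hidx b⟩ := Fin.ext hdiv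
      have hmod : ((a : ℕ) % 2 = 0 ∧ (b : ℕ) % 2 = 1) ∨ ((a : ℕ) % 2 = 1 ∧ (b : ℕ) % 2 = 0) := by
        omega
      have hadj := hp2 ⟨(a : ℕ) / 2, hidx a⟩
      rw [hf] at hab
      dsimp only at hab
      rcases hmod with ⟨h1, h2⟩ | ⟨h1, h2⟩
      · rw [if_pos h1, if_neg (by omega)] at hab
        rw [← hja] at hab
        exact hadj.ne hab
      · rw [if_neg (by omega), if_pos h2] at hab
        rw [← hja] at hab
        exact hadj.ne' hab
    · -- different edges, disjointness
      have hja : (⟨(a : ℕ) / 2, hidx a⟩ : Fin k) ≠ ⟨(b : ℕ) / 2, hidx b⟩ :=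
        fun h => hdiv (congrArg Fin.val h)
      have hgne : (g ⟨(a : ℕ) / 2, hidx a⟩ : Sym2 V) ≠ (g ⟨(b : ℕ) / 2, hidx b⟩ : Sym2 V) := by
        intro h
        exact hja ((T.equivFinOfCardEq hTcard).symm.injective (Subtype.ext h))
      have h1 := hfmem a
      have h2 := hfmem b
      rw [hab] at h1
      exact hTM.2 _ (g ⟨(a : ℕ) / 2, hidx a⟩).2 _ (g ⟨(b : ℕ) / 2, hidx b⟩).2 hgne (f b) h1 h2
  · intro a b hab
    rw [kMatching, SimpleGraph.fromRel_adj] at hab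
    obtain ⟨hne, hdiv⟩ := hab
    have hdiv : (a : ℕ) / 2 = (b : ℕ) / 2 := by tauto
    have hvne : (a : ℕ) ≠ (b : ℕ) := fun h => hne (Fin.ext h)
    have hja : (⟨(a : ℕ) / 2, hidx a⟩ : Fin k) = ⟨(b : ℕ) / 2, hidx b⟩ := Fin.ext hdiv
    have hadj := hp2 ⟨(a : ℕ) / 2, hidx a⟩
    have hmod : ((a : ℕ) % 2 = 0 ∧ (b : ℕ) % 2 = 1) ∨ ((a : ℕ) % 2 = 1 ∧ (b : ℕ) % 2 = 0) := by
      omega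
    rw [hf]
    dsimp only
    rcases hmod with ⟨h1, h2⟩ | ⟨h1, h2⟩
    · rw [if_pos h1, if_neg (by omega), hja]
      exact hja ▸ hadj
    · rw [if_neg (by omega), if_pos h2, hja]
      exact (hja ▸ hadj).symm

end StarMatchAux

namespace StarMatchAux

open Finset

variable {V : Type*} [Fintype V] [DecidableEq V]

lemma h3copy {G : SimpleGraph V} [DecidableRel G.Adj] {v x y : V} {k : ℕ}
    (hdegv : G.degree v = k - 1) (hadj : G.Adj x y)
    (hxv : x ≠ v) (hxn : x ∉ G.neighborFinset v)
    (hyv : y ≠ v) (hyn : y ∉ G.neighborFinset v) :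
    ContainsCopy (disjUnionGraph (starGraph (k - 1)) (kMatching 1)) G := by
  have hcardn : (G.neighborFinset v).card = k - 1 := by
    rw [SimpleGraph.card_neighborFinset_eq_degree]; exact hdegv
  set g : Fin (k - 1) → {z // z ∈ G.neighborFinset v} :=
    fun i => ((G.neighborFinset v).equivFinOfCardEq hcardn).symm i with hg
  have hadjn : ∀ i, G.Adj v (g i : V) :=
    fun i => (SimpleGraph.mem_neighborFinset _ _ _).mp (g i).2
  set f : (Fin 1 ⊕ Fin (k - 1)) ⊕ Fin (2 * 1) → V :=
    Sum.elim (Sum.elim (fun _ => v) (fun i => (g i : V)))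
      (fun j => if (j : ℕ) = 0 then x else y) with hf
  have hval : ∀ j : Fin (2 * 1), f (Sum.inr j) = x ∨ f (Sum.inr j) = y := by
    intro j
    rw [hf]
    dsimp only [Sum.elim_inr]
    split
    · exact Or.inl rfl
    · exact Or.inr rfl
  refine ⟨f, ?_, ?_⟩
  · rintro ((a | i) | j) ((b | i') | j') hab <;>
      simp only [hf, Sum.elim_inl, Sum.elim_inr] at hab
    · rw [Subsingleton.elim a b]
    · exfalso
      have := hadjn i'
      rw [← hab] at this
      exact absurd this G.irrefl
    · exfalso
      split at hab
      · exact hxv hab.symm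
      · exact hyv hab.symm
    · exfalso
      have := hadjn i
      rw [hab] at this
      exact absurd this G.irrefl
    · have : g i = g i' := Subtype.ext hab
      have := ((G.neighborFinset v).equivFinOfCardEq hcardn).symm.injective this
      rw [this]
    · exfalso
      split at hab
      · exact hxn (hab ▸ (g i).2)
      · exact hyn (hab ▸ (g i).2)
    · exfalso
      split at hab
      · exact hxv hab
      · exact hyv hab
    · exfalso
      split at hab
      · exact hxn (hab.symm ▸ (g i').2)
      · exact hyn (hab.symm ▸ (g i').2)
    · have hj : j = j' := by
        split at hab <;> split at hab
        · have : (j : ℕ) = 0 := by assumption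
          have h' : (j' : ℕ) = 0 := by assumption
          exact Fin.ext (by omega)
        · exact absurd hab hadj.ne
        · exact absurd hab.symm hadj.ne
        · have hj2 := j.2
          have hj'2 := j'.2
          have : (j : ℕ) ≠ 0 := by assumption
          have h' : (j' : ℕ) ≠ 0 := by assumption
          exact Fin.ext (by omega)
      rw [hj]
  · rintro ((a | i) | j) ((b | i') | j') hadj' <;>
      rw [disjUnionGraph, SimpleGraph.fromRel_adj] at hadj' <;>
      obtain ⟨hne, hrel⟩ := hadj'
    · exfalso
      rcases hrel with h | h <;>
        simp only [starGraph, completeBipartiteGraph_adj] at h <;> simp at h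
    · simp only [hf, Sum.elim_inl, Sum.elim_inr]
      exact hadjn i'
    · exact absurd hrel (by simp)
    · simp only [hf, Sum.elim_inl, Sum.elim_inr]
      exact (hadjn i).symm
    · exfalso
      rcases hrel with h | h <;>
        simp only [starGraph, completeBipartiteGraph_adj] at h <;> simp at h
    · exact absurd hrel (by simp)
    · exact absurd hrel (by simp)
    · exact absurd hrel (by simp)
    · -- both in the K₂ part
      have hjj : j ≠ j' := fun h => hne (by rw [h])
      have hj2 := j.2
      have hj'2 := j'.2
      have hcases : ((j : ℕ) = 0 ∧ (j' : ℕ) = 1) ∨ ((j : ℕ) = 1 ∧ (j' : ℕ) = 0) := by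
        have : (j : ℕ) ≠ (j' : ℕ) := fun h => hjj (Fin.ext h)
        omega
      simp only [hf, Sum.elim_inr]
      rcases hcases with ⟨h1, h2⟩ | ⟨h1, h2⟩
      · rw [if_pos h1, if_neg (by omega)]
        exact hadj
      · rw [if_neg (by omega), if_pos h2]
        exact hadj.symm

end StarMatchAux

theorem star_matching_free_bound {V : Type*} [Fintype V] [DecidableEq V] (G : SimpleGraph V)
    [DecidableRel G.Adj] (k : ℕ) (hk : 2 ≤ k)
    (hiso : ∀ v : V, 0 < G.degree v)
    (h1 : ¬ ContainsCopy (starGraph k) G)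
    (h2 : ¬ ContainsCopy (kMatching k) G)
    (h3 : ¬ ContainsCopy (disjUnionGraph (starGraph (k - 1)) (kMatching 1)) G) :
    G.edgeFinset.card ≤ (k - 1) ^ 2 := by
  classical
  have hdeg : ∀ v, G.degree v ≤ k - 1 := by
    intro v
    by_contra h
    exact h1 (StarMatchAux.star_copy_of_degree (by omega : k ≤ G.degree v))
  have hnu : StarMatchAux.nu G ≤ k - 1 := by
    by_contra h
    obtain ⟨M, hM, hMc⟩ := StarMatchAux.exists_nu G
    exact h2 (StarMatchAux.matching_copy hM (by omega))
  by_cases hbig : ∃ v, G.degree v = k - 1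
  · obtain ⟨v, hv⟩ := hbig
    have hmeet : ∀ e ∈ G.edgeFinset, v ∈ e ∨ ∃ u ∈ G.neighborFinset v, u ∈ e := by
      intro e he
      by_contra hcon
      push_neg at hcon
      obtain ⟨hve, hnb⟩ := hcon
      obtain ⟨⟨x, y⟩, hxy, hadj⟩ := StarMatchAux.edge_endpoints (SimpleGraph.mem_edgeFinset.mp he)
      have hxe : x ∈ e := hxy ▸ Sym2.mem_mk_left x y
      have hye : y ∈ e := hxy ▸ Sym2.mem_mk_right x y
      refine h3 (StarMatchAux.h3copy hv hadj ?_ ?_ ?_ ?_)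
      · rintro rfl; exact hve hxe
      · exact fun hm => hnb x hm hxe
      · rintro rfl; exact hve hye
      · exact fun hm => hnb y hm hye
    have hsub : G.edgeFinset ⊆ G.incidenceFinset v ∪
        (G.neighborFinset v).biUnion (fun u => (G.incidenceFinset u).erase s(u, v)) := by
      intro e he
      by_cases hv' : v ∈ e
      · exact Finset.mem_union_left _
          ((G.mem_incidenceFinset v _).mpr ⟨SimpleGraph.mem_edgeFinset.mp he, hv'⟩)
      · rcases hmeet e he with h | ⟨u, hu, hue⟩
        · exact absurd h hv'
        · refine Finset.mem_union_right _ (Finset.mem_biUnion.mpr ⟨u, hu,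
            Finset.mem_erase.mpr ⟨?_,
              (G.mem_incidenceFinset u _).mpr ⟨SimpleGraph.mem_edgeFinset.mp he, hue⟩⟩⟩)
          intro heq
          rw [heq] at hv'
          exact hv' (Sym2.mem_mk_right u v)
    have herase : ∀ u ∈ G.neighborFinset v, ((G.incidenceFinset u).erase s(u, v)).card ≤ k - 2 := by
      intro u hu
      have hadjvu : G.Adj v u := (SimpleGraph.mem_neighborFinset _ _ _).mp hu
      have hmem : s(u, v) ∈ G.incidenceFinset u := by
        refine (G.mem_incidenceFinset u _).mpr ⟨?_, Sym2.mem_mk_left u v⟩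
        exact (SimpleGraph.mem_edgeSet G).mpr hadjvu.symm
      rw [Finset.card_erase_of_mem hmem, SimpleGraph.card_incidenceFinset_eq_degree]
      have := hdeg u
      omega
    have hbicard : ((G.neighborFinset v).biUnion
        (fun u => (G.incidenceFinset u).erase s(u, v))).card ≤ (k - 1) * (k - 2) := by
      refine le_trans Finset.card_biUnion_le (le_trans
        (Finset.sum_le_card_nsmul _ _ (k - 2) herase) ?_)
      rw [SimpleGraph.card_neighborFinset_eq_degree, hv, smul_eq_mul]
    have hinccard : (G.incidenceFinset v).card = k - 1 := by
      rw [SimpleGraph.card_incidenceFinset_eq_degree, hv]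
    have hchain : G.edgeFinset.card ≤ (k - 1) + (k - 1) * (k - 2) := by
      calc G.edgeFinset.card ≤ _ := Finset.card_le_card hsub
        _ ≤ (G.incidenceFinset v).card + ((G.neighborFinset v).biUnion
            (fun u => (G.incidenceFinset u).erase s(u, v))).card := Finset.card_union_le _ _
        _ ≤ (k - 1) + (k - 1) * (k - 2) := by rw [hinccard]; omega
    obtain ⟨j, rfl⟩ : ∃ j, k = j + 2 := ⟨k - 2, by omega⟩
    have h2' : j + 2 - 1 = j + 1 := by omega
    have h3' : j + 2 - 2 = j := by omega
    rw [h2', h3'] at hchain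
    rw [h2']
    have : (j + 1) + (j + 1) * j = (j + 1) ^ 2 := by ring
    omega
  · push_neg at hbig
    have hdeg2 : ∀ v, G.degree v ≤ k - 2 := by
      intro v
      have ha := hdeg v
      have hb := hbig v
      omega
    have hB := StarMatchAux.lemB (k - 2) G.edgeFinset.card G inferInstance le_rfl hdeg2
    have hk1 : k - 2 + 1 = k - 1 := by omega
    rw [hk1] at hB
    calc G.edgeFinset.card ≤ StarMatchAux.nu G * (k - 1) := hB
      _ ≤ (k - 1) * (k - 1) := Nat.mul_le_mul_right _ hnu
      _ = (k - 1) ^ 2 := (sq (k - 1)).symm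
end

section
/- Let Δ and b be nonnegative integers with b ≤ Δ − 2, and let G be a finite simple graph with maximum degree at most Δ. Then Σ_{v ∈ V(G)} min{d(v), b} ≤ ν(G)·(b + Δ), where ν(G) is the maximum matching size. -/
set_option linter.unusedSectionVars false
set_option maxHeartbeats 1600000

namespace EFGG

open Finset
open scoped Classical

variable {V : Type*} [Fintype V] [DecidableEq V]

def Mtch (G : SimpleGraph V) (s : Finset V) (M : Finset (Sym2 V)) : Prop :=
  IsMatchingSet G M ∧ ∀ e ∈ M, ∀ v ∈ e, v ∈ s

noncomputable def matched {V : Type*} [Fintype V] (M : Finset (Sym2 V)) : Finset V :=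
  univ.filter (fun v => ∃ e ∈ M, v ∈ e)

def Gr (G : SimpleGraph V) (s : Finset V) : SimpleGraph V where
  Adj a b := G.Adj a b ∧ a ∈ s ∧ b ∈ s
  symm := ⟨by rintro a b ⟨h, h1, h2⟩; exact ⟨h.symm, h2, h1⟩⟩
  loopless := ⟨by rintro a ⟨h, -, -⟩; exact G.irrefl h⟩

variable {G : SimpleGraph V}

lemma mem_matched_iff {M : Finset (Sym2 V)} {v : V} :
    v ∈ matched M ↔ ∃ e ∈ M, v ∈ e := by
  simp [matched]

lemma matched_subset {s : Finset V} {M : Finset (Sym2 V)} (h : Mtch G s M) :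
    matched M ⊆ s := by
  intro v hv
  rw [mem_matched_iff] at hv
  obtain ⟨e, heM, hve⟩ := hv
  exact h.2 e heM v hve

lemma edge_exists {s : Finset V} {M : Finset (Sym2 V)} (h : Mtch G s M) {e : Sym2 V}
    (he : e ∈ M) : ∃ a b : V, a ≠ b ∧ e = s(a, b) ∧ G.Adj a b ∧ a ∈ s ∧ b ∈ s := by
  induction e with
  | _ a b =>
    have hadj : G.Adj a b := (G.mem_edgeSet).1 (h.1.1 _ he)
    exact ⟨a, b, hadj.ne, rfl, hadj, h.2 _ he a (by simp), h.2 _ he b (by simp)⟩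

/-- partner uniqueness -/
lemma partner_unique {s : Finset V} {M : Finset (Sym2 V)} (h : Mtch G s M) {v a b : V}
    (ha : s(v, a) ∈ M) (hb : s(v, b) ∈ M) : a = b := by
  by_cases heq : (s(v, a) : Sym2 V) = s(v, b)
  · rcases Sym2.eq_iff.1 heq with ⟨-, h2⟩ | ⟨h1, h2⟩
    · exact h2
    · exact h2.trans h1
  · exact absurd (h.1.2 _ ha _ hb heq v (by simp)) (by simp)

lemma mem_matched_of_edge {M : Finset (Sym2 V)} {v w : V} (h : s(v, w) ∈ M) :
    v ∈ matched M :=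
  mem_matched_iff.2 ⟨_, h, by simp⟩

lemma not_matched_no_edge {M : Finset (Sym2 V)} {v : V} (h : v ∉ matched M) (w : V) :
    s(v, w) ∉ M := fun hc => h (mem_matched_of_edge hc)

lemma card_matched {s : Finset V} {M : Finset (Sym2 V)} (h : Mtch G s M) :
    (matched M).card = 2 * M.card := by
  have : matched M = M.biUnion (fun e => univ.filter (· ∈ e)) := by
    ext v; simp [mem_matched_iff]
  rw [this, card_biUnion]
  · rw [Finset.sum_congr rfl (fun e he => ?_), Finset.sum_const, smul_eq_mul, mul_comm]
    obtain ⟨a, b, hab, rfl, -⟩ := edge_exists h he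
    have : univ.filter (· ∈ (s(a, b) : Sym2 V)) = {a, b} := by
      ext x; simp [Sym2.mem_iff]
    rw [this, card_insert_of_notMem (by simp [hab]), card_singleton]
  · intro e he f hf hef
    rw [Function.onFun, disjoint_left]
    intro v hv hv'
    simp only [mem_filter] at hv hv'
    exact h.1.2 e he f hf hef v hv.2 hv'.2


lemma Mtch_erase {s : Finset V} {M : Finset (Sym2 V)} (h : Mtch G s M) (e : Sym2 V) :
    Mtch G s (M.erase e) :=
  ⟨⟨fun f hf => h.1.1 f (mem_of_mem_erase hf),
    fun f hf g hg => h.1.2 f (mem_of_mem_erase hf) g (mem_of_mem_erase hg)⟩,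
    fun f hf => h.2 f (mem_of_mem_erase hf)⟩

lemma Mtch_insert {s : Finset V} {M : Finset (Sym2 V)} (h : Mtch G s M) {a b : V}
    (hadj : G.Adj a b) (has : a ∈ s) (hbs : b ∈ s)
    (hma : a ∉ matched M) (hmb : b ∉ matched M) :
    Mtch G s (insert (s(a, b)) M) := by
  constructor
  · constructor
    · intro f hf
      rcases mem_insert.1 hf with rfl | hf
      · exact G.mem_edgeSet.2 hadj
      · exact h.1.1 f hf
    · intro f hf g hg hfg v hvf hvg
      rcases mem_insert.1 hf with rfl | hf
      · rcases mem_insert.1 hg with rfl | hg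
        · exact hfg rfl
        · rcases Sym2.mem_iff.1 hvf with h1 | h1
          · exact hma (mem_matched_iff.2 ⟨g, hg, h1 ▸ hvg⟩)
          · exact hmb (mem_matched_iff.2 ⟨g, hg, h1 ▸ hvg⟩)
      · rcases mem_insert.1 hg with rfl | hg
        · rcases Sym2.mem_iff.1 hvg with h1 | h1
          · exact hma (mem_matched_iff.2 ⟨f, hf, h1 ▸ hvf⟩)
          · exact hmb (mem_matched_iff.2 ⟨f, hf, h1 ▸ hvf⟩)
        · exact h.1.2 f hf g hg hfg v hvf hvg
  · intro f hf v hvf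
    rcases mem_insert.1 hf with rfl | hf
    · rcases Sym2.mem_iff.1 hvf with rfl | rfl <;> assumption
    · exact h.2 f hf v hvf

lemma matched_insert {M : Finset (Sym2 V)} {a b : V} :
    matched (insert (s(a, b)) M) = insert a (insert b (matched M)) := by
  ext v
  simp only [mem_matched_iff, mem_insert]
  constructor
  · rintro ⟨e, rfl | he, hv⟩
    · rcases Sym2.mem_iff.1 hv with rfl | rfl
      · exact Or.inl rfl
      · exact Or.inr (Or.inl rfl)
    · exact Or.inr (Or.inr ⟨e, he, hv⟩)
  · rintro (rfl | rfl | ⟨e, he, hv⟩)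
    · exact ⟨_, Or.inl rfl, by simp⟩
    · exact ⟨_, Or.inl rfl, by simp⟩
    · exact ⟨e, Or.inr he, hv⟩

lemma matched_erase {s : Finset V} {M : Finset (Sym2 V)} (h : Mtch G s M) {c d : V}
    (hf : s(c, d) ∈ M) (hcd : c ≠ d) :
    matched (M.erase (s(c, d))) = (matched M) \ {c, d} := by
  ext v
  simp only [mem_matched_iff, mem_sdiff, mem_insert, mem_singleton]
  constructor
  · rintro ⟨e, he, hv⟩
    refine ⟨⟨e, mem_of_mem_erase he, hv⟩, ?_⟩
    rintro (rfl | rfl)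
    · -- v = c belongs to e ≠ s(c,d): contradiction with disjointness
      exact h.1.2 _ (mem_of_mem_erase he) _ hf (ne_of_mem_erase he) v hv (by simp)
    · exact h.1.2 _ (mem_of_mem_erase he) _ hf (ne_of_mem_erase he) v hv (by simp)
  · rintro ⟨⟨e, he, hv⟩, hne⟩
    refine ⟨e, mem_erase.2 ⟨?_, he⟩, hv⟩
    rintro rfl
    rcases Sym2.mem_iff.1 hv with rfl | rfl
    · exact hne (Or.inl rfl)
    · exact hne (Or.inr rfl)


lemma matched_mono {M' M : Finset (Sym2 V)} (h : M' ⊆ M) : matched M' ⊆ matched M := by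
  intro v hv
  rw [mem_matched_iff] at hv ⊢
  obtain ⟨e, he, hve⟩ := hv
  exact ⟨e, h he, hve⟩

lemma exists_partner {s : Finset V} {M : Finset (Sym2 V)} (h : Mtch G s M) {u : V}
    (hu : u ∈ matched M) : ∃ w, s(u, w) ∈ M ∧ G.Adj u w ∧ u ∈ s ∧ w ∈ s := by
  obtain ⟨e, heM, hue⟩ := mem_matched_iff.1 hu
  induction e with
  | _ a b =>
    have hadj : G.Adj a b := (G.mem_edgeSet).1 (h.1.1 _ heM)
    have has : a ∈ s := h.2 _ heM a (by simp)
    have hbs : b ∈ s := h.2 _ heM b (by simp)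
    rcases Sym2.mem_iff.1 hue with rfl | rfl
    · exact ⟨b, heM, hadj, has, hbs⟩
    · exact ⟨a, Sym2.eq_swap ▸ heM, hadj.symm, hbs, has⟩

theorem swap {s : Finset V} :
  ∀ (n : ℕ) (M N : Finset (Sym2 V)) (u : V), Mtch G s M → Mtch G s N → (N \ M).card ≤ n →
  u ∉ matched M → u ∈ matched N →
  (∃ P, Mtch G s P ∧ P.card = M.card + 1) ∨
  (∃ y M' N', y ≠ u ∧ y ∈ matched M ∧ y ∉ matched N ∧
    Mtch G s M' ∧ M'.card = M.card ∧ matched M' = insert u (matched M) \ {y} ∧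
    Mtch G s N' ∧ N'.card = N.card ∧ matched N' = insert y (matched N) \ {u} ∧
    (∃ x, s(y, x) ∈ M ∧ s(y, x) ∈ N') ∧
    (N' \ M).card < (N \ M).card) := by
  intro n
  induction n with
  | zero =>
    intro M N u hM hN hcard hup hun
    exfalso
    obtain ⟨u1, he, hadj1, hus, hu1s⟩ := exists_partner hN hun
    have heM : s(u, u1) ∉ M := not_matched_no_edge hup u1
    have : s(u, u1) ∈ N \ M := mem_sdiff.2 ⟨he, heM⟩
    have := card_pos.2 ⟨_, this⟩
    omega
  | succ n ih =>
    intro M N u hM hN hcard hup hun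
    obtain ⟨u1, he, hadj1, hus, hu1s⟩ := exists_partner hN hun
    have hu1u : u1 ≠ u := hadj1.ne'
    have heM : s(u, u1) ∉ M := not_matched_no_edge hup u1
    by_cases hu1M : u1 ∈ matched M
    · -- continue the walk
      obtain ⟨u2, hf, hadj2, -, hu2s⟩ := exists_partner hM hu1M
      have hu2u : u2 ≠ u := by
        rintro rfl
        exact hup (mem_matched_of_edge (Sym2.eq_swap ▸ hf))
      have hu2u1 : u2 ≠ u1 := hadj2.ne'
      have hfN : s(u1, u2) ∉ N := by
        intro hc
        exact hu2u (partner_unique hN hc (Sym2.eq_swap ▸ he))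
      have hfe : (s(u1, u2) : Sym2 V) ≠ s(u, u1) := by
        intro hc
        rcases Sym2.eq_iff.1 hc with ⟨h1, -⟩ | ⟨-, h2⟩
        · exact hu1u h1
        · exact hu2u h2
      have hMpos : 1 ≤ M.card := card_pos.2 ⟨_, hf⟩
      have hNpos : 1 ≤ N.card := card_pos.2 ⟨_, he⟩
      -- M₁ = M - f + e
      set M1 : Finset (Sym2 V) := insert (s(u, u1)) (M.erase (s(u1, u2))) with hM1def
      have hmE : matched (M.erase (s(u1, u2))) = matched M \ {u1, u2} :=
        matched_erase hM hf hadj2.ne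
      have hM1 : Mtch G s M1 := by
        refine Mtch_insert (Mtch_erase hM _) hadj1 hus hu1s ?_ ?_
        · rw [hmE]; simp only [mem_sdiff]; tauto
        · rw [hmE]; simp
      have hM1card : M1.card = M.card := by
        rw [hM1def, card_insert_of_notMem (fun hc => heM (mem_of_mem_erase hc)),
          card_erase_of_mem hf]
        omega
      have hmM1 : matched M1 = insert u (matched M) \ {u2} := by
        rw [hM1def, matched_insert, hmE]
        ext v
        simp only [mem_insert, mem_sdiff, mem_singleton]
        constructor
        · rintro (rfl | rfl | ⟨hv, hne⟩)
          · exact ⟨Or.inl rfl, hu2u.symm⟩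
          · exact ⟨Or.inr hu1M, hu2u1.symm⟩
          · simp only [mem_insert, mem_singleton, not_or] at hne
            exact ⟨Or.inr hv, hne.2⟩
        · rintro ⟨rfl | hv, hne⟩
          · exact Or.inl rfl
          · by_cases hvu1 : v = u1
            · exact Or.inr (Or.inl hvu1)
            · exact Or.inr (Or.inr ⟨hv, by simp [hvu1, hne]⟩)
      -- Ñ = N - e
      set N1 : Finset (Sym2 V) := N.erase (s(u, u1)) with hN1def
      have hN1 : Mtch G s N1 := Mtch_erase hN _
      have hmN1 : matched N1 = matched N \ {u, u1} := matched_erase hN he hadj1.ne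
      have hu1N : u1 ∈ matched N := mem_matched_of_edge (Sym2.eq_swap ▸ he)
      by_cases hu2N : u2 ∈ matched N
      · -- recurse
        have hu2M1 : u2 ∉ matched M1 := by rw [hmM1]; simp
        have hu2N1 : u2 ∈ matched N1 := by
          rw [hmN1]; simp only [mem_sdiff, mem_insert, mem_singleton]
          exact ⟨hu2N, by tauto⟩
        have hEq : N1 \ M1 = (N \ M).erase (s(u, u1)) := by
          ext z
          simp only [hN1def, hM1def, mem_sdiff, mem_erase, mem_insert, not_or]
          constructor
          · rintro ⟨⟨hze, hzN⟩, hze2, hzM1⟩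
            refine ⟨hze, hzN, fun hzM => hzM1 ⟨?_, hzM⟩⟩
            rintro rfl; exact hfN hzN
          · rintro ⟨hze, hzN, hzM⟩
            exact ⟨⟨hze, hzN⟩, hze, fun hc => hzM hc.2⟩
        have hmeasure : (N1 \ M1).card ≤ n := by
          have := card_erase_of_mem (mem_sdiff.2 ⟨he, heM⟩ : s(u, u1) ∈ N \ M)
          have hpos := card_pos.2 ⟨_, (mem_sdiff.2 ⟨he, heM⟩ : s(u, u1) ∈ N \ M)⟩
          rw [hEq, this]
          omega
        rcases ih M1 N1 u2 hM1 hN1 hmeasure hu2M1 hu2N1 with ⟨P, hP, hPcard⟩ | hB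
        · left; exact ⟨P, hP, by rw [hPcard, hM1card]⟩
        obtain ⟨y', M'', N'', hy'u2, hy'M1, hy'N1, hM'', hM''card, hmM'', hN'', hN''card,
          hmN'', ⟨x, hx1, hx2⟩, hlt''⟩ := hB
        right
        have hu2mM : u2 ∈ matched M := mem_matched_of_edge (Sym2.eq_swap ▸ hf)
        have hy'u : y' ≠ u := by
          rintro rfl
          have hform : (s(y', x) : Sym2 V) = s(y', u1) := by
            rcases mem_insert.1 hx1 with h1 | h1
            · exact h1
            · exact absurd (mem_of_mem_erase h1) (not_matched_no_edge hup x)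
          have hxu1 : x = u1 := by
            rcases Sym2.eq_iff.1 hform with ⟨-, h2⟩ | ⟨h1', -⟩
            · exact h2
            · exact absurd h1'.symm hu1u
          rw [hxu1] at hx2
          have hu1mN'' : u1 ∈ matched N'' := mem_matched_of_edge (Sym2.eq_swap ▸ hx2)
          rw [hmN''] at hu1mN''
          obtain ⟨h1, -⟩ := mem_sdiff.1 hu1mN''
          rcases mem_insert.1 h1 with h | h
          · exact hu1u h
          · rw [hmN1] at h
            obtain ⟨-, h2⟩ := mem_sdiff.1 h
            simp at h2
        have hy'u1 : y' ≠ u1 := by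
          rintro rfl
          rcases mem_insert.1 hx1 with h1 | h1
          · have hxu : x = u := by
              rcases Sym2.eq_iff.1 h1 with ⟨h1', -⟩ | ⟨-, h2'⟩
              · exact absurd h1' hu1u
              · exact h2'
            rw [hxu] at hx2
            have huN'' : u ∈ matched N'' := mem_matched_of_edge (Sym2.eq_swap ▸ hx2)
            rw [hmN''] at huN''
            obtain ⟨h1', -⟩ := mem_sdiff.1 huN''
            rcases mem_insert.1 h1' with h | h
            · exact hu1u h.symm
            · rw [hmN1] at h
              obtain ⟨-, h2⟩ := mem_sdiff.1 h
              simp at h2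
          · have hxu2 : x = u2 := partner_unique hM (mem_of_mem_erase h1) hf
            rw [hxu2] at h1
            exact (ne_of_mem_erase h1) rfl
        have hy'mM : y' ∈ matched M := by
          rw [hmM1] at hy'M1
          obtain ⟨h1, -⟩ := mem_sdiff.1 hy'M1
          rcases mem_insert.1 h1 with h | h
          · exact absurd h hy'u
          · exact h
        have hy'mN : y' ∉ matched N := by
          intro hc
          apply hy'N1
          rw [hmN1]
          refine mem_sdiff.2 ⟨hc, ?_⟩
          simp only [mem_insert, mem_singleton, not_or]
          exact ⟨hy'u, hy'u1⟩
        have hmM'fin : matched M'' = insert u (matched M) \ {y'} := by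
          rw [hmM'', hmM1]
          ext v
          simp only [mem_insert, mem_sdiff, mem_singleton]
          constructor
          · rintro ⟨rfl | ⟨hv, -⟩, hney⟩
            · exact ⟨Or.inr hu2mM, hney⟩
            · exact ⟨hv, hney⟩
          · rintro ⟨hv, hney⟩
            by_cases hvu2 : v = u2
            · exact ⟨Or.inl hvu2, hney⟩
            · exact ⟨Or.inr ⟨hv, hvu2⟩, hney⟩
        have hu1N'' : u1 ∉ matched N'' := by
          intro hc
          rw [hmN''] at hc
          obtain ⟨h1, -⟩ := mem_sdiff.1 hc
          rcases mem_insert.1 h1 with h | h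
          · exact hy'u1 h.symm
          · rw [hmN1] at h
            obtain ⟨-, h2⟩ := mem_sdiff.1 h
            simp at h2
        have hu2N'' : u2 ∉ matched N'' := by
          intro hc
          rw [hmN''] at hc
          obtain ⟨-, h2⟩ := mem_sdiff.1 hc
          simp at h2
        have hfN'' : s(u1, u2) ∉ N'' := not_matched_no_edge hu1N'' u2
        have hN' : Mtch G s (insert (s(u1, u2)) N'') := Mtch_insert hN'' hadj2 hu1s hu2s hu1N'' hu2N''
        have hN'card : (insert (s(u1, u2)) N'').card = N.card := by
          rw [card_insert_of_notMem hfN'', hN''card, hN1def, card_erase_of_mem he]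
          omega
        have hmN' : matched (insert (s(u1, u2)) N'') = insert y' (matched N) \ {u} := by
          rw [matched_insert, hmN'', hmN1]
          ext v
          simp only [mem_insert, mem_sdiff, mem_singleton]
          constructor
          · rintro (rfl | rfl | ⟨h1, hne2⟩)
            · exact ⟨Or.inr hu1N, hu1u⟩
            · exact ⟨Or.inr hu2N, hu2u⟩
            · rcases h1 with rfl | ⟨hv, hvne⟩
              · exact ⟨Or.inl rfl, hy'u⟩
              · simp only [mem_insert, mem_singleton, not_or] at hvne
                exact ⟨Or.inr hv, hvne.1⟩
          · rintro ⟨rfl | hv, hneu⟩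
            · exact Or.inr (Or.inr ⟨Or.inl rfl, hy'u2⟩)
            · by_cases hvu1 : v = u1
              · exact Or.inl hvu1
              · by_cases hvu2 : v = u2
                · exact Or.inr (Or.inl hvu2)
                · refine Or.inr (Or.inr ⟨Or.inr ⟨hv, ?_⟩, hvu2⟩)
                  simp only [mem_insert, mem_singleton, not_or]
                  exact ⟨hneu, hvu1⟩
        have hxM : s(y', x) ∈ M := by
          rcases mem_insert.1 hx1 with h1 | h1
          · exfalso
            have hy'mem : y' ∈ (s(u, u1) : Sym2 V) := h1 ▸ (by simp : y' ∈ (s(y', x) : Sym2 V))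
            rcases Sym2.mem_iff.1 hy'mem with h | h
            · exact hy'u h
            · exact hy'u1 h
          · exact mem_of_mem_erase h1
        have hEq2 : (insert (s(u1, u2)) N'') \ M = N'' \ M1 := by
          ext z
          constructor
          · intro hz
            obtain ⟨hz1, hz2⟩ := mem_sdiff.1 hz
            rcases mem_insert.1 hz1 with rfl | hz1
            · exact absurd hf hz2
            · refine mem_sdiff.2 ⟨hz1, fun hc => ?_⟩
              rcases mem_insert.1 hc with h | h
              · exact hu1N'' (mem_matched_of_edge (Sym2.eq_swap ▸ (h ▸ hz1)))
              · exact hz2 (mem_of_mem_erase h)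
          · intro hz
            obtain ⟨hz1, hz2⟩ := mem_sdiff.1 hz
            refine mem_sdiff.2 ⟨mem_insert_of_mem hz1, fun hzM => ?_⟩
            by_cases hzf : z = s(u1, u2)
            · exact hfN'' (hzf ▸ hz1)
            · exact hz2 (mem_insert_of_mem (mem_erase.2 ⟨hzf, hzM⟩))
        have hltfin : ((insert (s(u1, u2)) N'') \ M).card < (N \ M).card := by
          rw [hEq2]
          have h1 : (N1 \ M1).card < (N \ M).card := by
            rw [hEq]
            exact card_erase_lt_of_mem (mem_sdiff.2 ⟨he, heM⟩)
          omega
        exact ⟨y', M'', insert (s(u1, u2)) N'', hy'u, hy'mM, hy'mN, hM'',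
          hM''card.trans hM1card, hmM'fin, hN', hN'card, hmN', ⟨x, hxM, mem_insert_of_mem hx2⟩,
          hltfin⟩
      · -- direct outcome B with y = u2
        right
        have hu2mM : u2 ∈ matched M := mem_matched_of_edge (Sym2.eq_swap ▸ hf)
        have hu2N1 : u2 ∉ matched N1 := fun hc => hu2N (matched_mono (erase_subset _ _) hc)
        have hu1N1 : u1 ∉ matched N1 := by rw [hmN1]; simp
        have hfN1 : s(u1, u2) ∉ N1 := fun hc => hfN (mem_of_mem_erase hc)
        have hN' : Mtch G s (insert (s(u1, u2)) N1) := Mtch_insert hN1 hadj2 hu1s hu2s hu1N1 hu2N1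
        have hN'card : (insert (s(u1, u2)) N1).card = N.card := by
          rw [card_insert_of_notMem hfN1, hN1def, card_erase_of_mem he]; omega
        have hmN' : matched (insert (s(u1, u2)) N1) = insert u2 (matched N) \ {u} := by
          rw [matched_insert, hmN1]
          ext v
          simp only [mem_insert, mem_sdiff, mem_singleton]
          constructor
          · rintro (rfl | rfl | ⟨hv, hne⟩)
            · exact ⟨Or.inr hu1N, hu1u⟩
            · exact ⟨Or.inl rfl, hu2u⟩
            · simp only [mem_insert, mem_singleton, not_or] at hne
              exact ⟨Or.inr hv, hne.1⟩
          · rintro ⟨rfl | hv, hne⟩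
            · exact Or.inr (Or.inl rfl)
            · by_cases hvu1 : v = u1
              · exact Or.inl hvu1
              · exact Or.inr (Or.inr ⟨hv, by simp [hvu1, hne]⟩)
        have hlt : ((insert (s(u1, u2)) N1) \ M).card < (N \ M).card := by
          have hEq : (insert (s(u1, u2)) N1) \ M = (N \ M).erase (s(u, u1)) := by
            ext z
            constructor
            · intro hz
              obtain ⟨hz1, hz2⟩ := mem_sdiff.1 hz
              rcases mem_insert.1 hz1 with rfl | hz1
              · exact absurd hf hz2
              · exact mem_erase.2 ⟨ne_of_mem_erase hz1, mem_sdiff.2 ⟨mem_of_mem_erase hz1, hz2⟩⟩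
            · intro hz
              obtain ⟨hze, hz1⟩ := mem_erase.1 hz
              obtain ⟨hzN, hzM⟩ := mem_sdiff.1 hz1
              exact mem_sdiff.2 ⟨mem_insert_of_mem (mem_erase.2 ⟨hze, hzN⟩), hzM⟩
          rw [hEq]
          exact card_erase_lt_of_mem (mem_sdiff.2 ⟨he, heM⟩)
        exact ⟨u2, M1, insert (s(u1, u2)) N1, hu2u, hu2mM, hu2N,
          hM1, hM1card, hmM1, hN', hN'card, hmN',
          ⟨u1, Sym2.eq_swap ▸ hf, by rw [Sym2.eq_swap]; exact mem_insert_self _ _⟩, hlt⟩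
    · -- outcome A
      left
      refine ⟨insert (s(u, u1)) M, Mtch_insert hM hadj1 hus hu1s hup hu1M, ?_⟩
      rw [card_insert_of_notMem heM]


section withdec
variable [DecidableRel G.Adj]

/-- the finset of matchings inside s -/
noncomputable def MFin (G : SimpleGraph V) [DecidableRel G.Adj] (s : Finset V) :
    Finset (Finset (Sym2 V)) :=
  (G.edgeFinset.powerset).filter (fun M => Mtch G s M)

noncomputable def nu (G : SimpleGraph V) [DecidableRel G.Adj] (s : Finset V) : ℕ :=
  (MFin G s).sup Finset.card

variable [DecidableRel G.Adj]

lemma mem_MFin {s : Finset V} {M : Finset (Sym2 V)} : M ∈ MFin G s ↔ Mtch G s M := by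
  constructor
  · intro h; exact (mem_filter.1 h).2
  · intro h
    refine mem_filter.2 ⟨mem_powerset.2 (fun e he => ?_), h⟩
    exact SimpleGraph.mem_edgeFinset.2 (h.1.1 e he)

lemma Mtch_empty (s : Finset V) : Mtch G s (∅ : Finset (Sym2 V)) := by
  refine ⟨⟨fun e he => absurd he (notMem_empty e), fun e he => absurd he (notMem_empty e)⟩,
    fun e he => absurd he (notMem_empty e)⟩

lemma le_nu {s : Finset V} {M : Finset (Sym2 V)} (h : Mtch G s M) : M.card ≤ nu G s :=
  le_sup (mem_MFin.2 h)

lemma exists_nu (s : Finset V) : ∃ M, Mtch G s M ∧ M.card = nu G s := by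
  obtain ⟨M, hM, hMc⟩ := Finset.exists_mem_eq_sup (MFin G s) ⟨∅, mem_MFin.2 (Mtch_empty s)⟩
    Finset.card
  exact ⟨M, mem_MFin.1 hM, hMc.symm⟩

lemma Mtch_mono {s t : Finset V} (hst : s ⊆ t) {M : Finset (Sym2 V)} (h : Mtch G s M) :
    Mtch G t M :=
  ⟨h.1, fun e he v hv => hst (h.2 e he v hv)⟩

lemma nu_mono {s t : Finset V} (hst : s ⊆ t) : nu G s ≤ nu G t := by
  obtain ⟨M, hM, hMc⟩ := exists_nu (G := G) s
  rw [← hMc]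
  exact le_nu (Mtch_mono hst hM)

theorem gallai {s : Finset V}
    (hconn : ∀ a ∈ s, ∀ c ∈ s, (Gr G s).Reachable a c)
    (hin : ∀ v ∈ s, nu G (s.erase v) = nu G s) :
    s.card ≤ 2 * nu G s + 1 := by
  by_contra hbig
  push_neg at hbig
  have hP : ∃ k : ℕ, ∃ M u w, Mtch G s M ∧ M.card = nu G s ∧ u ∈ s ∧ w ∈ s ∧
      u ∉ matched M ∧ w ∉ matched M ∧ u ≠ w ∧ (Gr G s).dist u w = k := by
    obtain ⟨M, hM, hMc⟩ := exists_nu (G := G) s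
    have hsub := matched_subset hM
    have hcard : 2 ≤ (s \ matched M).card := by
      rw [card_sdiff_of_subset hsub, card_matched hM, hMc]
      omega
    obtain ⟨u, hu, w, hw, huw⟩ := Finset.one_lt_card.1
      (show 1 < (s \ matched M).card by omega)
    exact ⟨_, M, u, w, hM, hMc, (mem_sdiff.1 hu).1, (mem_sdiff.1 hw).1,
      (mem_sdiff.1 hu).2, (mem_sdiff.1 hw).2, huw, rfl⟩
  classical
  obtain ⟨M, u, w, hM, hMc, hus, hws, hum, hwm, huw, hdist⟩ := Nat.find_spec hP
  set k := Nat.find hP with hk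
  have hmin : ∀ k' < k, ¬ ∃ M u w, Mtch G s M ∧ M.card = nu G s ∧ u ∈ s ∧ w ∈ s ∧
      u ∉ matched M ∧ w ∉ matched M ∧ u ≠ w ∧ (Gr G s).dist u w = k' :=
    fun k' hk' => Nat.find_min hP hk'
  have hnadj : ¬ (Gr G s).Adj u w := by
    intro hadj
    have hM' := Mtch_insert hM hadj.1 hus hws hum hwm
    have := le_nu hM'
    rw [card_insert_of_notMem (not_matched_no_edge hum w), hMc] at this
    omega
  -- get a geodesic walk
  obtain ⟨p, hp⟩ := ((hconn u hus w hws)).exists_walk_length_eq_dist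
  rw [hdist] at hp
  cases p with
  | nil => exact huw rfl
  | cons hadj q =>
    rename_i z
    have hzs : z ∈ s := hadj.2.2
    have hzu : z ≠ u := hadj.1.ne'
    have hzw : z ≠ w := by rintro rfl; exact hnadj hadj
    simp only [SimpleGraph.Walk.length_cons] at hp
    have hdzw : (Gr G s).dist z w < k := by
      have := SimpleGraph.dist_le q
      omega
    have hzM : z ∈ matched M := by
      by_contra hzm
      exact hmin _ hdzw ⟨M, z, w, hM, hMc, hzs, hws, hzm, hwm, hzw, rfl⟩
    -- a maximum matching avoiding z
    have hNex : ∃ N, Mtch G s N ∧ N.card = nu G s ∧ z ∉ matched N := by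
      obtain ⟨N, hN, hNc⟩ := exists_nu (G := G) (s.erase z)
      refine ⟨N, Mtch_mono (erase_subset z s) hN, ?_, fun hc => ?_⟩
      · rw [hNc, hin z hzs]
      · exact (notMem_erase z s) (matched_subset hN hc)
    -- choose N minimizing (N \ M).card
    have hBne : ((MFin G s).filter (fun N => N.card = nu G s ∧ z ∉ matched N)).Nonempty := by
      obtain ⟨N, h1, h2, h3⟩ := hNex
      exact ⟨N, mem_filter.2 ⟨mem_MFin.2 h1, h2, h3⟩⟩
    obtain ⟨N, hNmem, hNmin⟩ := Finset.exists_min_image _ (fun N => (N \ M).card) hBne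
    obtain ⟨hNM, hNc, hzN⟩ := mem_filter.1 hNmem
    have hN : Mtch G s N := mem_MFin.1 hNM
    have huN : u ∈ matched N := by
      by_contra hun
      have hN' := Mtch_insert hN hadj.1 hus hzs hun hzN
      have := le_nu hN'
      rw [card_insert_of_notMem (not_matched_no_edge hun z), hNc] at this
      omega
    have hwN : w ∈ matched N := by
      by_contra hwn
      exact hmin _ hdzw ⟨N, z, w, hN, hNc, hzs, hws, hzN, hwn, hzw, rfl⟩
    rcases swap ((N \ M).card) M N u hM hN le_rfl hum huN with ⟨P, hP', hPc⟩ |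
      ⟨y, M', N', hyu, hymM, hymN, hM', hM'c, hmM', hN', hN'c, hmN', -, hlt⟩
    · have := le_nu hP'
      omega
    · by_cases hyz : y = z
      · refine hmin _ hdzw ⟨M', z, w, hM', by omega, hzs, hws, ?_, ?_, hzw, rfl⟩
        · exact fun hc => (mem_sdiff.1 (hmM' ▸ hc)).2 (mem_singleton.2 hyz.symm)
        · intro hc
          rw [hmM'] at hc
          obtain ⟨h1, -⟩ := mem_sdiff.1 hc
          rcases mem_insert.1 h1 with h' | h'
          · exact huw h'.symm
          · exact hwm h'
      · have hN'B : N' ∈ (MFin G s).filter (fun N => N.card = nu G s ∧ z ∉ matched N) := by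
          refine mem_filter.2 ⟨mem_MFin.2 hN', by omega, fun hc => ?_⟩
          rw [hmN'] at hc
          obtain ⟨h1, -⟩ := mem_sdiff.1 hc
          rcases mem_insert.1 h1 with h' | h'
          · exact hyz h'.symm
          · exact hzN h'
        have := hNmin N' hN'B
        omega

/-- degree within s -/
def degS (G : SimpleGraph V) [DecidableRel G.Adj] (s : Finset V) (v : V) : ℕ :=
  (G.neighborFinset v ∩ s).card

theorem main (b Δ : ℕ) (hb : b + 2 ≤ Δ) (hd : ∀ v : V, G.degree v ≤ Δ) :
    ∀ s : Finset V, ∑ v ∈ s, min (degS G s v) b ≤ nu G s * (b + Δ) := by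
  intro s
  induction s using Finset.strongInduction with
  | _ s ih =>
  by_cases hcase : ∃ v ∈ s, nu G (s.erase v) + 1 ≤ nu G s
  · obtain ⟨v, hv, hnu⟩ := hcase
    have hstep : ∀ w ∈ s.erase v,
        min (degS G s w) b ≤ min (degS G (s.erase v) w) b + (if G.Adj v w then 1 else 0) := by
      intro w hw
      by_cases hadj : G.Adj v w
      · have hdler : degS G s w ≤ degS G (s.erase v) w + 1 := by
          have hsub : G.neighborFinset w ∩ s ⊆ insert v (G.neighborFinset w ∩ s.erase v) := by
            intro x hx
            obtain ⟨hx1, hx2⟩ := mem_inter.1 hx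
            by_cases hxv : x = v
            · rw [hxv]; exact mem_insert_self _ _
            · exact mem_insert_of_mem (mem_inter.2 ⟨hx1, mem_erase.2 ⟨hxv, hx2⟩⟩)
          calc (G.neighborFinset w ∩ s).card ≤ (insert v (G.neighborFinset w ∩ s.erase v)).card :=
                card_le_card hsub
            _ ≤ (G.neighborFinset w ∩ s.erase v).card + 1 := card_insert_le _ _
        rw [if_pos hadj]
        omega
      · have hdler : degS G s w ≤ degS G (s.erase v) w := by
          apply card_le_card
          intro x hx
          obtain ⟨hx1, hx2⟩ := mem_inter.1 hx
          have hxv : x ≠ v := by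
            rintro rfl
            exact hadj ((G.mem_neighborFinset w _).1 hx1).symm
          exact mem_inter.2 ⟨hx1, mem_erase.2 ⟨hxv, hx2⟩⟩
        rw [if_neg hadj]
        omega
    have hsum : ∑ v ∈ s, min (degS G s v) b ≤
        (∑ w ∈ s.erase v, min (degS G (s.erase v) w) b) + Δ + b := by
      rw [← Finset.sum_erase_add s _ hv]
      have h1 : ∑ w ∈ s.erase v, min (degS G s w) b ≤
          ∑ w ∈ s.erase v, (min (degS G (s.erase v) w) b + (if G.Adj v w then 1 else 0)) :=
        Finset.sum_le_sum hstep
      rw [Finset.sum_add_distrib] at h1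
      have h2 : ∑ w ∈ s.erase v, (if G.Adj v w then 1 else 0) ≤ Δ := by
        have he : ∑ w ∈ s.erase v, (if G.Adj v w then 1 else 0) =
            ((s.erase v).filter (G.Adj v)).card := by
          simp [Finset.sum_boole]
        have hsub : (s.erase v).filter (G.Adj v) ⊆ G.neighborFinset v := by
          intro x hx
          exact (G.mem_neighborFinset v x).2 (mem_filter.1 hx).2
        calc ∑ w ∈ s.erase v, (if G.Adj v w then 1 else 0)
            = ((s.erase v).filter (G.Adj v)).card := he
          _ ≤ (G.neighborFinset v).card := card_le_card hsub
          _ ≤ Δ := hd v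
      have h3 : min (degS G s v) b ≤ b := min_le_right _ _
      omega
    have hIH := ih (s.erase v) (Finset.erase_ssubset hv)
    calc ∑ v ∈ s, min (degS G s v) b ≤
        (∑ w ∈ s.erase v, min (degS G (s.erase v) w) b) + Δ + b := hsum
      _ ≤ nu G (s.erase v) * (b + Δ) + Δ + b := by omega
      _ ≤ nu G s * (b + Δ) := by
          have h4 : (nu G (s.erase v) + 1) * (b + Δ) ≤ nu G s * (b + Δ) :=
            Nat.mul_le_mul_right _ hnu
          rw [add_mul, one_mul] at h4
          omega
  · push_neg at hcase
    have hin : ∀ v ∈ s, nu G (s.erase v) = nu G s := by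
      intro v hv
      have h1 := nu_mono (G := G) (erase_subset v s)
      have h2 := hcase v hv
      omega
    rcases s.eq_empty_or_nonempty with rfl | ⟨a, ha⟩
    · simp
    by_cases hts : s.filter (fun w => (Gr G s).Reachable a w) = s
    · -- connected case
      have hconn : ∀ x ∈ s, ∀ y ∈ s, (Gr G s).Reachable x y := by
        intro x hx y hy
        have hax : (Gr G s).Reachable a x := (mem_filter.1 (hts.symm ▸ hx)).2
        have hay : (Gr G s).Reachable a y := (mem_filter.1 (hts.symm ▸ hy)).2
        exact hax.symm.trans hay
      have hg := gallai hconn hin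
      have hterm : ∀ v ∈ s, min (degS G s v) b ≤ min (s.card - 1) b := by
        intro v hv
        have : degS G s v ≤ s.card - 1 := by
          have hsub : G.neighborFinset v ∩ s ⊆ s.erase v := by
            intro x hx
            obtain ⟨hx1, hx2⟩ := mem_inter.1 hx
            refine mem_erase.2 ⟨?_, hx2⟩
            rintro rfl
            exact G.irrefl ((G.mem_neighborFinset _ _).1 hx1)
          calc (G.neighborFinset v ∩ s).card ≤ (s.erase v).card := card_le_card hsub
            _ = s.card - 1 := card_erase_of_mem hv
        omega
      have hsum : ∑ v ∈ s, min (degS G s v) b ≤ s.card * min (s.card - 1) b := by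
        calc ∑ v ∈ s, min (degS G s v) b ≤ ∑ _v ∈ s, min (s.card - 1) b :=
              Finset.sum_le_sum hterm
          _ = s.card * min (s.card - 1) b := by rw [Finset.sum_const, smul_eq_mul]
      refine hsum.trans ?_
      have hn1 : 1 ≤ s.card := card_pos.2 ⟨a, ha⟩
      rcases le_total b (s.card - 1) with hble | hble
      · rw [min_eq_right hble]
        have hb2m : b ≤ 2 * nu G s := by omega
        calc s.card * b ≤ (2 * nu G s + 1) * b := Nat.mul_le_mul_right b hg
          _ = 2 * nu G s * b + b := by ring
          _ ≤ 2 * nu G s * b + 2 * nu G s := by omega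
          _ = nu G s * (2 * b + 2) := by ring
          _ ≤ nu G s * (b + Δ) := Nat.mul_le_mul_left _ (by omega)
      · rw [min_eq_left hble]
        calc s.card * (s.card - 1) ≤ s.card * (2 * nu G s) :=
              Nat.mul_le_mul_left _ (by omega)
          _ = nu G s * (2 * s.card) := by ring
          _ ≤ nu G s * (b + Δ) := Nat.mul_le_mul_left _ (by omega)
    · -- disconnected case
      set t := s.filter (fun w => (Gr G s).Reachable a w) with htdef
      have htsub : t ⊆ s := filter_subset _ _
      have hat : a ∈ t := mem_filter.2 ⟨ha, SimpleGraph.Reachable.refl a⟩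
      have htss : t ⊂ s := Finset.ssubset_iff_subset_ne.2 ⟨htsub, hts⟩
      have hrss : s \ t ⊂ s := by
        refine Finset.ssubset_iff_subset_ne.2 ⟨sdiff_subset, fun hc => ?_⟩
        have : a ∈ s \ t := hc.symm ▸ ha
        exact (mem_sdiff.1 this).2 hat
      have hsep : ∀ x ∈ t, ∀ y ∈ s \ t, ¬ G.Adj x y := by
        intro x hx y hy hadj
        obtain ⟨hys, hyt⟩ := mem_sdiff.1 hy
        apply hyt
        refine mem_filter.2 ⟨hys, ?_⟩
        exact ((mem_filter.1 hx).2).trans (SimpleGraph.Adj.reachable ⟨hadj, htsub hx, hys⟩)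
      have hdegt : ∀ v ∈ t, degS G s v = degS G t v := by
        intro v hv
        unfold degS
        congr 1
        ext x
        simp only [mem_inter]
        constructor
        · rintro ⟨hx1, hx2⟩
          refine ⟨hx1, ?_⟩
          by_contra hxt
          exact hsep v hv x (mem_sdiff.2 ⟨hx2, hxt⟩) ((G.mem_neighborFinset v x).1 hx1)
        · rintro ⟨hx1, hx2⟩
          exact ⟨hx1, htsub hx2⟩
      have hdegr : ∀ v ∈ s \ t, degS G s v = degS G (s \ t) v := by
        intro v hv
        unfold degS
        congr 1
        ext x
        simp only [mem_inter]
        constructor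
        · rintro ⟨hx1, hx2⟩
          refine ⟨hx1, mem_sdiff.2 ⟨hx2, fun hxt => ?_⟩⟩
          exact hsep x hxt v hv (((G.mem_neighborFinset v x).1 hx1).symm)
        · rintro ⟨hx1, hx2⟩
          exact ⟨hx1, (mem_sdiff.1 hx2).1⟩
      obtain ⟨M1, hM1, hM1c⟩ := exists_nu (G := G) t
      obtain ⟨M2, hM2, hM2c⟩ := exists_nu (G := G) (s \ t)
      have hMU : Mtch G s (M1 ∪ M2) := by
        refine ⟨⟨?_, ?_⟩, ?_⟩
        · intro e he
          rcases mem_union.1 he with h | h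
          · exact hM1.1.1 e h
          · exact hM2.1.1 e h
        · intro e he f hf hef v hve hvf
          rcases mem_union.1 he with h1 | h1 <;> rcases mem_union.1 hf with h2 | h2
          · exact hM1.1.2 e h1 f h2 hef v hve hvf
          · have hvt : v ∈ t := hM1.2 e h1 v hve
            have hvr : v ∈ s \ t := hM2.2 f h2 v hvf
            exact (mem_sdiff.1 hvr).2 hvt
          · have hvt : v ∈ t := hM1.2 f h2 v hvf
            have hvr : v ∈ s \ t := hM2.2 e h1 v hve
            exact (mem_sdiff.1 hvr).2 hvt
          · exact hM2.1.2 e h1 f h2 hef v hve hvf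
        · intro e he v hv
          rcases mem_union.1 he with h | h
          · exact htsub (hM1.2 e h v hv)
          · exact (mem_sdiff.1 (hM2.2 e h v hv)).1
      have hdisjM : Disjoint M1 M2 := by
        rw [disjoint_left]
        intro e he1 he2
        obtain ⟨x, y, hxy, rfl, hadj, hxs, hys⟩ := edge_exists hM1 he1
        have hx2 : x ∈ s \ t := hM2.2 _ he2 x (by simp)
        exact (mem_sdiff.1 hx2).2 hxs
      have hnuadd : nu G t + nu G (s \ t) ≤ nu G s := by
        rw [← hM1c, ← hM2c, ← card_union_of_disjoint hdisjM]
        exact le_nu hMU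
      have hsplit : ∑ v ∈ s, min (degS G s v) b =
          (∑ v ∈ s \ t, min (degS G (s \ t) v) b) + ∑ v ∈ t, min (degS G t v) b := by
        rw [← Finset.sum_sdiff htsub]
        congr 1
        · exact Finset.sum_congr rfl (fun v hv => by rw [hdegr v hv])
        · exact Finset.sum_congr rfl (fun v hv => by rw [hdegt v hv])
      rw [hsplit]
      have iht := ih t htss
      have ihr := ih (s \ t) hrss
      calc (∑ v ∈ s \ t, min (degS G (s \ t) v) b) + ∑ v ∈ t, min (degS G t v) b
          ≤ nu G (s \ t) * (b + Δ) + nu G t * (b + Δ) := by omega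
        _ = (nu G t + nu G (s \ t)) * (b + Δ) := by ring
        _ ≤ nu G s * (b + Δ) := Nat.mul_le_mul_right _ hnuadd

end withdec
end EFGG

theorem sum_min_degree_le {V : Type*} [Fintype V] [DecidableEq V] (G : SimpleGraph V)
    [DecidableRel G.Adj] (b Δ : ℕ) (hb : b + 2 ≤ Δ)
    (hd : ∀ v : V, G.degree v ≤ Δ) :
    ∃ M : Finset (Sym2 V), IsMatchingSet G M ∧
      ∑ v : V, min (G.degree v) b ≤ M.card * (b + Δ) := by
  obtain ⟨M, hM, hMc⟩ := EFGG.exists_nu (G := G) (Finset.univ : Finset V)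
  refine ⟨M, hM.1, ?_⟩
  have h := EFGG.main b Δ hb hd (Finset.univ : Finset V)
  calc ∑ v : V, min (G.degree v) b
      = ∑ v ∈ Finset.univ, min (EFGG.degS G Finset.univ v) b := by
        refine Finset.sum_congr rfl (fun v _ => ?_)
        unfold EFGG.degS
        rw [Finset.inter_univ]
        rfl
    _ ≤ EFGG.nu G Finset.univ * (b + Δ) := h
    _ = M.card * (b + Δ) := by rw [hMc]
end

section
/- Let T be a finite tree with bipartition (A, B) such that every vertex of A has degree at least 2. Then T has a matching saturating A; in particular ν(T) = |A|. -/
open SimpleGraph Finset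

lemma tree_edge_injection {V : Type*} (G : SimpleGraph V) (hT : G.IsTree) :
    ∃ F : Sym2 V → V, (∀ e ∈ G.edgeSet, F e ∈ e) ∧ Set.InjOn F G.edgeSet := by
  classical
  obtain ⟨r⟩ := hT.isConnected.nonempty
  choose f hf hf' using (hT.existsUnique_path · r)
  have aux : ∀ x y (hxy : G.Adj x y), (f x).length ≤ (f y).length →
      ∃ hn : ¬ (f y).Nil, s(x, y) = ((f y).firstDart hn).edge := by
    intro x y hxy hlen
    have hynotx : y ∉ (f x).support := by
      intro hy
      have ht : (f x).takeUntil y hy = SimpleGraph.Walk.cons hxy SimpleGraph.Walk.nil := by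
        refine (hT.existsUnique_path x y).unique ((hf x).takeUntil hy) ?_
        exact SimpleGraph.Walk.IsPath.nil.cons (by simp [hxy.ne])
      have hdrop : (f x).dropUntil y hy = f y := hf' _ _ ((hf x).dropUntil hy)
      have hlen2 : (f x).length = 1 + ((f x).dropUntil y hy).length := by
        conv_lhs => rw [← (f x).take_spec hy]
        rw [SimpleGraph.Walk.length_append, ht]
        simp
      rw [hdrop] at hlen2
      omega
    have hq : (SimpleGraph.Walk.cons hxy.symm (f x)).IsPath := (hf x).cons hynotx
    have hfy : f y = SimpleGraph.Walk.cons hxy.symm (f x) := (hf' _ _ hq).symm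
    have hn : ¬ (f y).Nil := by rw [hfy]; exact SimpleGraph.Walk.not_nil_cons
    refine ⟨hn, ?_⟩
    rw [SimpleGraph.Walk.edge_firstDart]
    have : (f y).getVert 1 = x := by
      rw [hfy, SimpleGraph.Walk.getVert_cons_succ, SimpleGraph.Walk.getVert_zero]
    rw [show (f y).snd = x from this, Sym2.eq_swap]
  have key : ∀ e ∈ G.edgeSet, ∃ w, w ∈ e ∧ ∃ hn : ¬ (f w).Nil,
      e = ((f w).firstDart hn).edge := by
    intro e he
    induction e with
    | _ x y =>
      rw [SimpleGraph.mem_edgeSet] at he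
      rcases le_total (f x).length (f y).length with h | h
      · obtain ⟨hn, hE⟩ := aux x y he h
        exact ⟨y, by simp, hn, hE⟩
      · obtain ⟨hn, hE⟩ := aux y x he.symm h
        exact ⟨x, by simp, hn, by rw [Sym2.eq_swap]; exact hE⟩
  refine ⟨fun e => if h : ∃ w, w ∈ e ∧ ∃ hn : ¬ (f w).Nil, e = ((f w).firstDart hn).edge
      then h.choose else r, ?_, ?_⟩
  · intro e he
    simp only [dif_pos (key e he)]
    exact (key e he).choose_spec.1
  · intro e1 h1 e2 h2 heq
    have k1 := key e1 h1
    have k2 := key e2 h2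
    simp only [dif_pos k1, dif_pos k2] at heq
    obtain ⟨hw1, hn1, hE1⟩ := k1.choose_spec
    obtain ⟨hw2, hn2, hE2⟩ := k2.choose_spec
    have gen : ∀ w w' (h : w = w') (hn : ¬ (f w).Nil) (hn' : ¬ (f w').Nil),
        ((f w).firstDart hn).edge = ((f w').firstDart hn').edge := by
      rintro w w' rfl hn hn'; rfl
    rw [hE1, hE2]
    exact gen _ _ heq _ _

theorem tree_saturating_matching {V : Type*} [Fintype V] [DecidableEq V] (G : SimpleGraph V)
    [DecidableRel G.Adj] (A B : Finset V)
    (hT : G.IsTree)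
    (hpart : ∀ v : V, v ∈ A ↔ v ∉ B)
    (hA : ∀ u ∈ A, ∀ v ∈ A, ¬ G.Adj u v)
    (hB : ∀ u ∈ B, ∀ v ∈ B, ¬ G.Adj u v)
    (hdeg : ∀ v ∈ A, 2 ≤ G.degree v) :
    ∃ M : Finset (Sym2 V), IsMatchingSet G M ∧ (∀ a ∈ A, ∃ e ∈ M, a ∈ e) ∧
      M.card = A.card ∧
      ∀ M' : Finset (Sym2 V), IsMatchingSet G M' → M'.card ≤ A.card := by
  classical
  obtain ⟨F, hFmem, hFinj⟩ := tree_edge_injection G hT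
  have hne : Nonempty V := hT.isConnected.nonempty
  have hnotA : ∀ a ∈ A, ∀ v, G.Adj a v → v ∉ A := fun a ha v hav hv => hA a ha v hv hav
  -- Hall's condition
  have hall : ∀ s : Finset ↥A, s.card ≤ (s.biUnion (fun a => G.neighborFinset a.1)).card := by
    intro s
    set S : Finset V := s.image (fun a => a.1) with hS
    set N : Finset V := s.biUnion (fun a => G.neighborFinset a.1) with hN
    have hScard : S.card = s.card := Finset.card_image_of_injective _ Subtype.val_injective
    have hSsubA : ∀ v ∈ S, v ∈ A := by
      intro v hv
      rw [hS, Finset.mem_image] at hv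
      obtain ⟨a, _, rfl⟩ := hv
      exact a.2
    set E' : Finset (Sym2 V) := S.biUnion (fun v => G.incidenceFinset v) with hE'
    have hdisj : ∀ u ∈ S, ∀ v ∈ S, u ≠ v →
        Disjoint (G.incidenceFinset u) (G.incidenceFinset v) := by
      intro u hu v hv huv
      rw [Finset.disjoint_left]
      intro e heu hev
      rw [SimpleGraph.mem_incidenceFinset] at heu hev
      have : e = s(u, v) := (Sym2.mem_and_mem_iff huv).1 ⟨heu.2, hev.2⟩
      rw [this] at heu
      exact hA u (hSsubA u hu) v (hSsubA v hv) ((G.mem_edgeSet).1 heu.1)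
    have hcardE : E'.card = ∑ v ∈ S, G.degree v := by
      rw [hE', Finset.card_biUnion hdisj]
      exact Finset.sum_congr rfl fun v _ => G.card_incidenceFinset_eq_degree v
    have h2S : 2 * S.card ≤ E'.card := by
      rw [hcardE]
      calc 2 * S.card = ∑ _v ∈ S, 2 := by rw [Finset.sum_const, smul_eq_mul, mul_comm]
        _ ≤ ∑ v ∈ S, G.degree v := Finset.sum_le_sum fun v hv => hdeg v (hSsubA v hv)
    have hEedge : ∀ e ∈ E', e ∈ G.edgeSet := by
      intro e he
      rw [hE', Finset.mem_biUnion] at he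
      obtain ⟨v, _, hev⟩ := he
      rw [SimpleGraph.mem_incidenceFinset] at hev
      exact hev.1
    have hEsub : ∀ e ∈ E', F e ∈ S ∪ N := by
      intro e he
      have heE := hEedge e he
      rw [hE', Finset.mem_biUnion] at he
      obtain ⟨v, hv, hev⟩ := he
      rw [SimpleGraph.mem_incidenceFinset] at hev
      obtain ⟨w, rfl⟩ := Sym2.mem_iff_exists.1 hev.2
      have hadj : G.Adj v w := (SimpleGraph.mem_edgeSet G).1 hev.1
      have hwN : w ∈ N := by
        rw [hS, Finset.mem_image] at hv
        obtain ⟨a, ha, rfl⟩ := hv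
        rw [hN, Finset.mem_biUnion]
        exact ⟨a, ha, (G.mem_neighborFinset _ _).2 hadj⟩
      have := hFmem _ heE
      rw [Sym2.mem_iff] at this
      rcases this with h | h
      · rw [h]; exact Finset.mem_union_left _ (by rwa [hS, Finset.mem_image] at hv ⊢)
      · rw [h]; exact Finset.mem_union_right _ hwN
    have hEcard : E'.card ≤ (S ∪ N).card :=
      Finset.card_le_card_of_injOn F hEsub fun e1 h1 e2 h2 h =>
        hFinj (hEedge e1 h1) (hEedge e2 h2) h
    have hdisjSN : Disjoint S N := by
      rw [Finset.disjoint_left]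
      intro v hvS hvN
      rw [hN, Finset.mem_biUnion] at hvN
      obtain ⟨a, _, hv⟩ := hvN
      exact hnotA a.1 a.2 v ((G.mem_neighborFinset _ _).1 hv) (hSsubA v hvS)
    have hcardU : (S ∪ N).card = S.card + N.card := Finset.card_union_of_disjoint hdisjSN
    omega
  obtain ⟨g, hginj, hgmem⟩ :=
    (Finset.all_card_le_biUnion_card_iff_exists_injective
      (fun a : ↥A => G.neighborFinset a.1)).mp hall
  have hgadj : ∀ a : ↥A, G.Adj a.1 (g a) := fun a => (G.mem_neighborFinset _ _).1 (hgmem a)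
  have hgB : ∀ a : ↥A, g a ∉ A := fun a => hnotA a.1 a.2 _ (hgadj a)
  refine ⟨Finset.univ.image (fun a : ↥A => s(a.1, g a)), ⟨?_, ?_⟩, ?_, ?_, ?_⟩
  · intro e he
    rw [Finset.mem_image] at he
    obtain ⟨a, _, rfl⟩ := he
    exact hgadj a
  · intro e he e' he' hne' v hve hve'
    rw [Finset.mem_image] at he he'
    obtain ⟨a, _, rfl⟩ := he
    obtain ⟨b, _, rfl⟩ := he'
    have hab : a ≠ b := by rintro rfl; exact hne' rfl
    rw [Sym2.mem_iff] at hve hve'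
    rcases hve with rfl | rfl <;> rcases hve' with h | h
    · exact hab (Subtype.ext h)
    · exact hgB b (h ▸ a.2)
    · exact hgB a (h.symm ▸ b.2)
    · exact hab (hginj h)
  · intro a ha
    exact ⟨s(a, g ⟨a, ha⟩), Finset.mem_image.2 ⟨⟨a, ha⟩, Finset.mem_univ _, rfl⟩, by simp⟩
  · rw [Finset.card_image_of_injective _ ?_, Finset.card_univ, Fintype.card_coe]
    intro a b hab
    rw [Sym2.eq_iff] at hab
    rcases hab with ⟨h1, _⟩ | ⟨h1, h2⟩
    · exact Subtype.ext h1
    · exact absurd (h1 ▸ a.2) (hgB b)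
  · intro M' hM'
    have hex : ∀ e ∈ M', ∃ x ∈ A, x ∈ e := by
      intro e he
      have heE := hM'.1 e he
      induction e with
      | _ x y =>
        rw [SimpleGraph.mem_edgeSet] at heE
        by_cases hx : x ∈ A
        · exact ⟨x, hx, by simp⟩
        by_cases hy : y ∈ A
        · exact ⟨y, hy, by simp⟩
        have hxB : x ∈ B := by by_contra h; exact hx ((hpart x).2 h)
        have hyB : y ∈ B := by by_contra h; exact hy ((hpart y).2 h)
        exact absurd heE (hB x hxB y hyB)
    refine Finset.card_le_card_of_injOn
      (fun e => if h : ∃ x ∈ A, x ∈ e then h.choose else Classical.arbitrary V) ?_ ?_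
    · intro e he
      simp only [dif_pos (hex e he)]
      exact (hex e he).choose_spec.1
    · intro e1 h1 e2 h2 heq
      by_contra hne12
      have k1 := hex e1 h1
      have k2 := hex e2 h2
      simp only [dif_pos k1, dif_pos k2] at heq
      exact hM'.2 e1 h1 e2 h2 hne12 k1.choose (k1.choose_spec.2) (heq ▸ k2.choose_spec.2)
end
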